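/- arXiv:2210.11368 — 7 statements merged into one kernel-verified Lean document; each statement's English description precedes it below -/
import Mathlib

section
/- For every γ > 0 and every fixed q ∈ S_n(1), the function p ↦ W_γ(p,q) is γ-strongly convex on S_n(1) with respect to the ℓ2-norm, i.e., for all p, p' ∈ S_n(1) and t ∈ [0,1], W_γ(tp+(1−t)p', q) ≤ t·W_γ(p,q) + (1−t)·W_γ(p',q) − (γ/2)t(1−t)‖p−p'‖₂². -/
open Finset

/-- The entropy-regularized OT value `W_γ(p,q)`. -/
noncomputable def Wgamma (n : ℕ) (C : Matrix (Fin n) (Fin n) ℝ) (γ : ℝ)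
    (p q : Fin n → ℝ) : ℝ :=
  sInf ((fun π : Matrix (Fin n) (Fin n) ℝ =>
      (∑ i, ∑ j, C i j * π i j) + γ * ∑ i, ∑ j, π i j * Real.log (π i j)) ''
    {π | (∀ i j, 0 ≤ π i j) ∧ (∀ i, ∑ j, π i j = p i) ∧ (∀ j, ∑ i, π i j = q j)})


lemma convex_aux (M : ℝ) (hM : 0 < M) :
    ConvexOn ℝ (Set.Icc 0 M) (fun x => x * Real.log x - x^2/(2*M)) := by
  apply convexOn_of_hasDerivWithinAt2_nonneg (f' := fun x => Real.log x + 1 - x/M)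
    (f'' := fun x => 1/x - 1/M) (convex_Icc 0 M)
  · exact (Real.continuous_mul_log.sub (by continuity)).continuousOn
  · intro x hx
    rw [interior_Icc] at hx
    have h1 : HasDerivAt (fun x => x * Real.log x) (Real.log x + 1) x :=
      Real.hasDerivAt_mul_log (ne_of_gt hx.1)
    have h2 : HasDerivAt (fun x : ℝ => x^2/(2*M)) (x/M) x := by
      have h := (hasDerivAt_pow 2 x).div_const (2*M)
      convert h using 1
      · rfl
      · rfl
      field_simp
      ring
    exact (h1.sub h2).hasDerivWithinAt
  · intro x hx
    rw [interior_Icc] at hx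
    have h1 : HasDerivAt Real.log (1/x) x := by
      simpa [one_div] using Real.hasDerivAt_log (ne_of_gt hx.1)
    have h2 : HasDerivAt (fun x : ℝ => Real.log x + 1 - x/M) (1/x - 1/M) x := by
      exact (h1.add_const 1).sub ((hasDerivAt_id x).div_const M)
    exact h2.hasDerivWithinAt
  · intro x hx
    rw [interior_Icc] at hx
    have h : 1/M ≤ 1/x := one_div_le_one_div_of_le hx.1 hx.2.le
    linarith

lemma keyA {a b t : ℝ} (ha : 0 ≤ a) (hb : 0 ≤ b) (ht0 : 0 ≤ t) (ht1 : t ≤ 1) :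
    (t*a+(1-t)*b) * Real.log (t*a+(1-t)*b) + t*(1-t)*(a-b)^2/(2*(a+b))
      ≤ t*(a*Real.log a) + (1-t)*(b*Real.log b) := by
  rcases eq_or_lt_of_le (by linarith : (0:ℝ) ≤ a + b) with h | h
  · have ha0 : a = 0 := by linarith
    have hb0 : b = 0 := by linarith
    simp [ha0, hb0]
  · have hcv := convex_aux (a+b) h
    have hmem_a : a ∈ Set.Icc (0:ℝ) (a+b) := ⟨ha, by linarith⟩
    have hmem_b : b ∈ Set.Icc (0:ℝ) (a+b) := ⟨hb, by linarith⟩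
    have hkey := hcv.2 hmem_a hmem_b ht0 (by linarith : (0:ℝ) ≤ 1 - t) (by ring)
    simp only [smul_eq_mul] at hkey
    have hexp : t*(a^2/(2*(a+b))) + (1-t)*(b^2/(2*(a+b))) - (t*a+(1-t)*b)^2/(2*(a+b))
        = t*(1-t)*(a-b)^2/(2*(a+b)) := by
      field_simp
      ring
    linarith [hkey, hexp]


-- zero-sum vectors: 2‖v‖₂² ≤ ‖v‖₁²
lemma l1_l2 {n : ℕ} (v : Fin n → ℝ) (hv : ∑ i, v i = 0) :
    2 * ∑ i, (v i)^2 ≤ (∑ i, |v i|)^2 := by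
  set S := ∑ i, |v i| with hS
  have hhalf : ∀ i, |v i| ≤ S / 2 := by
    intro i
    have h1 : ∑ j ∈ univ.erase i, v j = - v i := by
      have := Finset.sum_erase_add univ v (mem_univ i)
      linarith [this, hv]
    have h2 : |v i| ≤ ∑ j ∈ univ.erase i, |v j| := by
      rw [← abs_neg, ← h1]
      exact Finset.abs_sum_le_sum_abs _ _
    have h3 : ∑ j ∈ univ.erase i, |v j| + |v i| = S := Finset.sum_erase_add univ _ (mem_univ i)
    linarith
  have hmain : ∑ i, (v i)^2 ≤ ∑ i, |v i| * (S/2) := by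
    apply Finset.sum_le_sum
    intro i _
    have : (v i)^2 = |v i| * |v i| := by rw [abs_mul_abs_self]; ring
    rw [this]
    exact mul_le_mul_of_nonneg_left (hhalf i) (abs_nonneg _)
  have hSnn : 0 ≤ S := Finset.sum_nonneg fun i _ => abs_nonneg _
  have : ∑ i, |v i| * (S/2) = S * (S/2) := by rw [← Finset.sum_mul]
  nlinarith [hmain]

-- Cauchy-Schwarz style: (Σ|d|)² ≤ (Σ m) * (Σ d²/m)  when d vanishes where m = 0, m ≥ 0
lemma cs_aux {ι : Type*} [Fintype ι] (d m : ι → ℝ) (hm : ∀ i, 0 ≤ m i)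
    (hd : ∀ i, m i = 0 → d i = 0) :
    (∑ i, |d i|)^2 ≤ (∑ i, m i) * ∑ i, (d i)^2 / m i := by
  have key : ∀ i, |d i| = Real.sqrt (m i) * (|d i| / Real.sqrt (m i)) := by
    intro i
    rcases eq_or_lt_of_le (hm i) with h | h
    · simp [hd i h.symm, ← h]
    · rw [mul_div_cancel₀]
      exact (Real.sqrt_pos.mpr h).ne'
  calc (∑ i, |d i|)^2 = (∑ i, Real.sqrt (m i) * (|d i| / Real.sqrt (m i)))^2 := by
        congr 1; exact Finset.sum_congr rfl fun i _ => key i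
    _ ≤ (∑ i, Real.sqrt (m i)^2) * ∑ i, (|d i| / Real.sqrt (m i))^2 :=
        Finset.sum_mul_sq_le_sq_mul_sq _ _ _
    _ = (∑ i, m i) * ∑ i, (d i)^2 / m i := by
        congr 1
        · exact Finset.sum_congr rfl fun i _ => Real.sq_sqrt (hm i)
        · refine Finset.sum_congr rfl fun i _ => ?_
          rw [div_pow, sq_abs, Real.sq_sqrt (hm i)]



lemma prod_sum {n : ℕ} (f : Fin n → Fin n → ℝ) :
    ∑ x : Fin n × Fin n, f x.1 x.2 = ∑ i, ∑ j, f i j := by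
  rw [← Finset.univ_product_univ, Finset.sum_product']

lemma entropy_gap {n : ℕ} (t : ℝ) (ht0 : 0 ≤ t) (ht1 : t ≤ 1)
    (π π' : Matrix (Fin n) (Fin n) ℝ)
    (hπ : ∀ i j, 0 ≤ π i j) (hπ' : ∀ i j, 0 ≤ π' i j)
    (htot : ∑ i, ∑ j, π i j = 1) (htot' : ∑ i, ∑ j, π' i j = 1) :
    (∑ i, ∑ j, (t * π i j + (1-t) * π' i j) * Real.log (t * π i j + (1-t) * π' i j))
      + t*(1-t)/2 * ∑ i, (∑ j, π i j - ∑ j, π' i j)^2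
      ≤ t * (∑ i, ∑ j, π i j * Real.log (π i j))
        + (1-t) * (∑ i, ∑ j, π' i j * Real.log (π' i j)) := by
  have ha : ∀ x : Fin n × Fin n, 0 ≤ π x.1 x.2 := fun x => hπ x.1 x.2
  have hb : ∀ x : Fin n × Fin n, 0 ≤ π' x.1 x.2 := fun x => hπ' x.1 x.2
  set d : Fin n × Fin n → ℝ := fun x => π x.1 x.2 - π' x.1 x.2 with hd_def
  set m : Fin n × Fin n → ℝ := fun x => π x.1 x.2 + π' x.1 x.2 with hm_def
  have hm : ∀ x, 0 ≤ m x := fun x => add_nonneg (ha x) (hb x)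
  have hd0 : ∀ x, m x = 0 → d x = 0 := by
    intro x hx
    simp only [hm_def] at hx
    have h1 := ha x; have h2 := hb x
    simp only [hd_def]
    have : π x.1 x.2 = 0 := by linarith
    have : π' x.1 x.2 = 0 := by linarith
    simp_all
  set Q : ℝ := ∑ x, (d x)^2 / m x with hQ_def
  set L : ℝ := ∑ x, |d x| with hL_def
  -- step 1: summed keyA
  have step1 : (∑ x : Fin n × Fin n,
        (t * π x.1 x.2 + (1-t) * π' x.1 x.2) * Real.log (t * π x.1 x.2 + (1-t) * π' x.1 x.2))
      + t*(1-t)/2 * Q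
      ≤ t * (∑ x : Fin n × Fin n, π x.1 x.2 * Real.log (π x.1 x.2))
        + (1-t) * (∑ x : Fin n × Fin n, π' x.1 x.2 * Real.log (π' x.1 x.2)) := by
    have h := Finset.sum_le_sum (fun x (_ : x ∈ (univ : Finset (Fin n × Fin n))) =>
      keyA (ha x) (hb x) ht0 ht1)
    rw [Finset.sum_add_distrib] at h
    have hrw : (∑ x : Fin n × Fin n, t*(1-t)*(π x.1 x.2 - π' x.1 x.2)^2/(2*(π x.1 x.2 + π' x.1 x.2)))
        = t*(1-t)/2 * Q := by
      rw [hQ_def, Finset.mul_sum]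
      refine Finset.sum_congr rfl fun x _ => ?_
      rw [mul_comm (2:ℝ) (π x.1 x.2 + π' x.1 x.2), ← div_div]
      simp only [hd_def, hm_def]
      ring
    rw [hrw] at h
    calc _ ≤ ∑ x : Fin n × Fin n,
          (t*(π x.1 x.2 * Real.log (π x.1 x.2)) + (1-t)*(π' x.1 x.2 * Real.log (π' x.1 x.2))) := h
      _ = _ := by rw [Finset.sum_add_distrib, Finset.mul_sum, Finset.mul_sum]
  -- total mass of m is 2
  have hsum_m : ∑ x, m x = 2 := by
    simp only [hm_def]
    rw [Finset.sum_add_distrib, prod_sum (fun i j => π i j), prod_sum (fun i j => π' i j),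
      htot, htot']
    norm_num
  have step2 : L^2 ≤ 2 * Q := by
    have h := cs_aux d m hm hd0
    rw [hsum_m] at h
    exact h
  -- rows
  set v : Fin n → ℝ := fun i => ∑ j, π i j - ∑ j, π' i j with hv_def
  have hv0 : ∑ i, v i = 0 := by
    simp only [hv_def]
    rw [Finset.sum_sub_distrib, htot, htot']
    ring
  have step3 : ∑ i, |v i| ≤ L := by
    rw [hL_def, prod_sum (fun i j => |d (i, j)|)]
    apply Finset.sum_le_sum
    intro i _
    calc |v i| = |∑ j, (π i j - π' i j)| := by rw [hv_def]; rw [Finset.sum_sub_distrib]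
      _ ≤ ∑ j, |π i j - π' i j| := Finset.abs_sum_le_sum_abs _ _
      _ = ∑ j, |d (i, j)| := rfl
  have step4 : 2 * ∑ i, (v i)^2 ≤ 2 * Q := by
    have h1 := l1_l2 v hv0
    have h2 : (∑ i, |v i|)^2 ≤ L^2 := by
      have hLnn : 0 ≤ ∑ i, |v i| := Finset.sum_nonneg fun i _ => abs_nonneg _
      nlinarith [step3]
    linarith
  have hQv : ∑ i, (v i)^2 ≤ Q := by linarith
  have hc : 0 ≤ t*(1-t)/2 := by nlinarith
  have step5 : t*(1-t)/2 * ∑ i, (v i)^2 ≤ t*(1-t)/2 * Q := mul_le_mul_of_nonneg_left hQv hc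
  rw [← prod_sum (fun i j => (t * π i j + (1-t) * π' i j) * Real.log (t * π i j + (1-t) * π' i j)),
    ← prod_sum (fun i j => π i j * Real.log (π i j)),
    ← prod_sum (fun i j => π' i j * Real.log (π' i j))]
  have hveq : (∑ i, (∑ j, π i j - ∑ j, π' i j)^2) = ∑ i, (v i)^2 := by
    simp only [hv_def]
  rw [hveq]
  linarith [step1, step5]



noncomputable def Fval (n : ℕ) (C : Matrix (Fin n) (Fin n) ℝ) (γ : ℝ)
    (π : Matrix (Fin n) (Fin n) ℝ) : ℝ :=
  (∑ i, ∑ j, C i j * π i j) + γ * ∑ i, ∑ j, π i j * Real.log (π i j)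

def Feas (n : ℕ) (p q : Fin n → ℝ) : Set (Matrix (Fin n) (Fin n) ℝ) :=
  {π | (∀ i j, 0 ≤ π i j) ∧ (∀ i, ∑ j, π i j = p i) ∧ (∀ j, ∑ i, π i j = q j)}

lemma Wgamma_eq (n : ℕ) (C : Matrix (Fin n) (Fin n) ℝ) (γ : ℝ) (p q : Fin n → ℝ) :
    Wgamma n C γ p q = sInf (Fval n C γ '' Feas n p q) := rfl

lemma sub_one_le_mul_log {x : ℝ} (hx : 0 ≤ x) : x - 1 ≤ x * Real.log x := by
  rcases eq_or_lt_of_le hx with h | h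
  · simp [← h]
  · have h1 := Real.log_le_sub_one_of_pos (inv_pos.mpr h)
    rw [Real.log_inv] at h1
    have h2 : x * (1 - x⁻¹) ≤ x * Real.log x := by nlinarith
    have h3 : x * (1 - x⁻¹) = x - 1 := by field_simp
    linarith

lemma Fval_lb {n : ℕ} {C : Matrix (Fin n) (Fin n) ℝ} (hC : ∀ i j, 0 ≤ C i j)
    {γ : ℝ} (hγ : 0 < γ) {π : Matrix (Fin n) (Fin n) ℝ} (hπ : ∀ i j, 0 ≤ π i j) :
    -γ * (n:ℝ)^2 ≤ Fval n C γ π := by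
  have h1 : (0:ℝ) ≤ ∑ i, ∑ j, C i j * π i j :=
    Finset.sum_nonneg fun i _ => Finset.sum_nonneg fun j _ =>
      mul_nonneg (hC i j) (hπ i j)
  have h2 : -(n:ℝ)^2 ≤ ∑ i, ∑ j, π i j * Real.log (π i j) := by
    have h3 : ∀ i : Fin n, -(n:ℝ) ≤ ∑ j, π i j * Real.log (π i j) := by
      intro i
      have := Finset.sum_le_sum (fun j (_ : j ∈ (univ : Finset (Fin n))) =>
        sub_one_le_mul_log (hπ i j))
      have hge : ∑ j, (π i j - 1) ≥ -(n:ℝ) := by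
        rw [Finset.sum_sub_distrib]
        simp only [Finset.sum_const, card_univ, Fintype.card_fin, nsmul_eq_mul, mul_one]
        have : (0:ℝ) ≤ ∑ j, π i j := Finset.sum_nonneg fun j _ => hπ i j
        linarith
      linarith
    calc -(n:ℝ)^2 = ∑ _i : Fin n, -(n:ℝ) := by
          simp only [Finset.sum_const, card_univ, Fintype.card_fin, nsmul_eq_mul]
          ring
      _ ≤ _ := Finset.sum_le_sum fun i _ => h3 i
  have h4 : γ * (-(n:ℝ)^2) ≤ γ * ∑ i, ∑ j, π i j * Real.log (π i j) :=
    mul_le_mul_of_nonneg_left h2 hγ.le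
  unfold Fval
  nlinarith
lemma Fval_bdd {n : ℕ} {C : Matrix (Fin n) (Fin n) ℝ} (hC : ∀ i j, 0 ≤ C i j)
    {γ : ℝ} (hγ : 0 < γ) (p q : Fin n → ℝ) :
    BddBelow (Fval n C γ '' Feas n p q) := by
  refine ⟨-γ * (n:ℝ)^2, ?_⟩
  rintro x ⟨π, hπ, rfl⟩
  exact Fval_lb hC hγ hπ.1

lemma Feas_nonempty {n : ℕ} {p q : Fin n → ℝ}
    (hp : (∀ i, 0 ≤ p i) ∧ ∑ i, p i = 1) (hq : (∀ i, 0 ≤ q i) ∧ ∑ i, q i = 1) :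
    (Feas n p q).Nonempty := by
  refine ⟨fun i j => p i * q j, fun i j => mul_nonneg (hp.1 i) (hq.1 j), ?_, ?_⟩
  · intro i
    rw [← Finset.mul_sum, hq.2, mul_one]
  · intro j
    rw [← Finset.sum_mul, hp.2, one_mul]

lemma Feas_combo {n : ℕ} {p p' q : Fin n → ℝ} {t : ℝ} (ht0 : 0 ≤ t) (ht1 : t ≤ 1)
    {π π' : Matrix (Fin n) (Fin n) ℝ} (hπ : π ∈ Feas n p q) (hπ' : π' ∈ Feas n p' q) :
    (fun i j => t * π i j + (1-t) * π' i j) ∈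
      Feas n (fun i => t * p i + (1-t) * p' i) q := by
  obtain ⟨h1, h2, h3⟩ := hπ
  obtain ⟨h1', h2', h3'⟩ := hπ'
  refine ⟨fun i j => add_nonneg (mul_nonneg ht0 (h1 i j))
    (mul_nonneg (by linarith) (h1' i j)), ?_, ?_⟩
  · intro i
    rw [Finset.sum_add_distrib, ← Finset.mul_sum, ← Finset.mul_sum, h2 i, h2' i]
  · intro j
    rw [Finset.sum_add_distrib, ← Finset.mul_sum, ← Finset.mul_sum, h3 j, h3' j]
    have hq := h3 j
    linarith [h3 j, h3' j]

lemma Fval_combo {n : ℕ} {C : Matrix (Fin n) (Fin n) ℝ} {γ : ℝ} (hγ : 0 < γ)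
    {p p' q : Fin n → ℝ} {t : ℝ} (ht0 : 0 ≤ t) (ht1 : t ≤ 1)
    (hp : ∑ i, p i = 1) (hp' : ∑ i, p' i = 1)
    {π π' : Matrix (Fin n) (Fin n) ℝ} (hπ : π ∈ Feas n p q) (hπ' : π' ∈ Feas n p' q) :
    Fval n C γ (fun i j => t * π i j + (1-t) * π' i j)
      ≤ t * Fval n C γ π + (1-t) * Fval n C γ π'
        - γ/2 * (t*(1-t)) * ∑ i, (p i - p' i)^2 := by
  obtain ⟨h1, h2, h3⟩ := hπ
  obtain ⟨h1', h2', h3'⟩ := hπ'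
  have htot : ∑ i, ∑ j, π i j = 1 := by
    rw [Finset.sum_congr rfl fun i _ => h2 i, hp]
  have htot' : ∑ i, ∑ j, π' i j = 1 := by
    rw [Finset.sum_congr rfl fun i _ => h2' i, hp']
  have hCpart : ∑ i, ∑ j, C i j * (t * π i j + (1-t) * π' i j)
      = t * (∑ i, ∑ j, C i j * π i j) + (1-t) * (∑ i, ∑ j, C i j * π' i j) := by
    have e1 : ∀ (A : Matrix (Fin n) (Fin n) ℝ) (s : ℝ),
        ∑ i, ∑ j, C i j * (s * A i j) = s * ∑ i, ∑ j, C i j * A i j := by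
      intro A s
      rw [Finset.mul_sum]
      refine Finset.sum_congr rfl fun i _ => ?_
      rw [Finset.mul_sum]
      exact Finset.sum_congr rfl fun j _ => by ring
    simp only [mul_add, Finset.sum_add_distrib, e1]
  have hE := entropy_gap t ht0 ht1 π π' h1 h1' htot htot'
  have hrows : (∑ i, (∑ j, π i j - ∑ j, π' i j)^2) = ∑ i, (p i - p' i)^2 := by
    refine Finset.sum_congr rfl fun i _ => ?_
    rw [h2 i, h2' i]
  rw [hrows] at hE
  have hEγ := mul_le_mul_of_nonneg_left hE hγ.le
  unfold Fval
  have hexp : γ * ((∑ i, ∑ j, (t * π i j + (1-t) * π' i j) * Real.log (t * π i j + (1-t) * π' i j))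
      + t*(1-t)/2 * ∑ i, (p i - p' i)^2)
      = γ * (∑ i, ∑ j, (t * π i j + (1-t) * π' i j) * Real.log (t * π i j + (1-t) * π' i j))
        + γ/2 * (t*(1-t)) * ∑ i, (p i - p' i)^2 := by ring
  rw [hexp] at hEγ
  have hdistr : γ * (t * (∑ i, ∑ j, π i j * Real.log (π i j))
      + (1-t) * (∑ i, ∑ j, π' i j * Real.log (π' i j)))
      = t * (γ * ∑ i, ∑ j, π i j * Real.log (π i j))
        + (1-t) * (γ * ∑ i, ∑ j, π' i j * Real.log (π' i j)) := by ring
  rw [hdistr] at hEγ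
  rw [hCpart]
  linarith


/-- for fixed `q` in the simplex, `p ↦ W_γ(p,q)` is `γ`-strongly convex
on the simplex with respect to the `ℓ₂`-norm. -/
theorem Wgamma_strongly_convex_in_p
    (n : ℕ) (hn : 2 ≤ n) (C : Matrix (Fin n) (Fin n) ℝ)
    (hC : ∀ i j, 0 ≤ C i j) (γ : ℝ) (hγ : 0 < γ)
    (q : Fin n → ℝ) (hq : (∀ i, 0 ≤ q i) ∧ ∑ i, q i = 1) :
    ∀ p p' : Fin n → ℝ,
      ((∀ i, 0 ≤ p i) ∧ ∑ i, p i = 1) → ((∀ i, 0 ≤ p' i) ∧ ∑ i, p' i = 1) →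
      ∀ t : ℝ, t ∈ Set.Icc (0 : ℝ) 1 →
        Wgamma n C γ (fun i => t * p i + (1 - t) * p' i) q
          ≤ t * Wgamma n C γ p q + (1 - t) * Wgamma n C γ p' q
            - γ / 2 * (t * (1 - t)) * (Real.sqrt (∑ i, (p i - p' i) ^ 2)) ^ 2 := by
  intro p p' hp hp' t ht
  obtain ⟨ht0, ht1⟩ := ht
  have hsq : (Real.sqrt (∑ i, (p i - p' i)^2))^2 = ∑ i, (p i - p' i)^2 :=
    Real.sq_sqrt (Finset.sum_nonneg fun i _ => sq_nonneg _)
  rw [hsq]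
  rcases eq_or_lt_of_le ht0 with h0 | h0
  · -- t = 0
    have hpt : (fun i => t * p i + (1 - t) * p' i) = p' := by
      funext i; rw [← h0]; ring
    rw [hpt, ← h0]
    norm_num
  rcases eq_or_lt_of_le ht1 with h1 | h1
  · -- t = 1
    have hpt : (fun i => t * p i + (1 - t) * p' i) = p := by
      funext i; rw [h1]; ring
    rw [hpt, h1]
    norm_num
  -- 0 < t < 1
  have h1t : 0 < 1 - t := by linarith
  set K := ∑ i, (p i - p' i)^2 with hK
  set c := γ/2 * (t*(1-t)) * K with hc
  rw [Wgamma_eq, Wgamma_eq, Wgamma_eq]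
  set S := Fval n C γ '' Feas n p q with hS
  set S' := Fval n C γ '' Feas n p' q with hS'
  set St := Fval n C γ '' Feas n (fun i => t * p i + (1 - t) * p' i) q with hSt
  have hneS : S.Nonempty := (Feas_nonempty hp hq).image _
  have hneS' : S'.Nonempty := (Feas_nonempty hp' hq).image _
  have hbdd : BddBelow St := Fval_bdd hC hγ _ _
  have key : ∀ x ∈ S, ∀ y ∈ S', sInf St + c ≤ t * x + (1-t) * y := by
    rintro x ⟨π, hπf, rfl⟩ y ⟨π', hπ'f, rfl⟩
    have hmem : Fval n C γ (fun i j => t * π i j + (1-t) * π' i j) ∈ St :=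
      ⟨_, Feas_combo ht0 ht1 hπf hπ'f, rfl⟩
    have hle := csInf_le hbdd hmem
    have hcmb := Fval_combo (C := C) hγ ht0 ht1 hp.2 hp'.2 hπf hπ'f
    rw [← hK] at hcmb
    linarith
  have hstep1 : ∀ y ∈ S', sInf St + c - (1-t) * y ≤ t * sInf S := by
    intro y hy
    have hle : (sInf St + c - (1-t)*y)/t ≤ sInf S := by
      apply le_csInf hneS
      intro x hx
      rw [div_le_iff₀ h0]
      have := key x hx y hy
      linarith
    calc sInf St + c - (1-t)*y = ((sInf St + c - (1-t)*y)/t) * t := by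
          field_simp
      _ ≤ sInf S * t := mul_le_mul_of_nonneg_right hle h0.le
      _ = t * sInf S := mul_comm _ _
  have hstep2 : sInf St + c - t * sInf S ≤ (1-t) * sInf S' := by
    have hle : (sInf St + c - t * sInf S)/(1-t) ≤ sInf S' := by
      apply le_csInf hneS'
      intro y hy
      rw [div_le_iff₀ h1t]
      have := hstep1 y hy
      linarith
    calc sInf St + c - t * sInf S = ((sInf St + c - t * sInf S)/(1-t)) * (1-t) := by
          field_simp
      _ ≤ sInf S' * (1-t) := mul_le_mul_of_nonneg_right hle h1t.le
      _ = (1-t) * sInf S' := mul_comm _ _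
  rw [hc] at hstep2
  linarith
end

section
/- For all p, q ∈ S_n(1) and every γ > 0, the entropy-regularized optimal transport value uniformly approximates the optimal transport value: 0 ≤ W(p,q) − W_γ(p,q) ≤ 2γ ln n. -/
open Finset

/-- The (non-regularized) OT value `W(p,q)`. -/
noncomputable def Wval (n : ℕ) (C : Matrix (Fin n) (Fin n) ℝ) (p q : Fin n → ℝ) : ℝ :=
  sInf ((fun π : Matrix (Fin n) (Fin n) ℝ => ∑ i, ∑ j, C i j * π i j) ''
    {π | (∀ i j, 0 ≤ π i j) ∧ (∀ i, ∑ j, π i j = p i) ∧ (∀ j, ∑ i, π i j = q j)})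

/-- Gibbs-type bound: `-a log a ≤ c - a - a log c` for `a ≥ 0`, `c > 0`. -/
lemma neg_mul_log_le_aux {a c : ℝ} (ha : 0 ≤ a) (hc : 0 < c) :
    -(a * Real.log a) ≤ c - a - a * Real.log c := by
  rcases ha.eq_or_lt with h | h
  · rw [← h]; simp [hc.le]
  · have h1 : Real.log (c / a) ≤ c / a - 1 :=
      Real.log_le_sub_one_of_pos (by positivity)
    rw [Real.log_div hc.ne' h.ne'] at h1
    have h2 : a * (Real.log c - Real.log a) ≤ a * (c / a - 1) :=
      mul_le_mul_of_nonneg_left h1 h.le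
    have h3 : a * (c / a - 1) = c - a := by field_simp
    nlinarith

/-- the entropy-regularized OT value uniformly approximates the OT value:
`0 ≤ W(p,q) − W_γ(p,q) ≤ 2γ ln n`. -/
theorem Wgamma_uniform_approximation
    (n : ℕ) (hn : 2 ≤ n) (C : Matrix (Fin n) (Fin n) ℝ)
    (hC : ∀ i j, 0 ≤ C i j) (γ : ℝ) (hγ : 0 < γ)
    (p q : Fin n → ℝ)
    (hp : (∀ i, 0 ≤ p i) ∧ ∑ i, p i = 1)
    (hq : (∀ i, 0 ≤ q i) ∧ ∑ i, q i = 1) :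
    0 ≤ Wval n C p q - Wgamma n C γ p q ∧
      Wval n C p q - Wgamma n C γ p q ≤ 2 * γ * Real.log n := by
  obtain ⟨hp0, hp1⟩ := hp
  obtain ⟨hq0, hq1⟩ := hq
  have hn0 : (0:ℝ) < (n:ℝ) := by exact_mod_cast lt_of_lt_of_le (by norm_num) hn
  set S : Set (Matrix (Fin n) (Fin n) ℝ) :=
    {π | (∀ i j, 0 ≤ π i j) ∧ (∀ i, ∑ j, π i j = p i) ∧ (∀ j, ∑ i, π i j = q j)} with hS
  set f : Matrix (Fin n) (Fin n) ℝ → ℝ := fun π => ∑ i, ∑ j, C i j * π i j with hf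
  set E : Matrix (Fin n) (Fin n) ℝ → ℝ :=
    fun π => ∑ i, ∑ j, π i j * Real.log (π i j) with hE
  -- feasible set nonempty
  have hSne : S.Nonempty := by
    refine ⟨fun i j => p i * q j, fun i j => mul_nonneg (hp0 i) (hq0 j), fun i => ?_, fun j => ?_⟩
    · rw [← Finset.mul_sum, hq1, mul_one]
    · rw [← Finset.sum_mul, hp1, one_mul]
  -- basic facts for feasible π
  have htotal : ∀ π ∈ S, ∑ i, ∑ j, π i j = 1 := by
    intro π hπ
    obtain ⟨h0, h1, h2⟩ := hπ
    simp only [h1, hp1]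
  have hfpos : ∀ π ∈ S, 0 ≤ f π := by
    intro π hπ
    exact Finset.sum_nonneg fun i _ => Finset.sum_nonneg fun j _ =>
      mul_nonneg (hC i j) (hπ.1 i j)
  have hEle : ∀ π ∈ S, E π ≤ 0 := by
    intro π hπ
    refine Finset.sum_nonpos fun i _ => Finset.sum_nonpos fun j _ => ?_
    refine Real.mul_log_nonpos (hπ.1 i j) ?_
    have h1 : π i j ≤ ∑ j', π i j' :=
      Finset.single_le_sum (fun j' _ => hπ.1 i j') (Finset.mem_univ j)
    have h2 : p i ≤ ∑ i', p i' :=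
      Finset.single_le_sum (fun i' _ => hp0 i') (Finset.mem_univ i)
    rw [hπ.2.1 i] at h1
    linarith [hp1 ▸ h2]
  have hEge : ∀ π ∈ S, -(2 * Real.log n) ≤ E π := by
    intro π hπ
    have hc : (0:ℝ) < ((n:ℝ)^2)⁻¹ := by positivity
    set c : ℝ := ((n:ℝ)^2)⁻¹ with hcdef
    have key : ∑ i, ∑ j, (-(π i j * Real.log (π i j))) ≤
        ∑ i, ∑ j, (c - π i j - π i j * Real.log c) :=
      Finset.sum_le_sum fun i _ => Finset.sum_le_sum fun j _ =>
        neg_mul_log_le_aux (hπ.1 i j) hc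
    have hsum : ∑ i, ∑ j, (c - π i j - π i j * Real.log c) =
        (n:ℝ)^2 * c - 1 - Real.log c := by
      have ht := htotal π hπ
      simp only [Finset.sum_sub_distrib, Finset.sum_const, Finset.card_univ,
        Fintype.card_fin, nsmul_eq_mul, ← Finset.sum_mul, ht]
      ring
    have hlogc : Real.log c = -(2 * Real.log n) := by
      rw [hcdef, Real.log_inv, Real.log_pow]
      push_cast; ring
    have hneg : -(E π) ≤ 2 * Real.log n := by
      rw [hE]
      calc -(∑ i, ∑ j, π i j * Real.log (π i j))
          = ∑ i, ∑ j, (-(π i j * Real.log (π i j))) := by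
            simp [Finset.sum_neg_distrib]
        _ ≤ (n:ℝ)^2 * c - 1 - Real.log c := by rw [← hsum]; exact key
        _ = 2 * Real.log n := by
            rw [hlogc, hcdef]
            field_simp
            ring
    linarith
  -- the two infima
  set g : Matrix (Fin n) (Fin n) ℝ → ℝ := fun π => f π + γ * E π with hg
  have hWv : Wval n C p q = sInf (f '' S) := rfl
  have hWg : Wgamma n C γ p q = sInf (g '' S) := rfl
  have hbddf : BddBelow (f '' S) := by
    refine ⟨0, fun b hb => ?_⟩
    obtain ⟨π, hπ, rfl⟩ := hb
    exact hfpos π hπ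
  have hbddg : BddBelow (g '' S) := by
    refine ⟨γ * -(2 * Real.log n), fun b hb => ?_⟩
    obtain ⟨π, hπ, rfl⟩ := hb
    have := mul_le_mul_of_nonneg_left (hEge π hπ) hγ.le
    have := hfpos π hπ
    simp only [hg]
    linarith
  have h1 : Wgamma n C γ p q ≤ Wval n C p q := by
    rw [hWv, hWg]
    refine le_csInf (hSne.image f) ?_
    rintro b ⟨π, hπ, rfl⟩
    have hle : g π ≤ f π := by
      have := mul_nonpos_of_nonneg_of_nonpos hγ.le (hEle π hπ)
      simp only [hg]; linarith
    exact le_trans (csInf_le hbddg ⟨π, hπ, rfl⟩) hle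
  have h2 : Wval n C p q - 2 * γ * Real.log n ≤ Wgamma n C γ p q := by
    rw [hWv, hWg]
    refine le_csInf (hSne.image g) ?_
    rintro b ⟨π, hπ, rfl⟩
    have hle : f π - 2 * γ * Real.log n ≤ g π := by
      have := mul_le_mul_of_nonneg_left (hEge π hπ) hγ.le
      simp only [hg]; linarith
    have := csInf_le hbddf (⟨π, hπ, rfl⟩ : f π ∈ f '' S)
    linarith
  exact ⟨by linarith, by linarith⟩
end

section
/- Strong duality for entropy-regularized optimal transport: for every γ > 0 and all p, q ∈ S_n(1) with strictly positive entries, the dual function f(u,v) := γ(1^T B(u,v) 1 − ⟨u,p⟩ − ⟨v,q⟩) attains its minimum over (u,v) ∈ ℝ^n × ℝ^n, and W_γ(p,q) = γ − min_{u,v ∈ ℝ^n} f(u,v). -/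
open Finset

section helpers

lemma exp_ge_lin (s : ℝ) : 2*s - 1 ≤ Real.exp s := by
  have h1 := Real.add_one_le_exp (s/2)
  have h2 : Real.exp (s/2) * Real.exp (s/2) = Real.exp s := by
    rw [← Real.exp_add]; ring_nf
  nlinarith [Real.exp_pos (s/2), sq_nonneg (s/2 - 1), sq_nonneg (Real.exp (s/2) - (s/2+1))]

lemma mul_log_key {x y : ℝ} (hx : 0 ≤ x) (hy : 0 < y) :
    x * Real.log y + x - y ≤ x * Real.log x := by
  rcases eq_or_lt_of_le hx with h | h
  · simp [← h]; linarith
  · have := Real.log_le_sub_one_of_pos (show 0 < y/x by positivity)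
    rw [Real.log_div (ne_of_gt hy) (ne_of_gt h)] at this
    have h2 : x * (Real.log y - Real.log x) ≤ x * (y/x - 1) :=
      mul_le_mul_of_nonneg_left this hx
    rw [mul_sub, mul_sub, mul_div_cancel₀ _ (ne_of_gt h)] at h2
    linarith

lemma min_slope {a b : ℝ} (h : ∀ t : ℝ, a * Real.exp 0 - b * 0 ≤ a * Real.exp t - b * t) :
    a = b := by
  have hmin : IsLocalMin (fun t => a * Real.exp t - b * t) 0 :=
    (isMinOn_univ_iff.mpr h).isLocalMin Filter.univ_mem
  have hd : HasDerivAt (fun t => a * Real.exp t - b * t) (a - b) 0 := by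
    have h1 := (Real.hasDerivAt_exp 0).const_mul a
    have h2 := (hasDerivAt_id (0:ℝ)).const_mul b
    have h3 := h1.sub h2
    simp only [Real.exp_zero, mul_one] at h3
    exact h3
  have := hmin.deriv_eq_zero
  rw [hd.deriv] at this
  linarith

end helpers

/-- The dual objective `f(u,v) = γ(1ᵀB(u,v)1 − ⟨u,p⟩ − ⟨v,q⟩)`
with `B(u,v)ᵢⱼ = exp(uᵢ + vⱼ − Cᵢⱼ/γ)`. -/
noncomputable def dualF (n : ℕ) (C : Matrix (Fin n) (Fin n) ℝ) (γ : ℝ)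
    (p q : Fin n → ℝ) (u v : Fin n → ℝ) : ℝ :=
  γ * ((∑ i, ∑ j, Real.exp (u i + v j - C i j / γ))
    - (∑ i, u i * p i) - (∑ i, v i * q i))

lemma dualF_shift (n : ℕ) (C : Matrix (Fin n) (Fin n) ℝ) (γ : ℝ) (p q : Fin n → ℝ)
    (hp1 : ∑ i, p i = 1) (hq1 : ∑ i, q i = 1) (u v : Fin n → ℝ) (c : ℝ) :
    dualF n C γ p q (fun i => u i + c) (fun j => v j - c) = dualF n C γ p q u v := by
  unfold dualF
  have h1 : ∀ i j, u i + c + (v j - c) - C i j / γ = u i + v j - C i j / γ := by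
    intro i j; ring
  have h2 : ∑ i, (u i + c) * p i = (∑ i, u i * p i) + c := by
    simp [add_mul, Finset.sum_add_distrib, ← Finset.mul_sum, hp1]
  have h3 : ∑ i, (v i - c) * q i = (∑ i, v i * q i) - c := by
    simp [sub_mul, Finset.sum_sub_distrib, ← Finset.mul_sum, hq1]
  simp only [h1, h2, h3]
  ring

lemma dualF_cont (n : ℕ) (C : Matrix (Fin n) (Fin n) ℝ) (γ : ℝ) (p q : Fin n → ℝ) :
    Continuous (fun x : (Fin n → ℝ) × (Fin n → ℝ) => dualF n C γ p q x.1 x.2) := by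
  unfold dualF
  fun_prop

lemma dualF_update_left (n : ℕ) (C : Matrix (Fin n) (Fin n) ℝ) (γ : ℝ) (p q : Fin n → ℝ)
    (u v : Fin n → ℝ) (i : Fin n) (t : ℝ) :
    dualF n C γ p q (Function.update u i (u i + t)) v
      = dualF n C γ p q u v
        + (γ * ∑ j, Real.exp (u i + v j - C i j / γ)) * (Real.exp t - 1)
        - (γ * p i) * t := by
  unfold dualF
  have e1 : ∀ (w : Fin n → ℝ),
      ∑ k, ∑ j, Real.exp (w k + v j - C k j / γ)
        = (∑ j, Real.exp (w i + v j - C i j / γ))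
          + ∑ k ∈ Finset.univ.erase i, ∑ j, Real.exp (w k + v j - C k j / γ) :=
    fun w => (Finset.add_sum_erase Finset.univ _ (Finset.mem_univ i)).symm
  have e2 : ∑ k ∈ Finset.univ.erase i, ∑ j,
        Real.exp (Function.update u i (u i + t) k + v j - C k j / γ)
      = ∑ k ∈ Finset.univ.erase i, ∑ j, Real.exp (u k + v j - C k j / γ) :=
    Finset.sum_congr rfl fun k hk => by
      rw [Function.update_of_ne (Finset.ne_of_mem_erase hk)]
  have e3 : ∑ j, Real.exp (Function.update u i (u i + t) i + v j - C i j / γ)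
      = Real.exp t * ∑ j, Real.exp (u i + v j - C i j / γ) := by
    rw [Function.update_self, Finset.mul_sum]
    refine Finset.sum_congr rfl fun j _ => ?_
    rw [← Real.exp_add]
    ring_nf
  have p1 : ∀ (w : Fin n → ℝ), ∑ k, w k * p k
      = w i * p i + ∑ k ∈ Finset.univ.erase i, w k * p k :=
    fun w => (Finset.add_sum_erase Finset.univ _ (Finset.mem_univ i)).symm
  have p2 : ∑ k ∈ Finset.univ.erase i, Function.update u i (u i + t) k * p k
      = ∑ k ∈ Finset.univ.erase i, u k * p k :=
    Finset.sum_congr rfl fun k hk => by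
      rw [Function.update_of_ne (Finset.ne_of_mem_erase hk)]
  rw [e1 (Function.update u i (u i + t)), e1 u, e2, e3,
    p1 (Function.update u i (u i + t)), p1 u, p2, Function.update_self]
  ring

lemma dualF_update_right (n : ℕ) (C : Matrix (Fin n) (Fin n) ℝ) (γ : ℝ) (p q : Fin n → ℝ)
    (u v : Fin n → ℝ) (j : Fin n) (t : ℝ) :
    dualF n C γ p q u (Function.update v j (v j + t))
      = dualF n C γ p q u v
        + (γ * ∑ i, Real.exp (u i + v j - C i j / γ)) * (Real.exp t - 1)
        - (γ * q j) * t := by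
  unfold dualF
  rw [Finset.sum_comm (f := fun i k => Real.exp (u i + Function.update v j (v j + t) k - C i k / γ)),
    Finset.sum_comm (f := fun i k => Real.exp (u i + v k - C i k / γ))]
  have e1 : ∀ (w : Fin n → ℝ),
      ∑ k, ∑ i, Real.exp (u i + w k - C i k / γ)
        = (∑ i, Real.exp (u i + w j - C i j / γ))
          + ∑ k ∈ Finset.univ.erase j, ∑ i, Real.exp (u i + w k - C i k / γ) :=
    fun w => (Finset.add_sum_erase Finset.univ _ (Finset.mem_univ j)).symm
  have e2 : ∑ k ∈ Finset.univ.erase j, ∑ i,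
        Real.exp (u i + Function.update v j (v j + t) k - C i k / γ)
      = ∑ k ∈ Finset.univ.erase j, ∑ i, Real.exp (u i + v k - C i k / γ) :=
    Finset.sum_congr rfl fun k hk => by
      rw [Function.update_of_ne (Finset.ne_of_mem_erase hk)]
  have e3 : ∑ i, Real.exp (u i + Function.update v j (v j + t) j - C i j / γ)
      = Real.exp t * ∑ i, Real.exp (u i + v j - C i j / γ) := by
    rw [Function.update_self, Finset.mul_sum]
    refine Finset.sum_congr rfl fun i _ => ?_
    rw [← Real.exp_add]
    ring_nf
  have p1 : ∀ (w : Fin n → ℝ), ∑ k, w k * q k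
      = w j * q j + ∑ k ∈ Finset.univ.erase j, w k * q k :=
    fun w => (Finset.add_sum_erase Finset.univ _ (Finset.mem_univ j)).symm
  have p2 : ∑ k ∈ Finset.univ.erase j, Function.update v j (v j + t) k * q k
      = ∑ k ∈ Finset.univ.erase j, v k * q k :=
    Finset.sum_congr rfl fun k hk => by
      rw [Function.update_of_ne (Finset.ne_of_mem_erase hk)]
  rw [e1 (Function.update v j (v j + t)), e1 v, e2, e3,
    p1 (Function.update v j (v j + t)), p1 v, p2, Function.update_self]
  ring

set_option maxHeartbeats 1000000 in
/-- strong duality for entropy-regularized optimal transport: the dual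
function attains its minimum and `W_γ(p,q) = γ − min_{u,v} f(u,v)`. -/
theorem entropic_ot_strong_duality
    (n : ℕ) (hn : 2 ≤ n) (C : Matrix (Fin n) (Fin n) ℝ)
    (hC : ∀ i j, 0 ≤ C i j) (γ : ℝ) (hγ : 0 < γ)
    (p q : Fin n → ℝ)
    (hp : (∀ i, 0 ≤ p i) ∧ ∑ i, p i = 1) (hppos : ∀ i, 0 < p i)
    (hq : (∀ i, 0 ≤ q i) ∧ ∑ i, q i = 1) (hqpos : ∀ i, 0 < q i) :
    ∃ u v : Fin n → ℝ,
      (∀ u' v' : Fin n → ℝ, dualF n C γ p q u v ≤ dualF n C γ p q u' v') ∧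
      Wgamma n C γ p q = γ - dualF n C γ p q u v := by
  obtain ⟨hp0, hp1⟩ := hp
  obtain ⟨hq0, hq1⟩ := hq
  have hγ' : γ ≠ 0 := ne_of_gt hγ
  have hne : (Finset.univ : Finset (Fin n)).Nonempty :=
    ⟨⟨0, by omega⟩, Finset.mem_univ _⟩
  set A : ℝ := ∑ i : Fin n, ∑ j : Fin n, Real.exp ((0:ℝ) + 0 - C i j / γ) with hA
  have hApos : 0 < A :=
    Finset.sum_pos (fun i _ => Finset.sum_pos (fun j _ => Real.exp_pos _) hne) hne
  set c₀ : ℝ := (∑ i : Fin n, ∑ j : Fin n, C i j) / γ with hc0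
  have hCsum0 : (0:ℝ) ≤ ∑ i : Fin n, ∑ j : Fin n, C i j :=
    Finset.sum_nonneg fun i _ => Finset.sum_nonneg fun j _ => hC i j
  have hc0nn : 0 ≤ c₀ := div_nonneg hCsum0 hγ.le
  have hCc0 : ∀ i j, C i j / γ ≤ c₀ := by
    intro i j
    rw [hc0]
    gcongr
    calc C i j ≤ ∑ j', C i j' :=
          Finset.single_le_sum (fun j' _ => hC i j') (Finset.mem_univ j)
      _ ≤ ∑ i', ∑ j', C i' j' :=
          Finset.single_le_sum
            (fun i' _ => Finset.sum_nonneg fun j' _ => hC i' j') (Finset.mem_univ i)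
  set δ : ℝ := min (Finset.univ.inf' hne p) (Finset.univ.inf' hne q) with hδdef
  have hδpos : 0 < δ := by
    apply lt_min
    · exact (Finset.lt_inf'_iff hne).mpr fun i _ => hppos i
    · exact (Finset.lt_inf'_iff hne).mpr fun i _ => hqpos i
  have hδp : ∀ i, δ ≤ p i := fun i =>
    (min_le_left _ _).trans (Finset.inf'_le _ (Finset.mem_univ i))
  have hδq : ∀ i, δ ≤ q i := fun i =>
    (min_le_right _ _).trans (Finset.inf'_le _ (Finset.mem_univ i))
  set R₁ : ℝ := A + 2*c₀ + 1 with hR1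
  have hR1pos : 0 < R₁ := by positivity
  set R₂ : ℝ := (A + R₁)/δ with hR2
  have hR2pos : 0 < R₂ := by positivity
  have hR2δ : R₂ * δ = A + R₁ := div_mul_cancel₀ _ (ne_of_gt hδpos)
  -- the coercivity bound
  have hbound : ∀ u v : Fin n → ℝ, dualF n C γ p q u v ≤ γ * A → (∀ j, v j ≤ 0) →
      (∃ j0, v j0 = 0) →
      (∀ i, -R₂ ≤ u i ∧ u i ≤ R₁) ∧ (∀ j, -R₂ ≤ v j ∧ v j ≤ R₁) := by
    rintro u v hf hv0 ⟨j0, hj0⟩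
    have hEPQ : (∑ i, ∑ j, Real.exp (u i + v j - C i j / γ))
        - (∑ i, u i * p i) - (∑ i, v i * q i) ≤ A := by
      unfold dualF at hf
      exact le_of_mul_le_mul_left hf hγ
    have hE0 : (0:ℝ) ≤ ∑ i, ∑ j, Real.exp (u i + v j - C i j / γ) :=
      Finset.sum_nonneg fun i _ => Finset.sum_nonneg fun j _ => (Real.exp_pos _).le
    have hQ0 : (∑ i, v i * q i) ≤ 0 :=
      Finset.sum_nonpos fun i _ => mul_nonpos_iff.mpr (Or.inr ⟨hv0 i, hq0 i⟩)
    set M : ℝ := Finset.univ.sup' hne u with hM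
    have hPM : (∑ i, u i * p i) ≤ M := by
      calc (∑ i, u i * p i) ≤ ∑ i, M * p i :=
            Finset.sum_le_sum fun i _ =>
              mul_le_mul_of_nonneg_right (Finset.le_sup' u (Finset.mem_univ i)) (hp0 i)
        _ = M := by rw [← Finset.mul_sum, hp1, mul_one]
    obtain ⟨i1, _, hi1⟩ := Finset.exists_mem_eq_sup' hne u
    have hexpE : Real.exp (M - c₀) ≤ ∑ i, ∑ j, Real.exp (u i + v j - C i j / γ) := by
      have t1 : Real.exp (M - c₀) ≤ Real.exp (u i1 + v j0 - C i1 j0 / γ) := by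
        apply Real.exp_le_exp.mpr
        have := hCc0 i1 j0
        rw [← hi1] at *
        rw [hj0]
        linarith
      have t2 : Real.exp (u i1 + v j0 - C i1 j0 / γ)
          ≤ ∑ j, Real.exp (u i1 + v j - C i1 j / γ) :=
        Finset.single_le_sum (f := fun j => Real.exp (u i1 + v j - C i1 j / γ))
          (fun j _ => (Real.exp_pos _).le) (Finset.mem_univ j0)
      have t3 : (∑ j, Real.exp (u i1 + v j - C i1 j / γ))
          ≤ ∑ i, ∑ j, Real.exp (u i + v j - C i j / γ) :=
        Finset.single_le_sum (f := fun i => ∑ j, Real.exp (u i + v j - C i j / γ))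
          (fun i _ => Finset.sum_nonneg fun j _ => (Real.exp_pos _).le) (Finset.mem_univ i1)
      linarith
    have hMR1 : M ≤ R₁ := by
      have hlin := exp_ge_lin (M - c₀)
      rw [hR1]; linarith
    have hu_le : ∀ i, u i ≤ R₁ := fun i =>
      (Finset.le_sup' u (Finset.mem_univ i)).trans hMR1
    have hPA : -A ≤ ∑ i, u i * p i := by linarith
    have hQA : -(A + R₁) ≤ ∑ i, v i * q i := by linarith
    constructor
    · intro i
      refine ⟨?_, hu_le i⟩
      have hsplit : (∑ k, u k * p k)
          = u i * p i + ∑ k ∈ Finset.univ.erase i, u k * p k :=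
        (Finset.add_sum_erase Finset.univ _ (Finset.mem_univ i)).symm
      have h4 : (∑ k ∈ Finset.univ.erase i, u k * p k)
          ≤ ∑ k ∈ Finset.univ.erase i, R₁ * p k :=
        Finset.sum_le_sum fun k _ => mul_le_mul_of_nonneg_right (hu_le k) (hp0 k)
      have h5 : (∑ k ∈ Finset.univ.erase i, R₁ * p k) ≤ R₁ := by
        rw [← Finset.mul_sum]
        have h6 : (∑ k ∈ Finset.univ.erase i, p k) ≤ 1 := by
          rw [← hp1]
          exact Finset.sum_le_sum_of_subset_of_nonneg (Finset.erase_subset _ _)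
            fun k _ _ => hp0 k
        nlinarith
      have h7 : -(A + R₁) ≤ u i * p i := by linarith
      have h10 : R₂ * δ ≤ R₂ * p i := mul_le_mul_of_nonneg_left (hδp i) hR2pos.le
      have h8 : -R₂ * p i ≤ u i * p i := by nlinarith
      exact le_of_mul_le_mul_right h8 (hppos i)
    · intro j
      refine ⟨?_, (hv0 j).trans hR1pos.le⟩
      have hsplit : (∑ k, v k * q k)
          = v j * q j + ∑ k ∈ Finset.univ.erase j, v k * q k :=
        (Finset.add_sum_erase Finset.univ _ (Finset.mem_univ j)).symm
      have h4 : (∑ k ∈ Finset.univ.erase j, v k * q k) ≤ 0 :=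
        Finset.sum_nonpos fun k _ => mul_nonpos_iff.mpr (Or.inr ⟨hv0 k, hq0 k⟩)
      have h7 : -(A + R₁) ≤ v j * q j := by linarith
      have h10 : R₂ * δ ≤ R₂ * q j := mul_le_mul_of_nonneg_left (hδq j) hR2pos.le
      have h8 : -R₂ * q j ≤ v j * q j := by nlinarith
      exact le_of_mul_le_mul_right h8 (hqpos j)
  -- minimizer on a compact box
  set K : Set ((Fin n → ℝ) × (Fin n → ℝ)) :=
    (Set.Icc (fun _ => -R₂) (fun _ => R₁)) ×ˢ (Set.Icc (fun _ => -R₂) (fun _ => R₁)) with hK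
  have hKc : IsCompact K := IsCompact.prod isCompact_Icc isCompact_Icc
  have h0K : (((fun _ => 0) : Fin n → ℝ), ((fun _ => 0) : Fin n → ℝ)) ∈ K := by
    constructor <;>
      exact Set.mem_Icc.mpr ⟨fun i => by simpa using hR2pos.le,
        fun i => by simpa using hR1pos.le⟩
  obtain ⟨x, hxK, hxmin⟩ := hKc.exists_isMinOn ⟨_, h0K⟩
    ((dualF_cont n C γ p q).continuousOn)
  obtain ⟨u, v⟩ := x
  have hxmin' : ∀ y ∈ K, dualF n C γ p q u v ≤ dualF n C γ p q y.1 y.2 :=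
    fun y hy => isMinOn_iff.mp hxmin y hy
  have hF00 : dualF n C γ p q (fun _ => 0) (fun _ => 0) = γ * A := by
    unfold dualF; simp [hA]
  -- globality of the minimum
  have hglobal : ∀ u' v' : Fin n → ℝ,
      dualF n C γ p q u v ≤ dualF n C γ p q u' v' := by
    intro u' v'
    rcases le_or_gt (γ * A) (dualF n C γ p q u' v') with h | h
    · exact le_trans (le_trans (hxmin' _ h0K) hF00.le) h
    · obtain ⟨j0, _, hj0⟩ := Finset.exists_mem_eq_sup' hne v'
      have hshift := dualF_shift n C γ p q hp1 hq1 u' v' (Finset.univ.sup' hne v')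
      have hv0 : ∀ j, v' j - Finset.univ.sup' hne v' ≤ 0 := fun j =>
        sub_nonpos.mpr (Finset.le_sup' v' (Finset.mem_univ j))
      have hmem : ((fun i => u' i + Finset.univ.sup' hne v'),
          (fun j => v' j - Finset.univ.sup' hne v')) ∈ K := by
        obtain ⟨hub, hvb⟩ := hbound _ _
          (by rw [hshift]; exact h.le) hv0 ⟨j0, by rw [← hj0]; ring⟩
        exact ⟨Set.mem_Icc.mpr ⟨fun i => (hub i).1, fun i => (hub i).2⟩,
          Set.mem_Icc.mpr ⟨fun j => (hvb j).1, fun j => (hvb j).2⟩⟩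
      calc dualF n C γ p q u v ≤ _ := hxmin' _ hmem
        _ = dualF n C γ p q u' v' := hshift
  -- marginal conditions at the minimizer
  have hrow : ∀ i, ∑ j, Real.exp (u i + v j - C i j / γ) = p i := by
    intro i
    have key : ∀ t : ℝ, (γ * ∑ j, Real.exp (u i + v j - C i j / γ)) * Real.exp 0
        - (γ * p i) * 0 ≤ (γ * ∑ j, Real.exp (u i + v j - C i j / γ)) * Real.exp t
        - (γ * p i) * t := by
      intro t
      have h1 := hglobal (Function.update u i (u i + t)) v
      rw [dualF_update_left] at h1
      simp only [Real.exp_zero]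
      linarith
    exact mul_left_cancel₀ hγ' (min_slope key)
  have hcol : ∀ j, ∑ i, Real.exp (u i + v j - C i j / γ) = q j := by
    intro j
    have key : ∀ t : ℝ, (γ * ∑ i, Real.exp (u i + v j - C i j / γ)) * Real.exp 0
        - (γ * q j) * 0 ≤ (γ * ∑ i, Real.exp (u i + v j - C i j / γ)) * Real.exp t
        - (γ * q j) * t := by
      intro t
      have h1 := hglobal u (Function.update v j (v j + t))
      rw [dualF_update_right] at h1
      simp only [Real.exp_zero]
      linarith
    exact mul_left_cancel₀ hγ' (min_slope key)
  refine ⟨u, v, hglobal, ?_⟩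
  -- the optimal plan
  set π : Matrix (Fin n) (Fin n) ℝ :=
    fun i j => Real.exp (u i + v j - C i j / γ) with hπ
  have hπ0 : ∀ i j, 0 ≤ π i j := fun i j => (Real.exp_pos _).le
  have hsum1 : ∑ i, ∑ j, π i j = 1 := by
    calc ∑ i, ∑ j, π i j = ∑ i, p i := Finset.sum_congr rfl fun i _ => hrow i
      _ = 1 := hp1
  -- splitting ∑∑ π' (u + v) for any coupling π'
  have hsplit : ∀ (π' : Matrix (Fin n) (Fin n) ℝ),
      (∀ i, ∑ j, π' i j = p i) → (∀ j, ∑ i, π' i j = q j) →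
      ∑ i, ∑ j, π' i j * (u i + v j) = (∑ i, u i * p i) + (∑ i, v i * q i) := by
    intro π' hr hc
    have e1 : ∀ i, ∑ j, π' i j * (u i + v j)
        = u i * p i + ∑ j, π' i j * v j := by
      intro i
      have : ∑ j, π' i j * (u i + v j) = (∑ j, π' i j) * u i + ∑ j, π' i j * v j := by
        rw [Finset.sum_mul]
        rw [← Finset.sum_add_distrib]
        exact Finset.sum_congr rfl fun j _ => by ring
      rw [this, hr i]; ring
    rw [Finset.sum_congr rfl fun i _ => e1 i, Finset.sum_add_distrib]
    congr 1
    rw [Finset.sum_comm]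
    exact Finset.sum_congr rfl fun j _ => by
      rw [← Finset.sum_mul, hc j]; ring
  -- the primal value of π
  have hval : (∑ i, ∑ j, C i j * π i j) + γ * ∑ i, ∑ j, π i j * Real.log (π i j)
      = γ * ((∑ i, u i * p i) + (∑ i, v i * q i)) := by
    have term : ∀ i j, C i j * π i j + γ * (π i j * Real.log (π i j))
        = γ * (π i j * (u i + v j)) := by
      intro i j
      have hl : Real.log (π i j) = u i + v j - C i j / γ := Real.log_exp _
      rw [hl]
      field_simp
      ring
    calc (∑ i, ∑ j, C i j * π i j) + γ * ∑ i, ∑ j, π i j * Real.log (π i j)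
        = ∑ i, ∑ j, (C i j * π i j + γ * (π i j * Real.log (π i j))) := by
          rw [Finset.mul_sum]
          rw [← Finset.sum_add_distrib]
          refine Finset.sum_congr rfl fun i _ => ?_
          rw [Finset.mul_sum, ← Finset.sum_add_distrib]
      _ = ∑ i, ∑ j, γ * (π i j * (u i + v j)) :=
          Finset.sum_congr rfl fun i _ => Finset.sum_congr rfl fun j _ => term i j
      _ = γ * ∑ i, ∑ j, π i j * (u i + v j) := by
          rw [Finset.mul_sum]
          exact Finset.sum_congr rfl fun i _ => by rw [Finset.mul_sum]
      _ = γ * ((∑ i, u i * p i) + (∑ i, v i * q i)) := by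
          rw [hsplit π hrow hcol]
  -- weak duality: lower bound for all feasible couplings
  have hlb : ∀ y ∈ ((fun π : Matrix (Fin n) (Fin n) ℝ =>
      (∑ i, ∑ j, C i j * π i j) + γ * ∑ i, ∑ j, π i j * Real.log (π i j)) ''
      {π | (∀ i j, 0 ≤ π i j) ∧ (∀ i, ∑ j, π i j = p i) ∧ (∀ j, ∑ i, π i j = q j)}),
      γ * ((∑ i, u i * p i) + (∑ i, v i * q i)) ≤ y := by
    rintro y ⟨π', ⟨h0, hr, hc'⟩, rfl⟩
    have hsum1' : ∑ i, ∑ j, π' i j = 1 := by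
      calc ∑ i, ∑ j, π' i j = ∑ i, p i := Finset.sum_congr rfl fun i _ => hr i
        _ = 1 := hp1
    have term : ∀ i j, γ * (π' i j * (u i + v j)) + γ * π' i j - γ * π i j
        ≤ C i j * π' i j + γ * (π' i j * Real.log (π' i j)) := by
      intro i j
      have hk := mul_log_key (h0 i j) (Real.exp_pos (u i + v j - C i j / γ))
      rw [Real.log_exp] at hk
      have hk2 := mul_le_mul_of_nonneg_left hk hγ.le
      have hexpand : γ * (π' i j * (u i + v j - C i j / γ))
          = γ * (π' i j * (u i + v j)) - C i j * π' i j := by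
        field_simp
      have hπval : (π i j : ℝ) = Real.exp (u i + v j - C i j / γ) := rfl
      rw [hπval]
      ring_nf at hk2 hexpand ⊢
      linarith
    have hsineq : ∑ i, ∑ j, (γ * (π' i j * (u i + v j)) + γ * π' i j - γ * π i j)
        ≤ ∑ i, ∑ j, (C i j * π' i j + γ * (π' i j * Real.log (π' i j))) :=
      Finset.sum_le_sum fun i _ => Finset.sum_le_sum fun j _ => term i j
    have hlhs : ∑ i, ∑ j, (γ * (π' i j * (u i + v j)) + γ * π' i j - γ * π i j)
        = γ * ((∑ i, u i * p i) + (∑ i, v i * q i)) := by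
      have e : ∀ i, ∑ j, (γ * (π' i j * (u i + v j)) + γ * π' i j - γ * π i j)
          = γ * (∑ j, π' i j * (u i + v j)) + γ * (∑ j, π' i j) - γ * (∑ j, π i j) := by
        intro i
        simp [Finset.sum_sub_distrib, Finset.sum_add_distrib, Finset.mul_sum]
      have e2 : ∑ i, (γ * (∑ j, π' i j * (u i + v j)) + γ * (∑ j, π' i j)
            - γ * (∑ j, π i j))
          = γ * (∑ i, ∑ j, π' i j * (u i + v j)) + γ * (∑ i, ∑ j, π' i j)
            - γ * (∑ i, ∑ j, π i j) := by
        simp [Finset.sum_sub_distrib, Finset.sum_add_distrib, Finset.mul_sum]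
      rw [Finset.sum_congr rfl fun i _ => e i, e2, hsum1', hsum1, hsplit π' hr hc']
      ring
    have hrhs : ∑ i, ∑ j, (C i j * π' i j + γ * (π' i j * Real.log (π' i j)))
        = (∑ i, ∑ j, C i j * π' i j) + γ * ∑ i, ∑ j, π' i j * Real.log (π' i j) := by
      rw [Finset.mul_sum, ← Finset.sum_add_distrib]
      refine Finset.sum_congr rfl fun i _ => ?_
      rw [Finset.mul_sum, ← Finset.sum_add_distrib]
    rw [hlhs, hrhs] at hsineq
    exact hsineq
  have hmem : γ * ((∑ i, u i * p i) + (∑ i, v i * q i)) ∈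
      ((fun π : Matrix (Fin n) (Fin n) ℝ =>
      (∑ i, ∑ j, C i j * π i j) + γ * ∑ i, ∑ j, π i j * Real.log (π i j)) ''
      {π | (∀ i j, 0 ≤ π i j) ∧ (∀ i, ∑ j, π i j = p i) ∧ (∀ j, ∑ i, π i j = q j)}) :=
    ⟨π, ⟨hπ0, hrow, hcol⟩, hval⟩
  have hWg : Wgamma n C γ p q = γ * ((∑ i, u i * p i) + (∑ i, v i * q i)) := by
    unfold Wgamma
    exact le_antisymm (csInf_le ⟨_, hlb⟩ hmem) (le_csInf ⟨_, hmem⟩ hlb)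
  have hdual : dualF n C γ p q u v
      = γ - γ * ((∑ i, u i * p i) + (∑ i, v i * q i)) := by
    unfold dualF
    rw [hsum1]
    ring
  rw [hWg, hdual]
  ring
end

section
/- Closed form of the Kullback–Leibler projection onto a marginal constraint: let π' ∈ ℝ^{n×n} have strictly positive entries, let p ∈ ℝ^n have strictly positive entries, and let C₁ := {π ∈ ℝ^{n×n} : π_{ij} ≥ 0, π·1 = p}. Then the unique minimizer of KL(π | π') over π ∈ C₁ is the matrix π with entries π_{ij} = p_i π'_{ij} / (π'·1)_i. Analogously, for C₂ := {π : π_{ij} ≥ 0, π^T·1 = q} with q having strictly positive entries, the unique minimizer is π_{ij} = q_j π'_{ij} / (π'^T·1)_j. -/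
open Finset

lemma klterm_nonneg (s t : ℝ) (hs : 0 < s) (ht : 0 ≤ t) :
    0 ≤ t * Real.log (t / s) - t + s := by
  rcases eq_or_lt_of_le ht with h | h
  · simp [← h]; linarith
  · have h1 : Real.log (s / t) ≤ s / t - 1 := Real.log_le_sub_one_of_pos (div_pos hs h)
    have h2 : Real.log (s / t) = - Real.log (t / s) := by
      rw [← Real.log_inv]; congr 1; field_simp
    rw [h2] at h1
    have h3 : t * (- Real.log (t / s)) ≤ t * (s / t - 1) :=
      mul_le_mul_of_nonneg_left h1 ht
    have h4 : t * (s / t - 1) = s - t := by field_simp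
    nlinarith

lemma klterm_eq_zero (s t : ℝ) (hs : 0 < s) (ht : 0 ≤ t)
    (h : t * Real.log (t / s) - t + s = 0) : t = s := by
  rcases eq_or_lt_of_le ht with h0 | h0
  · exfalso; rw [← h0] at h; simp at h; linarith
  · by_contra hne
    have hne' : s / t ≠ 1 := by
      intro hh
      exact hne ((div_eq_one_iff_eq (ne_of_gt h0)).mp hh).symm
    have h1 : Real.log (s / t) < s / t - 1 :=
      Real.log_lt_sub_one_of_pos (div_pos hs h0) hne'
    have h2 : Real.log (s / t) = - Real.log (t / s) := by
      rw [← Real.log_inv]; congr 1; field_simp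
    rw [h2] at h1
    have h3 : t * (- Real.log (t / s)) < t * (s / t - 1) :=
      (mul_lt_mul_iff_right₀ h0).mpr h1
    have h4 : t * (s / t - 1) = s - t := by field_simp
    nlinarith

lemma row_identity {n : ℕ} (a : Fin n → ℝ) (ha : ∀ j, 0 < a j)
    (hS : 0 < ∑ k, a k) (p : ℝ) (hp : 0 < p)
    (x : Fin n → ℝ) (hx : ∀ j, 0 ≤ x j) (hxs : ∑ j, x j = p) :
    ∑ j, (x j * Real.log (x j / a j) - x j + a j)
      = (p * Real.log (p / ∑ k, a k) - p + ∑ k, a k)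
        + ∑ j, (x j * Real.log (x j / (p * a j / ∑ k, a k)) - x j
            + p * a j / ∑ k, a k) := by
  set S := ∑ k, a k with hSdef
  have hsum2 : ∑ j, p * a j / S = p := by
    rw [← Finset.sum_div, ← Finset.mul_sum, ← hSdef, mul_div_assoc,
      div_self (ne_of_gt hS), mul_one]
  have key : ∀ j, x j * Real.log (x j / a j)
      = x j * Real.log (x j / (p * a j / S)) + x j * Real.log (p / S) := by
    intro j
    rcases eq_or_lt_of_le (hx j) with h0 | h0
    · simp [← h0]
    · have hxhat : 0 < p * a j / S := div_pos (mul_pos hp (ha j)) hS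
      rw [← mul_add]
      congr 1
      have ha' : a j ≠ 0 := (ha j).ne'
      have hp' : p ≠ 0 := hp.ne'
      have hS' : S ≠ 0 := hS.ne'
      have hx' : x j ≠ 0 := h0.ne'
      rw [← Real.log_mul (div_ne_zero h0.ne' hxhat.ne') (div_ne_zero hp.ne' hS.ne')]
      congr 1
      field_simp
  calc ∑ j, (x j * Real.log (x j / a j) - x j + a j)
      = ∑ j, ((x j * Real.log (x j / (p * a j / S)) - x j + p * a j / S)
          + (x j * Real.log (p / S) + a j - p * a j / S)) := by
        apply Finset.sum_congr rfl; intro j _; rw [key j]; ring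
    _ = (∑ j, (x j * Real.log (x j / (p * a j / S)) - x j + p * a j / S))
          + ((∑ j, x j) * Real.log (p / S) + S - p) := by
        rw [Finset.sum_add_distrib]
        congr 1
        rw [Finset.sum_sub_distrib, Finset.sum_add_distrib, ← Finset.sum_mul, hsum2]
    _ = (p * Real.log (p / S) - p + S)
        + ∑ j, (x j * Real.log (x j / (p * a j / S)) - x j + p * a j / S) := by
        rw [hxs]; ring

/-- Kullback–Leibler divergence between nonnegative matrices
(`0 ln 0 := 0`, which is automatic since `Real.log 0 = 0`). -/
noncomputable def KLmat (n : ℕ) (π π' : Matrix (Fin n) (Fin n) ℝ) : ℝ :=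
  ∑ i, ∑ j, (π i j * Real.log (π i j / π' i j) - π i j + π' i j)

lemma KLmat_transpose (n : ℕ) (π π' : Matrix (Fin n) (Fin n) ℝ) :
    KLmat n π.transpose π'.transpose = KLmat n π π' := by
  unfold KLmat
  rw [Finset.sum_comm]
  rfl

lemma kl_row_all (n : ℕ) (hn : 0 < n) (π' : Matrix (Fin n) (Fin n) ℝ)
    (hπ' : ∀ i j, 0 < π' i j) (p : Fin n → ℝ) (hp : ∀ i, 0 < p i) :
    (((∀ i j, (0:ℝ) ≤ p i * π' i j / (∑ k, π' i k)) ∧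
        (∀ i, ∑ j, p i * π' i j / (∑ k, π' i k) = p i)) ∧
      (∀ π : Matrix (Fin n) (Fin n) ℝ,
        ((∀ i j, 0 ≤ π i j) ∧ (∀ i, ∑ j, π i j = p i)) →
        KLmat n (Matrix.of fun i j => p i * π' i j / (∑ k, π' i k)) π' ≤ KLmat n π π') ∧
      (∀ π : Matrix (Fin n) (Fin n) ℝ,
        ((∀ i j, 0 ≤ π i j) ∧ (∀ i, ∑ j, π i j = p i)) →
        (∀ τ : Matrix (Fin n) (Fin n) ℝ,
          ((∀ i j, 0 ≤ τ i j) ∧ (∀ i, ∑ j, τ i j = p i)) → KLmat n π π' ≤ KLmat n τ π') →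
        π = Matrix.of fun i j => p i * π' i j / (∑ k, π' i k))) := by
  haveI : Nonempty (Fin n) := Fin.pos_iff_nonempty.mp hn
  have hS : ∀ i, 0 < ∑ k, π' i k := fun i =>
    Finset.sum_pos (fun k _ => hπ' i k) Finset.univ_nonempty
  have hhatpos : ∀ i j, 0 < p i * π' i j / (∑ k, π' i k) := fun i j =>
    div_pos (mul_pos (hp i) (hπ' i j)) (hS i)
  have part1a : ∀ i j, (0:ℝ) ≤ p i * π' i j / (∑ k, π' i k) := fun i j =>
    (hhatpos i j).le
  have part1b : ∀ i, ∑ j, p i * π' i j / (∑ k, π' i k) = p i := by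
    intro i
    rw [← Finset.sum_div, ← Finset.mul_sum, mul_div_assoc,
      div_self (ne_of_gt (hS i)), mul_one]
  set C : ℝ := ∑ i, (p i * Real.log (p i / ∑ k, π' i k) - p i + ∑ k, π' i k) with hC
  have hid : ∀ π : Matrix (Fin n) (Fin n) ℝ,
      ((∀ i j, 0 ≤ π i j) ∧ (∀ i, ∑ j, π i j = p i)) →
      KLmat n π π' = C + ∑ i, ∑ j,
        (π i j * Real.log (π i j / (p i * π' i j / (∑ k, π' i k))) - π i j
          + p i * π' i j / (∑ k, π' i k)) := by
    intro π hπ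
    unfold KLmat
    calc ∑ i, ∑ j, (π i j * Real.log (π i j / π' i j) - π i j + π' i j)
        = ∑ i, ((p i * Real.log (p i / ∑ k, π' i k) - p i + ∑ k, π' i k)
            + ∑ j, (π i j * Real.log (π i j / (p i * π' i j / (∑ k, π' i k))) - π i j
              + p i * π' i j / (∑ k, π' i k))) := by
          apply Finset.sum_congr rfl
          intro i _
          exact row_identity (fun j => π' i j) (hπ' i) (hS i) (p i) (hp i)
            (fun j => π i j) (fun j => hπ.1 i j) (hπ.2 i)
      _ = C + _ := Finset.sum_add_distrib
  have hhatfeas : (∀ i j, 0 ≤ (Matrix.of fun i j => p i * π' i j / (∑ k, π' i k)) i j) ∧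
      (∀ i, ∑ j, (Matrix.of fun i j => p i * π' i j / (∑ k, π' i k)) i j = p i) :=
    ⟨fun i j => part1a i j, fun i => part1b i⟩
  have hhatval : KLmat n (Matrix.of fun i j => p i * π' i j / (∑ k, π' i k)) π' = C := by
    rw [hid _ hhatfeas]
    have : ∀ i ∈ Finset.univ, ∑ j,
        ((Matrix.of fun i j => p i * π' i j / (∑ k, π' i k)) i j *
          Real.log ((Matrix.of fun i j => p i * π' i j / (∑ k, π' i k)) i j /
            (p i * π' i j / (∑ k, π' i k))) -
          (Matrix.of fun i j => p i * π' i j / (∑ k, π' i k)) i j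
          + p i * π' i j / (∑ k, π' i k)) = 0 := by
      intro i _
      apply Finset.sum_eq_zero
      intro j _
      simp only [Matrix.of_apply]
      rw [div_self (ne_of_gt (hhatpos i j)), Real.log_one]
      ring
    rw [Finset.sum_congr rfl this]
    simp
  have hDnonneg : ∀ π : Matrix (Fin n) (Fin n) ℝ, (∀ i j, 0 ≤ π i j) →
      ∀ i ∈ Finset.univ, ∀ j ∈ Finset.univ,
        (0:ℝ) ≤ π i j * Real.log (π i j / (p i * π' i j / (∑ k, π' i k))) - π i j
          + p i * π' i j / (∑ k, π' i k) := fun π hπ i _ j _ =>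
    klterm_nonneg _ _ (hhatpos i j) (hπ i j)
  refine ⟨⟨part1a, part1b⟩, ?_, ?_⟩
  · intro π hπ
    rw [hhatval, hid π hπ]
    have : 0 ≤ ∑ i, ∑ j,
        (π i j * Real.log (π i j / (p i * π' i j / (∑ k, π' i k))) - π i j
          + p i * π' i j / (∑ k, π' i k)) :=
      Finset.sum_nonneg fun i hi => Finset.sum_nonneg fun j hj =>
        hDnonneg π hπ.1 i hi j hj
    linarith
  · intro π hπ hmin
    have h1 : KLmat n π π' ≤ C := hhatval ▸ hmin _ hhatfeas
    have h2 := hid π hπ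
    have hD0 : ∑ i, ∑ j,
        (π i j * Real.log (π i j / (p i * π' i j / (∑ k, π' i k))) - π i j
          + p i * π' i j / (∑ k, π' i k)) = 0 := by
      have : 0 ≤ ∑ i, ∑ j,
          (π i j * Real.log (π i j / (p i * π' i j / (∑ k, π' i k))) - π i j
            + p i * π' i j / (∑ k, π' i k)) :=
        Finset.sum_nonneg fun i hi => Finset.sum_nonneg fun j hj =>
          hDnonneg π hπ.1 i hi j hj
      linarith
    have hrow0 := (Finset.sum_eq_zero_iff_of_nonneg
      (fun i hi => Finset.sum_nonneg fun j hj => hDnonneg π hπ.1 i hi j hj)).mp hD0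
    ext i j
    have hterm0 := (Finset.sum_eq_zero_iff_of_nonneg
      (fun j hj => hDnonneg π hπ.1 i (Finset.mem_univ i) j hj)).mp
      (hrow0 i (Finset.mem_univ i)) j (Finset.mem_univ j)
    simpa using klterm_eq_zero _ _ (hhatpos i j) (hπ.1 i j) hterm0

/-- closed form of the KL projection onto a row-marginal constraint set
`C₁ = {π ≥ 0 : π·1 = p}` and onto a column-marginal constraint set
`C₂ = {π ≥ 0 : πᵀ·1 = q}`. -/
theorem kl_projection_closed_form
    (n : ℕ) (hn : 2 ≤ n) (π' : Matrix (Fin n) (Fin n) ℝ)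
    (hπ' : ∀ i j, 0 < π' i j)
    (p : Fin n → ℝ) (hp : ∀ i, 0 < p i)
    (q : Fin n → ℝ) (hq : ∀ j, 0 < q j) :
    (((∀ i j, (0:ℝ) ≤ p i * π' i j / (∑ k, π' i k)) ∧
        (∀ i, ∑ j, p i * π' i j / (∑ k, π' i k) = p i)) ∧
      (∀ π : Matrix (Fin n) (Fin n) ℝ,
        ((∀ i j, 0 ≤ π i j) ∧ (∀ i, ∑ j, π i j = p i)) →
        KLmat n (Matrix.of fun i j => p i * π' i j / (∑ k, π' i k)) π' ≤ KLmat n π π') ∧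
      (∀ π : Matrix (Fin n) (Fin n) ℝ,
        ((∀ i j, 0 ≤ π i j) ∧ (∀ i, ∑ j, π i j = p i)) →
        (∀ τ : Matrix (Fin n) (Fin n) ℝ,
          ((∀ i j, 0 ≤ τ i j) ∧ (∀ i, ∑ j, τ i j = p i)) → KLmat n π π' ≤ KLmat n τ π') →
        π = Matrix.of fun i j => p i * π' i j / (∑ k, π' i k)))
    ∧
    (((∀ i j, (0:ℝ) ≤ q j * π' i j / (∑ k, π' k j)) ∧
        (∀ j, ∑ i, q j * π' i j / (∑ k, π' k j) = q j)) ∧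
      (∀ π : Matrix (Fin n) (Fin n) ℝ,
        ((∀ i j, 0 ≤ π i j) ∧ (∀ j, ∑ i, π i j = q j)) →
        KLmat n (Matrix.of fun i j => q j * π' i j / (∑ k, π' k j)) π' ≤ KLmat n π π') ∧
      (∀ π : Matrix (Fin n) (Fin n) ℝ,
        ((∀ i j, 0 ≤ π i j) ∧ (∀ j, ∑ i, π i j = q j)) →
        (∀ τ : Matrix (Fin n) (Fin n) ℝ,
          ((∀ i j, 0 ≤ τ i j) ∧ (∀ j, ∑ i, τ i j = q j)) → KLmat n π π' ≤ KLmat n τ π') →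
        π = Matrix.of fun i j => q j * π' i j / (∑ k, π' k j))) := by
  have hn0 : 0 < n := by omega
  constructor
  · exact kl_row_all n hn0 π' hπ' p hp
  · have R := kl_row_all n hn0 π'.transpose (fun i j => hπ' j i) q hq
    have hA : (Matrix.of fun i j => q i * π'.transpose i j / (∑ k, π'.transpose i k))
        = (Matrix.of fun i j => q j * π' i j / (∑ k, π' k j)).transpose := by
      ext i j
      simp [Matrix.transpose_apply]
    refine ⟨⟨fun i j => by simpa using R.1.1 j i, fun j => by simpa using R.1.2 j⟩, ?_, ?_⟩
    · intro π hπ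
      have hfeasT : (∀ i j, 0 ≤ π.transpose i j) ∧
          (∀ i, ∑ j, π.transpose i j = q i) :=
        ⟨fun i j => hπ.1 j i, fun i => hπ.2 i⟩
      have := R.2.1 π.transpose hfeasT
      rw [hA] at this
      rwa [KLmat_transpose, ← Matrix.transpose_transpose π' , KLmat_transpose] at this
    · intro π hπ hmin
      have hfeasT : (∀ i j, 0 ≤ π.transpose i j) ∧
          (∀ i, ∑ j, π.transpose i j = q i) :=
        ⟨fun i j => hπ.1 j i, fun i => hπ.2 i⟩
      have hminT : ∀ τ : Matrix (Fin n) (Fin n) ℝ,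
          ((∀ i j, 0 ≤ τ i j) ∧ (∀ i, ∑ j, τ i j = q i)) →
          KLmat n π.transpose π'.transpose ≤ KLmat n τ π'.transpose := by
        intro τ hτ
        have hτT : (∀ i j, 0 ≤ τ.transpose i j) ∧
            (∀ j, ∑ i, τ.transpose i j = q j) :=
          ⟨fun i j => hτ.1 j i, fun j => hτ.2 j⟩
        have := hmin τ.transpose hτT
        rw [KLmat_transpose]
        calc KLmat n π π' ≤ KLmat n τ.transpose π' := this
          _ = KLmat n τ.transpose.transpose π'.transpose := (KLmat_transpose ..).symm
          _ = KLmat n τ π'.transpose := by rw [Matrix.transpose_transpose]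
      have := R.2.2 π.transpose hfeasT hminT
      rw [hA] at this
      exact Matrix.transpose_inj.mp this
end

section
/- Convergence rate of Sinkhorn's algorithm: let p, q ∈ S_n(1) have strictly positive entries and γ > 0. Define the Sinkhorn iterates by u⁰ = v⁰ = 0 and, for t ≥ 0: if t is even, u^{t+1} = u^t + ln p − ln(B(u^t,v^t)·1) and v^{t+1} = v^t; if t is odd, u^{t+1} = u^t and v^{t+1} = v^t + ln q − ln(B(u^t,v^t)^T·1). Then for every t > 2, ‖B(u^t,v^t)·1 − p‖₁ + ‖B(u^t,v^t)^T·1 − q‖₁ ≤ 4R/(t−2), where R := ‖C‖_∞/γ − ln(min{min_i p_i, min_j q_j}). -/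
open Finset

/-- `B(u,v)ᵢⱼ = exp(uᵢ + vⱼ − Cᵢⱼ/γ)`. -/
noncomputable def Bmat (n : ℕ) (C : Matrix (Fin n) (Fin n) ℝ) (γ : ℝ)
    (u v : Fin n → ℝ) : Matrix (Fin n) (Fin n) ℝ :=
  Matrix.of fun i j => Real.exp (u i + v j - C i j / γ)

open Real Set

private lemma hasDerivAt_quot (t : ℝ) (ht : t ≠ -2) :
    HasDerivAt (fun s : ℝ => 3*(s-1)^2/(2*s+4)) ((3*t^2+12*t-15)/(2*(t+2)^2)) t := by
  have ht' : t + 2 ≠ 0 := fun h => ht (by linarith)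
  have hden : (2*t+4) ≠ 0 := fun h => ht (by linarith)
  have hnum : HasDerivAt (fun s : ℝ => 3*(s-1)^2) (6*(t-1)) t := by
    have h1 : HasDerivAt (fun s : ℝ => (s-1)) 1 t := (hasDerivAt_id t).sub_const 1
    have h2 := (h1.pow 2).const_mul (3:ℝ)
    exact h2.congr_deriv (by ring)
  have hd : HasDerivAt (fun s : ℝ => 2*s+4) 2 t := by
    have h := ((hasDerivAt_id t).const_mul (2:ℝ)).add_const 4
    simpa [id] using h
  have h := hnum.div hd hden
  refine h.congr_deriv ?_
  rw [div_eq_div_iff (by positivity) (by positivity)]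
  ring

private noncomputable def Hfun : ℝ → ℝ :=
  fun s => Real.log s - (3*s^2+12*s-15)/(2*(s+2)^2)

private lemma hasDerivAt_H (t : ℝ) (ht : 0 < t) :
    HasDerivAt Hfun (1/t - 27/(t+2)^3) t := by
  have ht2 : t + 2 ≠ 0 := by positivity
  have hlog : HasDerivAt Real.log (1/t) t := by
    simpa [one_div] using Real.hasDerivAt_log (ne_of_gt ht)
  have hnum : HasDerivAt (fun s : ℝ => 3*s^2+12*s-15) (6*t+12) t := by
    have h2 := ((hasDerivAt_pow 2 t).const_mul (3:ℝ)).add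
      (((hasDerivAt_id t).const_mul (12:ℝ)).sub_const 15)
    have h3 : (fun s : ℝ => 3*s^2+12*s-15) = (fun y => 3*y^2) + fun x => 12 * id x - 15 := by
      funext s; simp only [Pi.add_apply, id]; ring
    rw [h3]; exact h2.congr_deriv (by simp; ring)
  have hden : HasDerivAt (fun s : ℝ => 2*(s+2)^2) (4*(t+2)) t := by
    have h1 : HasDerivAt (fun s : ℝ => (s+2)) 1 t := (hasDerivAt_id t).add_const 2
    have h2 := (h1.pow 2).const_mul (2:ℝ)
    exact h2.congr_deriv (by ring)
  have hdne : 2*(t+2)^2 ≠ 0 := by positivity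
  have h := hlog.sub ((hnum.div hden hdne))
  refine h.congr_deriv ?_
  have h3 : ((6*t+12)*(2*(t+2)^2) - (3*t^2+12*t-15)*(4*(t+2)))/(2*(t+2)^2)^2
      = 27/(t+2)^3 := by
    rw [div_eq_div_iff (by positivity) (by positivity)]
    ring
  rw [h3]

private lemma Hfun_cont {s : Set ℝ} (hs : ∀ x ∈ s, 0 < x) : ContinuousOn Hfun s := by
  apply ContinuousOn.sub
  · exact Real.continuousOn_log.mono (by intro x hx; simp; intro h; exact absurd h (ne_of_gt (hs x hx)))
  · apply ContinuousOn.div (by fun_prop) (by fun_prop)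
    intro x hx; have := hs x hx; positivity

private lemma Hfun_deriv_nonneg {x : ℝ} (hx : 0 < x) : 0 ≤ 1/x - 27/(x+2)^3 := by
  rw [sub_nonneg, div_le_div_iff₀ (by positivity) (by positivity)]
  nlinarith [mul_nonneg (sq_nonneg (x-1)) (by linarith : (0:ℝ) ≤ x+8)]

private lemma Hfun_one : Hfun 1 = 0 := by simp [Hfun]; norm_num

private lemma Hfun_nonneg {t : ℝ} (ht : 1 ≤ t) : 0 ≤ Hfun t := by
  have mono : MonotoneOn Hfun (Set.Ici (1:ℝ)) := by
    apply monotoneOn_of_deriv_nonneg (convex_Ici 1)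
    · exact Hfun_cont (by intro x hx; simp at hx; linarith)
    · intro x hx
      simp only [interior_Ici, Set.mem_Ioi] at hx
      exact (hasDerivAt_H x (by linarith)).differentiableAt.differentiableWithinAt
    · intro x hx
      simp only [interior_Ici, Set.mem_Ioi] at hx
      rw [(hasDerivAt_H x (by linarith)).deriv]
      exact Hfun_deriv_nonneg (by linarith)
  have h2 : Hfun 1 ≤ Hfun t := mono (by simp) (by simpa using ht) ht
  rw [Hfun_one] at h2; exact h2

private lemma Hfun_nonpos {t : ℝ} (ht0 : 0 < t) (ht : t ≤ 1) : Hfun t ≤ 0 := by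
  have mono : MonotoneOn Hfun (Set.Ioc (0:ℝ) 1) := by
    apply monotoneOn_of_deriv_nonneg (convex_Ioc 0 1)
    · exact Hfun_cont (by intro x hx; exact hx.1)
    · intro x hx
      rw [interior_Ioc] at hx
      exact (hasDerivAt_H x hx.1).differentiableAt.differentiableWithinAt
    · intro x hx
      rw [interior_Ioc] at hx
      rw [(hasDerivAt_H x hx.1).deriv]
      exact Hfun_deriv_nonneg hx.1
  have h2 : Hfun t ≤ Hfun 1 := mono ⟨ht0, ht⟩ (by constructor <;> norm_num) ht
  rw [Hfun_one] at h2; exact h2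

/-- key pointwise inequality `t ln t - t + 1 ≥ 3(t-1)²/(2t+4)` for `t > 0`. -/
private lemma key_pointwise {t : ℝ} (ht : 0 < t) :
    3*(t-1)^2/(2*t+4) ≤ t * Real.log t - t + 1 := by
  set F : ℝ → ℝ := fun s => s * Real.log s - s + 1 - 3*(s-1)^2/(2*s+4) with hF
  have hderiv : ∀ x : ℝ, 0 < x → HasDerivAt F (Hfun x) x := by
    intro x hx
    have h1 : HasDerivAt (fun s : ℝ => s * Real.log s) (Real.log x + 1) x :=
      Real.hasDerivAt_mul_log (ne_of_gt hx)
    have h2 := ((h1.sub (hasDerivAt_id x)).add_const 1).sub (hasDerivAt_quot x (by linarith))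
    refine h2.congr_deriv ?_
    simp only [Hfun]; ring
  have hFcont : ∀ s : Set ℝ, (∀ x ∈ s, 0 < x) → ContinuousOn F s := by
    intro s hs
    apply ContinuousOn.sub
    apply ContinuousOn.add
    apply ContinuousOn.sub
    · exact continuousOn_id.mul (Real.continuousOn_log.mono
        (by intro x hx; simp; intro h; exact absurd h (ne_of_gt (hs x hx))))
    · exact continuousOn_id
    · exact continuousOn_const
    · apply ContinuousOn.div (by fun_prop) (by fun_prop)
      intro x hx; have := hs x hx; positivity
  have hF1 : F 1 = 0 := by simp [hF]
  have hge : 0 ≤ F t := by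
    rcases le_total 1 t with h | h
    · have mono : MonotoneOn F (Set.Ici (1:ℝ)) := by
        apply monotoneOn_of_deriv_nonneg (convex_Ici 1)
        · exact hFcont _ (by intro x hx; simp at hx; linarith)
        · intro x hx
          simp only [interior_Ici, Set.mem_Ioi] at hx
          exact (hderiv x (by linarith)).differentiableAt.differentiableWithinAt
        · intro x hx
          simp only [interior_Ici, Set.mem_Ioi] at hx
          rw [(hderiv x (by linarith)).deriv]
          exact Hfun_nonneg hx.le
      have := mono (by simp) (by simpa using h) h
      rw [hF1] at this; exact this
    · have anti : AntitoneOn F (Set.Ioc (0:ℝ) 1) := by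
        apply antitoneOn_of_deriv_nonpos (convex_Ioc 0 1)
        · exact hFcont _ (by intro x hx; exact hx.1)
        · intro x hx
          rw [interior_Ioc] at hx
          exact (hderiv x hx.1).differentiableAt.differentiableWithinAt
        · intro x hx
          rw [interior_Ioc] at hx
          rw [(hderiv x hx.1).deriv]
          exact Hfun_nonpos hx.1 hx.2.le
      have := anti ⟨ht, h⟩ (by constructor <;> norm_num) h
      rw [hF1] at this; exact this
  simp only [hF] at hge; linarith

/-- Pinsker's inequality (discrete, constant 1/2). -/
private lemma pinsker_half {n : ℕ} (p r : Fin n → ℝ)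
    (hp : ∀ i, 0 < p i) (hr : ∀ i, 0 < r i)
    (hp1 : ∑ i, p i = 1) (hr1 : ∑ i, r i = 1) :
    (∑ i, |p i - r i|)^2 ≤ 2 * ∑ i, p i * Real.log (p i / r i) := by
  have hd : ∀ i, (0:ℝ) < 2 * p i + 4 * r i := fun i => by
    have := hp i; have := hr i; linarith
  -- pointwise bound
  have hpt : ∀ i, 3*(p i - r i)^2/(2*p i + 4*r i)
      ≤ p i * Real.log (p i / r i) - p i + r i := by
    intro i
    have hpi := hp i; have hri := hr i
    have kp := key_pointwise (div_pos hpi hri)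
    have h := mul_le_mul_of_nonneg_left kp hri.le
    have e1 : r i * (3*((p i / r i)-1)^2/(2*(p i / r i)+4))
        = 3*(p i - r i)^2/(2*p i+4*r i) := by
      have h1 : r i ≠ 0 := ne_of_gt hri
      have h3 : 2*p i+4*r i ≠ 0 := ne_of_gt (hd i)
      field_simp
    have e2 : r i * ((p i / r i) * Real.log (p i / r i) - (p i / r i) + 1)
        = p i * Real.log (p i / r i) - p i + r i := by
      field_simp
    rw [e1, e2] at h
    exact h
  -- sum of pointwise bounds
  have hsum : ∑ i, 3*(p i - r i)^2/(2*p i + 4*r i)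
      ≤ ∑ i, p i * Real.log (p i / r i) := by
    calc ∑ i, 3*(p i - r i)^2/(2*p i + 4*r i)
        ≤ ∑ i, (p i * Real.log (p i / r i) - p i + r i) :=
          Finset.sum_le_sum (fun i _ => hpt i)
      _ = ∑ i, p i * Real.log (p i / r i) := by
          rw [Finset.sum_add_distrib, Finset.sum_sub_distrib, hp1, hr1]; ring
  -- Cauchy-Schwarz
  have hcs := Finset.sum_mul_sq_le_sq_mul_sq Finset.univ
    (fun i => |p i - r i| / Real.sqrt (2*p i + 4*r i))
    (fun i => Real.sqrt (2*p i + 4*r i))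
  have hfg : ∀ i, |p i - r i| / Real.sqrt (2*p i + 4*r i) * Real.sqrt (2*p i + 4*r i)
      = |p i - r i| := fun i =>
    div_mul_cancel₀ _ ((Real.sqrt_pos.mpr (hd i)).ne')
  have hf2 : ∀ i, (|p i - r i| / Real.sqrt (2*p i + 4*r i))^2
      = (p i - r i)^2 / (2*p i + 4*r i) := by
    intro i
    rw [div_pow, sq_abs, Real.sq_sqrt (hd i).le]
  have hg2 : ∑ i, (Real.sqrt (2*p i + 4*r i))^2 = 6 := by
    have : ∀ i, (Real.sqrt (2*p i + 4*r i))^2 = 2*p i + 4*r i := fun i =>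
      Real.sq_sqrt (hd i).le
    simp only [this, Finset.sum_add_distrib, ← Finset.mul_sum, hp1, hr1]
    norm_num
  simp only [hfg] at hcs
  simp only [hf2] at hcs
  rw [hg2] at hcs
  have e3 : (∑ i, (p i - r i)^2 / (2*p i + 4*r i)) * 6
      = 2 * ∑ i, 3*(p i - r i)^2/(2*p i + 4*r i) := by
    rw [Finset.mul_sum, Finset.sum_mul]
    congr 1; funext i; ring
  rw [e3] at hcs
  linarith

private lemma exp_sub_exp_le (a b : ℝ) :
    Real.exp a - Real.exp b ≤ Real.exp a * (a - b) := by
  have h := Real.add_one_le_exp (b - a)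
  have h2 := mul_le_mul_of_nonneg_left h (Real.exp_pos a).le
  rw [← Real.exp_add] at h2
  have h3 : a + (b - a) = b := by ring
  rw [h3] at h2
  nlinarith

private lemma dot_le_of_sum_zero {n : ℕ} (hn : 0 < n) (x y : Fin n → ℝ)
    (hx : ∑ i, x i = 0) (K : ℝ)
    (hosc : ∀ i k, y i - y k ≤ 2*K) :
    ∑ i, x i * y i ≤ K * ∑ i, |x i| := by
  have hne : (Finset.univ : Finset (Fin n)).Nonempty := by
    simpa [Finset.univ_nonempty_iff] using Fin.pos_iff_nonempty.mp hn
  set M := Finset.univ.sup' hne y with hM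
  set m := Finset.univ.inf' hne y with hm
  obtain ⟨i0, -, hi0⟩ := Finset.exists_mem_eq_sup' hne y
  obtain ⟨k0, -, hk0⟩ := Finset.exists_mem_eq_inf' hne y
  have hMm : M - m ≤ 2*K := by rw [hM, hm, hi0, hk0]; exact hosc i0 k0
  set c := (M + m)/2 with hc
  have hyc : ∀ i, |y i - c| ≤ K := by
    intro i
    have h1 : y i ≤ M := Finset.le_sup' y (Finset.mem_univ i)
    have h2 : m ≤ y i := Finset.inf'_le y (Finset.mem_univ i)
    rw [abs_le]; constructor <;> [skip; skip] <;> simp only [hc] <;> linarith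
  calc ∑ i, x i * y i = ∑ i, x i * (y i - c) := by
        simp only [mul_sub, Finset.sum_sub_distrib, ← Finset.sum_mul, hx]; ring
    _ ≤ ∑ i, |x i| * K := by
        apply Finset.sum_le_sum
        intro i _
        calc x i * (y i - c) ≤ |x i * (y i - c)| := le_abs_self _
          _ = |x i| * |y i - c| := abs_mul _ _
          _ ≤ |x i| * K := mul_le_mul_of_nonneg_left (hyc i) (abs_nonneg _)
    _ = K * ∑ i, |x i| := by rw [← Finset.sum_mul]; ring

noncomputable def rowS (n : ℕ) (C : Matrix (Fin n) (Fin n) ℝ) (γ : ℝ)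
    (u v : Fin n → ℝ) (i : Fin n) : ℝ := ∑ j, Bmat n C γ u v i j

noncomputable def colS (n : ℕ) (C : Matrix (Fin n) (Fin n) ℝ) (γ : ℝ)
    (u v : Fin n → ℝ) (j : Fin n) : ℝ := ∑ i, Bmat n C γ u v i j

noncomputable def Phi (n : ℕ) (C : Matrix (Fin n) (Fin n) ℝ) (γ : ℝ)
    (p q : Fin n → ℝ) (u v : Fin n → ℝ) : ℝ :=
  (∑ i, ∑ j, Bmat n C γ u v i j) - (∑ i, u i * p i) - (∑ j, v j * q j)

noncomputable def Err (n : ℕ) (C : Matrix (Fin n) (Fin n) ℝ) (γ : ℝ)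
    (p q : Fin n → ℝ) (u v : Fin n → ℝ) : ℝ :=
  (∑ i, |rowS n C γ u v i - p i|) + (∑ j, |colS n C γ u v j - q j|)

section traj

variable {n : ℕ} {C : Matrix (Fin n) (Fin n) ℝ} {γ : ℝ} {p q : Fin n → ℝ}
  {u v : ℕ → Fin n → ℝ}

private lemma Bmat_pos (u' v' : Fin n → ℝ) (i j : Fin n) :
    0 < Bmat n C γ u' v' i j := Real.exp_pos _

private lemma rowS_pos (hn : 0 < n) (u' v' : Fin n → ℝ) (i : Fin n) :
    0 < rowS n C γ u' v' i :=
  Finset.sum_pos (fun j _ => Bmat_pos u' v' i j)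
    (by simpa [Finset.univ_nonempty_iff] using Fin.pos_iff_nonempty.mp hn)

private lemma colS_pos (hn : 0 < n) (u' v' : Fin n → ℝ) (j : Fin n) :
    0 < colS n C γ u' v' j :=
  Finset.sum_pos (fun i _ => Bmat_pos u' v' i j)
    (by simpa [Finset.univ_nonempty_iff] using Fin.pos_iff_nonempty.mp hn)

private lemma sum_rowS_eq_sum_colS (u' v' : Fin n → ℝ) :
    ∑ i, rowS n C γ u' v' i = ∑ j, colS n C γ u' v' j := by
  unfold rowS colS; exact Finset.sum_comm

private lemma stepEven (hn : 0 < n) (hppos : ∀ i, 0 < p i)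
    (heven : ∀ t : ℕ, t % 2 = 0 →
      u (t + 1) = (fun i => u t i + Real.log (p i)
          - Real.log (∑ j, Bmat n C γ (u t) (v t) i j)) ∧
      v (t + 1) = v t)
    (t : ℕ) (ht : t % 2 = 0) (i j : Fin n) :
    Bmat n C γ (u (t+1)) (v (t+1)) i j
      = Bmat n C γ (u t) (v t) i j * (p i / rowS n C γ (u t) (v t) i) := by
  obtain ⟨hu, hv⟩ := heven t ht
  rw [hu, hv]
  show Real.exp (u t i + Real.log (p i) - Real.log (∑ j, Bmat n C γ (u t) (v t) i j)
      + v t j - C i j / γ) = _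
  have hr : (0:ℝ) < rowS n C γ (u t) (v t) i := rowS_pos hn _ _ i
  have he : u t i + Real.log (p i) - Real.log (∑ j, Bmat n C γ (u t) (v t) i j)
      + v t j - C i j / γ
      = (u t i + v t j - C i j / γ)
        + (Real.log (p i) - Real.log (rowS n C γ (u t) (v t) i)) := by
    unfold rowS; ring
  rw [he, Real.exp_add]
  have h2 : Real.exp (Real.log (p i) - Real.log (rowS n C γ (u t) (v t) i))
      = p i / rowS n C γ (u t) (v t) i := by
    rw [Real.exp_sub, Real.exp_log (hppos i), Real.exp_log hr]
  rw [h2]; rfl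

private lemma stepOdd (hn : 0 < n) (hqpos : ∀ i, 0 < q i)
    (hodd : ∀ t : ℕ, t % 2 = 1 →
      u (t + 1) = u t ∧
      v (t + 1) = (fun j => v t j + Real.log (q j)
          - Real.log (∑ i, Bmat n C γ (u t) (v t) i j)))
    (t : ℕ) (ht : t % 2 = 1) (i j : Fin n) :
    Bmat n C γ (u (t+1)) (v (t+1)) i j
      = Bmat n C γ (u t) (v t) i j * (q j / colS n C γ (u t) (v t) j) := by
  obtain ⟨hu, hv⟩ := hodd t ht
  rw [hu, hv]
  show Real.exp (u t i + (v t j + Real.log (q j)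
      - Real.log (∑ i, Bmat n C γ (u t) (v t) i j)) - C i j / γ) = _
  have hr : (0:ℝ) < colS n C γ (u t) (v t) j := colS_pos hn _ _ j
  have he : u t i + (v t j + Real.log (q j)
      - Real.log (∑ i, Bmat n C γ (u t) (v t) i j)) - C i j / γ
      = (u t i + v t j - C i j / γ)
        + (Real.log (q j) - Real.log (colS n C γ (u t) (v t) j)) := by
    unfold colS; ring
  rw [he, Real.exp_add]
  have h2 : Real.exp (Real.log (q j) - Real.log (colS n C γ (u t) (v t) j))
      = q j / colS n C γ (u t) (v t) j := by
    rw [Real.exp_sub, Real.exp_log (hqpos j), Real.exp_log hr]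
  rw [h2]; rfl


private lemma rowS_after_even (hn : 0 < n) (hppos : ∀ i, 0 < p i)
    (heven : ∀ t : ℕ, t % 2 = 0 →
      u (t + 1) = (fun i => u t i + Real.log (p i)
          - Real.log (∑ j, Bmat n C γ (u t) (v t) i j)) ∧
      v (t + 1) = v t)
    (t : ℕ) (ht : t % 2 = 0) (i : Fin n) :
    rowS n C γ (u (t+1)) (v (t+1)) i = p i := by
  have hr : (0:ℝ) < rowS n C γ (u t) (v t) i := rowS_pos hn _ _ i
  calc rowS n C γ (u (t+1)) (v (t+1)) i
      = ∑ j, Bmat n C γ (u t) (v t) i j * (p i / rowS n C γ (u t) (v t) i) :=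
        Finset.sum_congr rfl fun j _ => stepEven hn hppos heven t ht i j
    _ = rowS n C γ (u t) (v t) i * (p i / rowS n C γ (u t) (v t) i) := by
        rw [← Finset.sum_mul]; rfl
    _ = p i := by rw [mul_comm, div_mul_cancel₀ _ hr.ne']

private lemma colS_after_odd (hn : 0 < n) (hqpos : ∀ i, 0 < q i)
    (hodd : ∀ t : ℕ, t % 2 = 1 →
      u (t + 1) = u t ∧
      v (t + 1) = (fun j => v t j + Real.log (q j)
          - Real.log (∑ i, Bmat n C γ (u t) (v t) i j)))
    (t : ℕ) (ht : t % 2 = 1) (j : Fin n) :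
    colS n C γ (u (t+1)) (v (t+1)) j = q j := by
  have hr : (0:ℝ) < colS n C γ (u t) (v t) j := colS_pos hn _ _ j
  calc colS n C γ (u (t+1)) (v (t+1)) j
      = ∑ i, Bmat n C γ (u t) (v t) i j * (q j / colS n C γ (u t) (v t) j) :=
        Finset.sum_congr rfl fun i _ => stepOdd hn hqpos hodd t ht i j
    _ = colS n C γ (u t) (v t) j * (q j / colS n C γ (u t) (v t) j) := by
        rw [← Finset.sum_mul]; rfl
    _ = q j := by rw [mul_comm, div_mul_cancel₀ _ hr.ne']

private lemma rowS_eq_p (hn : 0 < n) (hppos : ∀ i, 0 < p i)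
    (heven : ∀ t : ℕ, t % 2 = 0 →
      u (t + 1) = (fun i => u t i + Real.log (p i)
          - Real.log (∑ j, Bmat n C γ (u t) (v t) i j)) ∧
      v (t + 1) = v t)
    (t : ℕ) (ht : t % 2 = 1) (i : Fin n) :
    rowS n C γ (u t) (v t) i = p i := by
  cases t with
  | zero => simp at ht
  | succ s => exact rowS_after_even hn hppos heven s (by omega) i

private lemma colS_eq_q (hn : 0 < n) (hqpos : ∀ i, 0 < q i)
    (hodd : ∀ t : ℕ, t % 2 = 1 →
      u (t + 1) = u t ∧
      v (t + 1) = (fun j => v t j + Real.log (q j)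
          - Real.log (∑ i, Bmat n C γ (u t) (v t) i j)))
    (t : ℕ) (ht : t % 2 = 0) (ht1 : 1 ≤ t) (j : Fin n) :
    colS n C γ (u t) (v t) j = q j := by
  cases t with
  | zero => omega
  | succ s => exact colS_after_odd hn hqpos hodd s (by omega) j

private lemma mass_row (hn : 0 < n) (hppos : ∀ i, 0 < p i) (hqpos : ∀ i, 0 < q i)
    (hp1 : ∑ i, p i = 1) (hq1 : ∑ i, q i = 1)
    (heven : ∀ t : ℕ, t % 2 = 0 →
      u (t + 1) = (fun i => u t i + Real.log (p i)
          - Real.log (∑ j, Bmat n C γ (u t) (v t) i j)) ∧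
      v (t + 1) = v t)
    (hodd : ∀ t : ℕ, t % 2 = 1 →
      u (t + 1) = u t ∧
      v (t + 1) = (fun j => v t j + Real.log (q j)
          - Real.log (∑ i, Bmat n C γ (u t) (v t) i j)))
    (t : ℕ) (ht1 : 1 ≤ t) :
    ∑ i, rowS n C γ (u t) (v t) i = 1 := by
  rcases Nat.mod_two_eq_zero_or_one t with ht | ht
  · rw [sum_rowS_eq_sum_colS]
    calc ∑ j, colS n C γ (u t) (v t) j = ∑ j, q j :=
          Finset.sum_congr rfl fun j _ => colS_eq_q hn hqpos hodd t ht ht1 j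
      _ = 1 := hq1
  · calc ∑ i, rowS n C γ (u t) (v t) i = ∑ i, p i :=
          Finset.sum_congr rfl fun i _ => rowS_eq_p hn hppos heven t ht i
      _ = 1 := hp1

private lemma Phi_diff_even (hn : 0 < n) (hppos : ∀ i, 0 < p i)
    (hp1 : ∑ i, p i = 1)
    (heven : ∀ t : ℕ, t % 2 = 0 →
      u (t + 1) = (fun i => u t i + Real.log (p i)
          - Real.log (∑ j, Bmat n C γ (u t) (v t) i j)) ∧
      v (t + 1) = v t)
    (t : ℕ) (ht : t % 2 = 0)
    (hmass : ∑ i, rowS n C γ (u t) (v t) i = 1) :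
    Phi n C γ p q (u t) (v t) - Phi n C γ p q (u (t+1)) (v (t+1))
      = ∑ i, p i * Real.log (p i / rowS n C γ (u t) (v t) i) := by
  obtain ⟨hu, hv⟩ := heven t ht
  have hM1 : (∑ i, ∑ j, Bmat n C γ (u (t+1)) (v (t+1)) i j) = 1 := by
    calc (∑ i, ∑ j, Bmat n C γ (u (t+1)) (v (t+1)) i j)
        = ∑ i, p i := Finset.sum_congr rfl fun i _ => rowS_after_even hn hppos heven t ht i
      _ = 1 := hp1
  have hM0 : (∑ i, ∑ j, Bmat n C γ (u t) (v t) i j) = 1 := hmass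
  have hvq : (∑ j, v (t+1) j * q j) = ∑ j, v t j * q j := by rw [hv]
  have husplit : (∑ i, u (t+1) i * p i)
      = ∑ i, u t i * p i
        + ∑ i, (Real.log (p i) - Real.log (rowS n C γ (u t) (v t) i)) * p i := by
    rw [hu, ← Finset.sum_add_distrib]
    apply Finset.sum_congr rfl
    intro i _
    show (u t i + Real.log (p i) - Real.log (rowS n C γ (u t) (v t) i)) * p i = _
    ring
  have hlog : ∀ i, (Real.log (p i) - Real.log (rowS n C γ (u t) (v t) i)) * p i
      = p i * Real.log (p i / rowS n C γ (u t) (v t) i) := by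
    intro i
    rw [Real.log_div (hppos i).ne' (rowS_pos hn _ _ i).ne']
    ring
  unfold Phi
  rw [hM0, hM1, hvq, husplit]
  rw [Finset.sum_congr rfl fun i _ => hlog i]
  ring

private lemma Phi_diff_odd (hn : 0 < n) (hqpos : ∀ i, 0 < q i)
    (hq1 : ∑ i, q i = 1)
    (hodd : ∀ t : ℕ, t % 2 = 1 →
      u (t + 1) = u t ∧
      v (t + 1) = (fun j => v t j + Real.log (q j)
          - Real.log (∑ i, Bmat n C γ (u t) (v t) i j)))
    (t : ℕ) (ht : t % 2 = 1)
    (hmass : ∑ i, rowS n C γ (u t) (v t) i = 1) :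
    Phi n C γ p q (u t) (v t) - Phi n C γ p q (u (t+1)) (v (t+1))
      = ∑ j, q j * Real.log (q j / colS n C γ (u t) (v t) j) := by
  obtain ⟨hu, hv⟩ := hodd t ht
  have hM1 : (∑ i, ∑ j, Bmat n C γ (u (t+1)) (v (t+1)) i j) = 1 := by
    rw [show (∑ i, ∑ j, Bmat n C γ (u (t+1)) (v (t+1)) i j)
        = ∑ j, ∑ i, Bmat n C γ (u (t+1)) (v (t+1)) i j from Finset.sum_comm]
    calc (∑ j, ∑ i, Bmat n C γ (u (t+1)) (v (t+1)) i j)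
        = ∑ j, q j := Finset.sum_congr rfl fun j _ => colS_after_odd hn hqpos hodd t ht j
      _ = 1 := hq1
  have hM0 : (∑ i, ∑ j, Bmat n C γ (u t) (v t) i j) = 1 := hmass
  have hup : (∑ i, u (t+1) i * p i) = ∑ i, u t i * p i := by rw [hu]
  have hvsplit : (∑ j, v (t+1) j * q j)
      = ∑ j, v t j * q j
        + ∑ j, (Real.log (q j) - Real.log (colS n C γ (u t) (v t) j)) * q j := by
    rw [hv, ← Finset.sum_add_distrib]
    apply Finset.sum_congr rfl
    intro j _
    show (v t j + Real.log (q j) - Real.log (colS n C γ (u t) (v t) j)) * q j = _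
    ring
  have hlog : ∀ j, (Real.log (q j) - Real.log (colS n C γ (u t) (v t) j)) * q j
      = q j * Real.log (q j / colS n C γ (u t) (v t) j) := by
    intro j
    rw [Real.log_div (hqpos j).ne' (colS_pos hn _ _ j).ne']
    ring
  unfold Phi
  rw [hM0, hM1, hup, hvsplit]
  rw [Finset.sum_congr rfl fun j _ => hlog j]
  ring

private lemma Err_odd (hn : 0 < n) (hppos : ∀ i, 0 < p i)
    (heven : ∀ t : ℕ, t % 2 = 0 →
      u (t + 1) = (fun i => u t i + Real.log (p i)
          - Real.log (∑ j, Bmat n C γ (u t) (v t) i j)) ∧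
      v (t + 1) = v t)
    (t : ℕ) (ht : t % 2 = 1) :
    Err n C γ p q (u t) (v t) = ∑ j, |colS n C γ (u t) (v t) j - q j| := by
  unfold Err
  have h1 : ∀ i ∈ Finset.univ, |rowS n C γ (u t) (v t) i - p i| = 0 := fun i _ => by
    rw [rowS_eq_p hn hppos heven t ht i, sub_self, abs_zero]
  rw [Finset.sum_congr rfl h1]
  simp

private lemma Err_even (hn : 0 < n) (hqpos : ∀ i, 0 < q i)
    (hodd : ∀ t : ℕ, t % 2 = 1 →
      u (t + 1) = u t ∧
      v (t + 1) = (fun j => v t j + Real.log (q j)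
          - Real.log (∑ i, Bmat n C γ (u t) (v t) i j)))
    (t : ℕ) (ht : t % 2 = 0) (ht1 : 1 ≤ t) :
    Err n C γ p q (u t) (v t) = ∑ i, |rowS n C γ (u t) (v t) i - p i| := by
  unfold Err
  have h1 : ∀ j ∈ Finset.univ, |colS n C γ (u t) (v t) j - q j| = 0 := fun j _ => by
    rw [colS_eq_q hn hqpos hodd t ht ht1 j, sub_self, abs_zero]
  rw [Finset.sum_congr rfl h1]
  simp

private lemma Phi_step (hn : 0 < n) (hppos : ∀ i, 0 < p i) (hqpos : ∀ i, 0 < q i)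
    (hp1 : ∑ i, p i = 1) (hq1 : ∑ i, q i = 1)
    (heven : ∀ t : ℕ, t % 2 = 0 →
      u (t + 1) = (fun i => u t i + Real.log (p i)
          - Real.log (∑ j, Bmat n C γ (u t) (v t) i j)) ∧
      v (t + 1) = v t)
    (hodd : ∀ t : ℕ, t % 2 = 1 →
      u (t + 1) = u t ∧
      v (t + 1) = (fun j => v t j + Real.log (q j)
          - Real.log (∑ i, Bmat n C γ (u t) (v t) i j)))
    (t : ℕ) (ht1 : 1 ≤ t) :
    (Err n C γ p q (u t) (v t))^2 / 2
      ≤ Phi n C γ p q (u t) (v t) - Phi n C γ p q (u (t+1)) (v (t+1)) := by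
  have hmass := mass_row hn hppos hqpos hp1 hq1 heven hodd t ht1
  rcases Nat.mod_two_eq_zero_or_one t with ht | ht
  · -- even step: row update, Err t = ‖rowS - p‖₁
    rw [Phi_diff_even hn hppos hp1 heven t ht hmass]
    rw [Err_even hn hqpos hodd t ht ht1]
    have hpk := pinsker_half p (rowS n C γ (u t) (v t)) hppos
      (rowS_pos hn _ _) hp1 hmass
    have habs : (∑ i, |rowS n C γ (u t) (v t) i - p i|)
        = ∑ i, |p i - rowS n C γ (u t) (v t) i| :=
      Finset.sum_congr rfl fun i _ => abs_sub_comm _ _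
    rw [habs]
    linarith
  · -- odd step: column update, Err t = ‖colS - q‖₁
    rw [Phi_diff_odd hn hqpos hq1 hodd t ht hmass]
    rw [Err_odd hn hppos heven t ht]
    have hcmass : ∑ j, colS n C γ (u t) (v t) j = 1 := by
      rw [← sum_rowS_eq_sum_colS]; exact hmass
    have hpk := pinsker_half q (colS n C γ (u t) (v t)) hqpos
      (colS_pos hn _ _) hq1 hcmass
    have habs : (∑ j, |colS n C γ (u t) (v t) j - q j|)
        = ∑ j, |q j - colS n C γ (u t) (v t) j| :=
      Finset.sum_congr rfl fun j _ => abs_sub_comm _ _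
    rw [habs]
    linarith

private lemma Err_mono (hn : 0 < n) (hppos : ∀ i, 0 < p i) (hqpos : ∀ i, 0 < q i)
    (heven : ∀ t : ℕ, t % 2 = 0 →
      u (t + 1) = (fun i => u t i + Real.log (p i)
          - Real.log (∑ j, Bmat n C γ (u t) (v t) i j)) ∧
      v (t + 1) = v t)
    (hodd : ∀ t : ℕ, t % 2 = 1 →
      u (t + 1) = u t ∧
      v (t + 1) = (fun j => v t j + Real.log (q j)
          - Real.log (∑ i, Bmat n C γ (u t) (v t) i j)))
    (t : ℕ) (ht1 : 1 ≤ t) :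
    Err n C γ p q (u (t+1)) (v (t+1)) ≤ Err n C γ p q (u t) (v t) := by
  rcases Nat.mod_two_eq_zero_or_one t with ht | ht
  · -- even step: rows become p; new column error ≤ old row error
    have hE1 : Err n C γ p q (u (t+1)) (v (t+1))
        = ∑ j, |colS n C γ (u (t+1)) (v (t+1)) j - q j| :=
      Err_odd hn hppos heven (t+1) (by omega)
    have hE0 : Err n C γ p q (u t) (v t)
        = ∑ i, |rowS n C γ (u t) (v t) i - p i| :=
      Err_even hn hqpos hodd t ht ht1
    rw [hE1, hE0]
    have hq' : ∀ j, q j = colS n C γ (u t) (v t) j := fun j =>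
      (colS_eq_q hn hqpos hodd t ht ht1 j).symm
    have hkey : ∀ j, |colS n C γ (u (t+1)) (v (t+1)) j - q j|
        ≤ ∑ i, Bmat n C γ (u t) (v t) i j
            * (|p i - rowS n C γ (u t) (v t) i| / rowS n C γ (u t) (v t) i) := by
      intro j
      have hc : colS n C γ (u (t+1)) (v (t+1)) j - q j
          = ∑ i, Bmat n C γ (u t) (v t) i j
              * ((p i - rowS n C γ (u t) (v t) i) / rowS n C γ (u t) (v t) i) := by
        rw [hq' j]
        unfold colS
        rw [← Finset.sum_sub_distrib]
        apply Finset.sum_congr rfl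
        intro i _
        rw [stepEven hn hppos heven t ht i j]
        have hr := (rowS_pos (C := C) (γ := γ) hn (u t) (v t) i).ne'
        field_simp
      rw [hc]
      calc |∑ i, Bmat n C γ (u t) (v t) i j
              * ((p i - rowS n C γ (u t) (v t) i) / rowS n C γ (u t) (v t) i)|
          ≤ ∑ i, |Bmat n C γ (u t) (v t) i j
              * ((p i - rowS n C γ (u t) (v t) i) / rowS n C γ (u t) (v t) i)| :=
            Finset.abs_sum_le_sum_abs _ _
        _ = ∑ i, Bmat n C γ (u t) (v t) i j
              * (|p i - rowS n C γ (u t) (v t) i| / rowS n C γ (u t) (v t) i) := by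
            apply Finset.sum_congr rfl
            intro i _
            rw [abs_mul, abs_div, abs_of_pos (Bmat_pos _ _ i j),
              abs_of_pos (rowS_pos hn _ _ i)]
    calc (∑ j, |colS n C γ (u (t+1)) (v (t+1)) j - q j|)
        ≤ ∑ j, ∑ i, Bmat n C γ (u t) (v t) i j
            * (|p i - rowS n C γ (u t) (v t) i| / rowS n C γ (u t) (v t) i) :=
          Finset.sum_le_sum fun j _ => hkey j
      _ = ∑ i, (|p i - rowS n C γ (u t) (v t) i| / rowS n C γ (u t) (v t) i)
            * ∑ j, Bmat n C γ (u t) (v t) i j := by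
          rw [Finset.sum_comm]
          apply Finset.sum_congr rfl
          intro i _
          rw [Finset.mul_sum]
          exact Finset.sum_congr rfl fun j _ => by ring
      _ = ∑ i, |rowS n C γ (u t) (v t) i - p i| := by
          apply Finset.sum_congr rfl
          intro i _
          have hr := (rowS_pos (C := C) (γ := γ) hn (u t) (v t) i).ne'
          rw [abs_sub_comm]
          have hrw : (∑ j, Bmat n C γ (u t) (v t) i j) = rowS n C γ (u t) (v t) i := rfl
          rw [hrw, div_mul_cancel₀ _ hr]
  · -- odd step: columns become q; new row error ≤ old column error
    have hE1 : Err n C γ p q (u (t+1)) (v (t+1))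
        = ∑ i, |rowS n C γ (u (t+1)) (v (t+1)) i - p i| :=
      Err_even hn hqpos hodd (t+1) (by omega) (by omega)
    have hE0 : Err n C γ p q (u t) (v t)
        = ∑ j, |colS n C γ (u t) (v t) j - q j| :=
      Err_odd hn hppos heven t ht
    rw [hE1, hE0]
    have hp' : ∀ i, p i = rowS n C γ (u t) (v t) i := fun i =>
      (rowS_eq_p hn hppos heven t ht i).symm
    have hkey : ∀ i, |rowS n C γ (u (t+1)) (v (t+1)) i - p i|
        ≤ ∑ j, Bmat n C γ (u t) (v t) i j
            * (|q j - colS n C γ (u t) (v t) j| / colS n C γ (u t) (v t) j) := by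
      intro i
      have hc : rowS n C γ (u (t+1)) (v (t+1)) i - p i
          = ∑ j, Bmat n C γ (u t) (v t) i j
              * ((q j - colS n C γ (u t) (v t) j) / colS n C γ (u t) (v t) j) := by
        rw [hp' i]
        unfold rowS
        rw [← Finset.sum_sub_distrib]
        apply Finset.sum_congr rfl
        intro j _
        rw [stepOdd hn hqpos hodd t ht i j]
        have hr := (colS_pos (C := C) (γ := γ) hn (u t) (v t) j).ne'
        field_simp
      rw [hc]
      calc |∑ j, Bmat n C γ (u t) (v t) i j
              * ((q j - colS n C γ (u t) (v t) j) / colS n C γ (u t) (v t) j)|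
          ≤ ∑ j, |Bmat n C γ (u t) (v t) i j
              * ((q j - colS n C γ (u t) (v t) j) / colS n C γ (u t) (v t) j)| :=
            Finset.abs_sum_le_sum_abs _ _
        _ = ∑ j, Bmat n C γ (u t) (v t) i j
              * (|q j - colS n C γ (u t) (v t) j| / colS n C γ (u t) (v t) j) := by
            apply Finset.sum_congr rfl
            intro j _
            rw [abs_mul, abs_div, abs_of_pos (Bmat_pos _ _ i j),
              abs_of_pos (colS_pos hn _ _ j)]
    calc (∑ i, |rowS n C γ (u (t+1)) (v (t+1)) i - p i|)
        ≤ ∑ i, ∑ j, Bmat n C γ (u t) (v t) i j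
            * (|q j - colS n C γ (u t) (v t) j| / colS n C γ (u t) (v t) j) :=
          Finset.sum_le_sum fun i _ => hkey i
      _ = ∑ j, (|q j - colS n C γ (u t) (v t) j| / colS n C γ (u t) (v t) j)
            * ∑ i, Bmat n C γ (u t) (v t) i j := by
          rw [Finset.sum_comm]
          apply Finset.sum_congr rfl
          intro j _
          rw [Finset.mul_sum]
          exact Finset.sum_congr rfl fun i _ => by ring
      _ = ∑ j, |colS n C γ (u t) (v t) j - q j| := by
          apply Finset.sum_congr rfl
          intro j _
          have hr := (colS_pos (C := C) (γ := γ) hn (u t) (v t) j).ne'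
          rw [abs_sub_comm]
          have hrw : (∑ i, Bmat n C γ (u t) (v t) i j) = colS n C γ (u t) (v t) j := rfl
          rw [hrw, div_mul_cancel₀ _ hr]

private lemma Err_le_two (hn : 0 < n) (hppos : ∀ i, 0 < p i) (hqpos : ∀ i, 0 < q i)
    (hp1 : ∑ i, p i = 1) (hq1 : ∑ i, q i = 1)
    (heven : ∀ t : ℕ, t % 2 = 0 →
      u (t + 1) = (fun i => u t i + Real.log (p i)
          - Real.log (∑ j, Bmat n C γ (u t) (v t) i j)) ∧
      v (t + 1) = v t)
    (hodd : ∀ t : ℕ, t % 2 = 1 →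
      u (t + 1) = u t ∧
      v (t + 1) = (fun j => v t j + Real.log (q j)
          - Real.log (∑ i, Bmat n C γ (u t) (v t) i j)))
    (t : ℕ) (ht1 : 1 ≤ t) :
    Err n C γ p q (u t) (v t) ≤ 2 := by
  have hmass := mass_row hn hppos hqpos hp1 hq1 heven hodd t ht1
  rcases Nat.mod_two_eq_zero_or_one t with ht | ht
  · rw [Err_even hn hqpos hodd t ht ht1]
    calc (∑ i, |rowS n C γ (u t) (v t) i - p i|)
        ≤ ∑ i, (rowS n C γ (u t) (v t) i + p i) := by
          apply Finset.sum_le_sum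
          intro i _
          have h1 := (rowS_pos (C := C) (γ := γ) hn (u t) (v t) i).le
          have h2 := (hppos i).le
          rw [abs_sub_le_iff]; constructor <;> linarith
      _ = 2 := by rw [Finset.sum_add_distrib, hmass, hp1]; norm_num
  · rw [Err_odd hn hppos heven t ht]
    have hcmass : ∑ j, colS n C γ (u t) (v t) j = 1 := by
      rw [← sum_rowS_eq_sum_colS]; exact hmass
    calc (∑ j, |colS n C γ (u t) (v t) j - q j|)
        ≤ ∑ j, (colS n C γ (u t) (v t) j + q j) := by
          apply Finset.sum_le_sum
          intro j _
          have h1 := (colS_pos (C := C) (γ := γ) hn (u t) (v t) j).le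
          have h2 := (hqpos j).le
          rw [abs_sub_le_iff]; constructor <;> linarith
      _ = 2 := by rw [Finset.sum_add_distrib, hcmass, hq1]; norm_num

private lemma osc_update_u (hn : 0 < n) (hγ : 0 < γ) (hC : ∀ i j, 0 ≤ C i j)
    (hppos : ∀ i, 0 < p i) (hqpos : ∀ i, 0 < q i) (hp1 : ∑ i, p i = 1)
    (heven : ∀ t : ℕ, t % 2 = 0 →
      u (t + 1) = (fun i => u t i + Real.log (p i)
          - Real.log (∑ j, Bmat n C γ (u t) (v t) i j)) ∧
      v (t + 1) = v t)
    (R : ℝ)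
    (hR : R = sSup (Set.range fun ij : Fin n × Fin n => C ij.1 ij.2) / γ
        - Real.log (min (sInf (Set.range p)) (sInf (Set.range q))))
    (t : ℕ) (ht : t % 2 = 0) (i k : Fin n) :
    u (t+1) i - u (t+1) k ≤ R := by
  haveI : Nonempty (Fin n) := Fin.pos_iff_nonempty.mp hn
  have hne : (Finset.univ : Finset (Fin n)).Nonempty := Finset.univ_nonempty
  obtain ⟨hu, -⟩ := heven t ht
  set S : Fin n → ℝ := fun i' => ∑ j, Real.exp (v t j - C i' j / γ) with hSdef
  have hS : ∀ i', 0 < S i' := fun i' =>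
    Finset.sum_pos (fun j _ => Real.exp_pos _) hne
  have hrow : ∀ i', (∑ j, Bmat n C γ (u t) (v t) i' j)
      = Real.exp (u t i') * S i' := by
    intro i'
    rw [hSdef, Finset.mul_sum]
    apply Finset.sum_congr rfl
    intro j _
    show Real.exp (u t i' + v t j - C i' j / γ) = _
    rw [← Real.exp_add]
    congr 1
    ring
  have hui : ∀ i', u (t+1) i' = Real.log (p i') - Real.log (S i') := by
    intro i'
    rw [hu]
    show u t i' + Real.log (p i') - Real.log (∑ j, Bmat n C γ (u t) (v t) i' j) = _
    rw [hrow i', Real.log_mul (Real.exp_ne_zero _) (hS i').ne', Real.log_exp]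
    ring
  -- bounds on log p terms
  have hp_le_one : ∀ i', p i' ≤ 1 := by
    intro i'
    rw [← hp1]
    exact Finset.single_le_sum (fun i _ => (hppos i).le) (Finset.mem_univ i')
  have hlogpi : Real.log (p i) ≤ 0 := Real.log_nonpos (hppos i).le (hp_le_one i)
  set μ := min (sInf (Set.range p)) (sInf (Set.range q)) with hμdef
  have hμ_le : μ ≤ p k :=
    le_trans (min_le_left _ _)
      (csInf_le (Set.Finite.bddBelow (Set.finite_range p)) ⟨k, rfl⟩)
  have hμpos : 0 < μ := by
    obtain ⟨i0, hi0⟩ := Set.Nonempty.csInf_mem (Set.range_nonempty p) (Set.finite_range p)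
    obtain ⟨j0, hj0⟩ := Set.Nonempty.csInf_mem (Set.range_nonempty q) (Set.finite_range q)
    apply lt_min
    · rw [← hi0]; exact hppos i0
    · rw [← hj0]; exact hqpos j0
  have hlogμ : Real.log μ ≤ Real.log (p k) := Real.log_le_log hμpos hμ_le
  -- bounds on log S terms
  set K := sSup (Set.range fun ij : Fin n × Fin n => C ij.1 ij.2) with hKdef
  have hKle : ∀ i' j', C i' j' ≤ K := fun i' j' =>
    le_csSup (Set.Finite.bddAbove (Set.finite_range _)) ⟨(i', j'), rfl⟩
  set T : ℝ := ∑ j, Real.exp (v t j) with hTdef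
  have hT : 0 < T := Finset.sum_pos (fun j _ => Real.exp_pos _) hne
  have hSk_le : S k ≤ T := by
    apply Finset.sum_le_sum
    intro j _
    apply Real.exp_le_exp.mpr
    have := div_nonneg (hC k j) hγ.le
    linarith
  have hSi_ge : Real.exp (-(K/γ)) * T ≤ S i := by
    rw [hTdef, Finset.mul_sum]
    apply Finset.sum_le_sum
    intro j _
    rw [← Real.exp_add]
    apply Real.exp_le_exp.mpr
    have hd : C i j / γ ≤ K / γ := by gcongr; exact hKle i j
    linarith
  have hlogSk : Real.log (S k) ≤ Real.log T := Real.log_le_log (hS k) hSk_le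
  have hlogSi : -(K/γ) + Real.log T ≤ Real.log (S i) := by
    have h := Real.log_le_log (mul_pos (Real.exp_pos _) hT) hSi_ge
    rwa [Real.log_mul (Real.exp_ne_zero _) hT.ne', Real.log_exp] at h
  rw [hui i, hui k, hR]
  linarith

private lemma osc_update_v (hn : 0 < n) (hγ : 0 < γ) (hC : ∀ i j, 0 ≤ C i j)
    (hppos : ∀ i, 0 < p i) (hqpos : ∀ i, 0 < q i) (hq1 : ∑ i, q i = 1)
    (hodd : ∀ t : ℕ, t % 2 = 1 →
      u (t + 1) = u t ∧
      v (t + 1) = (fun j => v t j + Real.log (q j)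
          - Real.log (∑ i, Bmat n C γ (u t) (v t) i j)))
    (R : ℝ)
    (hR : R = sSup (Set.range fun ij : Fin n × Fin n => C ij.1 ij.2) / γ
        - Real.log (min (sInf (Set.range p)) (sInf (Set.range q))))
    (t : ℕ) (ht : t % 2 = 1) (i k : Fin n) :
    v (t+1) i - v (t+1) k ≤ R := by
  haveI : Nonempty (Fin n) := Fin.pos_iff_nonempty.mp hn
  have hne : (Finset.univ : Finset (Fin n)).Nonempty := Finset.univ_nonempty
  obtain ⟨-, hv⟩ := hodd t ht
  set S : Fin n → ℝ := fun j' => ∑ i', Real.exp (u t i' - C i' j' / γ) with hSdef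
  have hS : ∀ j', 0 < S j' := fun j' =>
    Finset.sum_pos (fun i' _ => Real.exp_pos _) hne
  have hcol : ∀ j', (∑ i', Bmat n C γ (u t) (v t) i' j')
      = Real.exp (v t j') * S j' := by
    intro j'
    rw [hSdef, Finset.mul_sum]
    apply Finset.sum_congr rfl
    intro i' _
    show Real.exp (u t i' + v t j' - C i' j' / γ) = _
    rw [← Real.exp_add]
    congr 1
    ring
  have hvj : ∀ j', v (t+1) j' = Real.log (q j') - Real.log (S j') := by
    intro j'
    rw [hv]
    show v t j' + Real.log (q j') - Real.log (∑ i', Bmat n C γ (u t) (v t) i' j') = _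
    rw [hcol j', Real.log_mul (Real.exp_ne_zero _) (hS j').ne', Real.log_exp]
    ring
  have hq_le_one : ∀ j', q j' ≤ 1 := by
    intro j'
    rw [← hq1]
    exact Finset.single_le_sum (fun i _ => (hqpos i).le) (Finset.mem_univ j')
  have hlogqi : Real.log (q i) ≤ 0 := Real.log_nonpos (hqpos i).le (hq_le_one i)
  set μ := min (sInf (Set.range p)) (sInf (Set.range q)) with hμdef
  have hμ_le : μ ≤ q k :=
    le_trans (min_le_right _ _)
      (csInf_le (Set.Finite.bddBelow (Set.finite_range q)) ⟨k, rfl⟩)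
  have hμpos : 0 < μ := by
    obtain ⟨i0, hi0⟩ := Set.Nonempty.csInf_mem (Set.range_nonempty p) (Set.finite_range p)
    obtain ⟨j0, hj0⟩ := Set.Nonempty.csInf_mem (Set.range_nonempty q) (Set.finite_range q)
    apply lt_min
    · rw [← hi0]; exact hppos i0
    · rw [← hj0]; exact hqpos j0
  have hlogμ : Real.log μ ≤ Real.log (q k) := Real.log_le_log hμpos hμ_le
  set K := sSup (Set.range fun ij : Fin n × Fin n => C ij.1 ij.2) with hKdef
  have hKle : ∀ i' j', C i' j' ≤ K := fun i' j' =>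
    le_csSup (Set.Finite.bddAbove (Set.finite_range _)) ⟨(i', j'), rfl⟩
  set T : ℝ := ∑ i', Real.exp (u t i') with hTdef
  have hT : 0 < T := Finset.sum_pos (fun i' _ => Real.exp_pos _) hne
  have hSk_le : S k ≤ T := by
    apply Finset.sum_le_sum
    intro i' _
    apply Real.exp_le_exp.mpr
    have := div_nonneg (hC i' k) hγ.le
    linarith
  have hSi_ge : Real.exp (-(K/γ)) * T ≤ S i := by
    rw [hTdef, Finset.mul_sum]
    apply Finset.sum_le_sum
    intro i' _
    rw [← Real.exp_add]
    apply Real.exp_le_exp.mpr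
    have hd : C i' i / γ ≤ K / γ := by gcongr; exact hKle i' i
    linarith
  have hlogSk : Real.log (S k) ≤ Real.log T := Real.log_le_log (hS k) hSk_le
  have hlogSi : -(K/γ) + Real.log T ≤ Real.log (S i) := by
    have h := Real.log_le_log (mul_pos (Real.exp_pos _) hT) hSi_ge
    rwa [Real.log_mul (Real.exp_ne_zero _) hT.ne', Real.log_exp] at h
  rw [hvj i, hvj k, hR]
  linarith

private lemma osc_u_all (hn : 0 < n) (hγ : 0 < γ) (hC : ∀ i j, 0 ≤ C i j)
    (hppos : ∀ i, 0 < p i) (hqpos : ∀ i, 0 < q i) (hp1 : ∑ i, p i = 1)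
    (heven : ∀ t : ℕ, t % 2 = 0 →
      u (t + 1) = (fun i => u t i + Real.log (p i)
          - Real.log (∑ j, Bmat n C γ (u t) (v t) i j)) ∧
      v (t + 1) = v t)
    (hodd : ∀ t : ℕ, t % 2 = 1 →
      u (t + 1) = u t ∧
      v (t + 1) = (fun j => v t j + Real.log (q j)
          - Real.log (∑ i, Bmat n C γ (u t) (v t) i j)))
    (R : ℝ)
    (hR : R = sSup (Set.range fun ij : Fin n × Fin n => C ij.1 ij.2) / γ
        - Real.log (min (sInf (Set.range p)) (sInf (Set.range q))))
    (τ : ℕ) (hτ : 1 ≤ τ) (i k : Fin n) :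
    u τ i - u τ k ≤ R := by
  rcases Nat.mod_two_eq_zero_or_one τ with h | h
  · cases τ with
    | zero => omega
    | succ s =>
      have hs : s % 2 = 1 := by omega
      rw [(hodd s hs).1]
      cases s with
      | zero => omega
      | succ r =>
        exact osc_update_u hn hγ hC hppos hqpos hp1 heven R hR r (by omega) i k
  · cases τ with
    | zero => omega
    | succ s =>
      exact osc_update_u hn hγ hC hppos hqpos hp1 heven R hR s (by omega) i k

private lemma osc_v_all (hn : 0 < n) (hγ : 0 < γ) (hC : ∀ i j, 0 ≤ C i j)
    (hppos : ∀ i, 0 < p i) (hqpos : ∀ i, 0 < q i) (hq1 : ∑ i, q i = 1)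
    (heven : ∀ t : ℕ, t % 2 = 0 →
      u (t + 1) = (fun i => u t i + Real.log (p i)
          - Real.log (∑ j, Bmat n C γ (u t) (v t) i j)) ∧
      v (t + 1) = v t)
    (hodd : ∀ t : ℕ, t % 2 = 1 →
      u (t + 1) = u t ∧
      v (t + 1) = (fun j => v t j + Real.log (q j)
          - Real.log (∑ i, Bmat n C γ (u t) (v t) i j)))
    (R : ℝ)
    (hR : R = sSup (Set.range fun ij : Fin n × Fin n => C ij.1 ij.2) / γ
        - Real.log (min (sInf (Set.range p)) (sInf (Set.range q))))
    (τ : ℕ) (hτ : 2 ≤ τ) (i k : Fin n) :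
    v τ i - v τ k ≤ R := by
  rcases Nat.mod_two_eq_zero_or_one τ with h | h
  · cases τ with
    | zero => omega
    | succ s =>
      exact osc_update_v hn hγ hC hppos hqpos hq1 hodd R hR s (by omega) i k
  · cases τ with
    | zero => omega
    | succ s =>
      have hs : s % 2 = 0 := by omega
      rw [(heven s hs).2]
      cases s with
      | zero => omega
      | succ r =>
        exact osc_update_v hn hγ hC hppos hqpos hq1 hodd R hR r (by omega) i k

private lemma Phi_gap_le (hn : 0 < n) (hγ : 0 < γ) (hC : ∀ i j, 0 ≤ C i j)
    (hppos : ∀ i, 0 < p i) (hqpos : ∀ i, 0 < q i)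
    (hp1 : ∑ i, p i = 1) (hq1 : ∑ i, q i = 1)
    (heven : ∀ t : ℕ, t % 2 = 0 →
      u (t + 1) = (fun i => u t i + Real.log (p i)
          - Real.log (∑ j, Bmat n C γ (u t) (v t) i j)) ∧
      v (t + 1) = v t)
    (hodd : ∀ t : ℕ, t % 2 = 1 →
      u (t + 1) = u t ∧
      v (t + 1) = (fun j => v t j + Real.log (q j)
          - Real.log (∑ i, Bmat n C γ (u t) (v t) i j)))
    (R : ℝ)
    (hR : R = sSup (Set.range fun ij : Fin n × Fin n => C ij.1 ij.2) / γ
        - Real.log (min (sInf (Set.range p)) (sInf (Set.range q))))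
    (s t : ℕ) (hs : 2 ≤ s) (htt : 2 ≤ t) :
    Phi n C γ p q (u s) (v s) - Phi n C γ p q (u t) (v t)
      ≤ R * Err n C γ p q (u s) (v s) := by
  -- convexity of exp, entrywise
  have h1 : ∀ i j, Bmat n C γ (u s) (v s) i j - Bmat n C γ (u t) (v t) i j
      ≤ Bmat n C γ (u s) (v s) i j * ((u s i - u t i) + (v s j - v t j)) := by
    intro i j
    have h := exp_sub_exp_le (u s i + v s j - C i j / γ) (u t i + v t j - C i j / γ)
    have he : u s i + v s j - C i j / γ - (u t i + v t j - C i j / γ)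
        = (u s i - u t i) + (v s j - v t j) := by ring
    rw [he] at h
    exact h
  -- summed convexity
  have hconv : (∑ i, ∑ j, Bmat n C γ (u s) (v s) i j)
        - (∑ i, ∑ j, Bmat n C γ (u t) (v t) i j)
      ≤ (∑ i, (u s i - u t i) * rowS n C γ (u s) (v s) i)
        + (∑ j, (v s j - v t j) * colS n C γ (u s) (v s) j) := by
    have h2 : (∑ i, ∑ j, Bmat n C γ (u s) (v s) i j)
          - (∑ i, ∑ j, Bmat n C γ (u t) (v t) i j)
        = ∑ i, ∑ j, (Bmat n C γ (u s) (v s) i j - Bmat n C γ (u t) (v t) i j) := by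
      rw [← Finset.sum_sub_distrib]
      apply Finset.sum_congr rfl
      intro i _
      rw [← Finset.sum_sub_distrib]
    rw [h2]
    have h3 : ∀ i, ∑ j, (Bmat n C γ (u s) (v s) i j - Bmat n C γ (u t) (v t) i j)
        ≤ ∑ j, Bmat n C γ (u s) (v s) i j * ((u s i - u t i) + (v s j - v t j)) :=
      fun i => Finset.sum_le_sum fun j _ => h1 i j
    calc (∑ i, ∑ j, (Bmat n C γ (u s) (v s) i j - Bmat n C γ (u t) (v t) i j))
        ≤ ∑ i, ∑ j, Bmat n C γ (u s) (v s) i j * ((u s i - u t i) + (v s j - v t j)) :=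
          Finset.sum_le_sum fun i _ => h3 i
      _ = (∑ i, (u s i - u t i) * rowS n C γ (u s) (v s) i)
          + (∑ j, (v s j - v t j) * colS n C γ (u s) (v s) j) := by
        have h4 : ∀ i, (∑ j, Bmat n C γ (u s) (v s) i j * ((u s i - u t i) + (v s j - v t j)))
            = (u s i - u t i) * rowS n C γ (u s) (v s) i
              + ∑ j, (v s j - v t j) * Bmat n C γ (u s) (v s) i j := by
          intro i
          unfold rowS
          rw [Finset.mul_sum, ← Finset.sum_add_distrib]
          apply Finset.sum_congr rfl
          intro j _
          show Bmat n C γ (u s) (v s) i j * ((u s i - u t i) + (v s j - v t j)) = _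
          ring
        rw [Finset.sum_congr rfl fun i _ => h4 i, Finset.sum_add_distrib]
        congr 1
        rw [Finset.sum_comm]
        apply Finset.sum_congr rfl
        intro j _
        unfold colS
        rw [Finset.mul_sum]
  -- mass facts
  have hmassS : ∑ i, rowS n C γ (u s) (v s) i = 1 :=
    mass_row hn hppos hqpos hp1 hq1 heven hodd s (by omega)
  have hmassScol : ∑ j, colS n C γ (u s) (v s) j = 1 := by
    rw [← sum_rowS_eq_sum_colS]; exact hmassS
  -- zero-sum dot bounds
  have hdot1 : ∑ i, (rowS n C γ (u s) (v s) i - p i) * (u s i - u t i)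
      ≤ R * ∑ i, |rowS n C γ (u s) (v s) i - p i| := by
    apply dot_le_of_sum_zero hn
    · rw [Finset.sum_sub_distrib, hmassS, hp1]; ring
    · intro i k
      have o1 := osc_u_all hn hγ hC hppos hqpos hp1 heven hodd R hR s (by omega) i k
      have o2 := osc_u_all hn hγ hC hppos hqpos hp1 heven hodd R hR t (by omega) k i
      linarith
  have hdot2 : ∑ j, (colS n C γ (u s) (v s) j - q j) * (v s j - v t j)
      ≤ R * ∑ j, |colS n C γ (u s) (v s) j - q j| := by
    apply dot_le_of_sum_zero hn
    · rw [Finset.sum_sub_distrib, hmassScol, hq1]; ring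
    · intro i k
      have o1 := osc_v_all hn hγ hC hppos hqpos hq1 heven hodd R hR s hs i k
      have o2 := osc_v_all hn hγ hC hppos hqpos hq1 heven hodd R hR t htt k i
      linarith
  -- assemble
  have e1 : ∑ i, (rowS n C γ (u s) (v s) i - p i) * (u s i - u t i)
      = (∑ i, (u s i - u t i) * rowS n C γ (u s) (v s) i)
        - ((∑ i, u s i * p i) - (∑ i, u t i * p i)) := by
    rw [← Finset.sum_sub_distrib, ← Finset.sum_sub_distrib]
    apply Finset.sum_congr rfl
    intro i _
    ring
  have e2 : ∑ j, (colS n C γ (u s) (v s) j - q j) * (v s j - v t j)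
      = (∑ j, (v s j - v t j) * colS n C γ (u s) (v s) j)
        - ((∑ j, v s j * q j) - (∑ j, v t j * q j)) := by
    rw [← Finset.sum_sub_distrib, ← Finset.sum_sub_distrib]
    apply Finset.sum_congr rfl
    intro j _
    ring
  unfold Phi Err
  rw [mul_add] at *
  linarith [hdot1, hdot2, hconv, e1, e2]

private lemma Err_nonneg (u' v' : Fin n → ℝ) : 0 ≤ Err n C γ p q u' v' := by
  unfold Err
  have h1 : (0:ℝ) ≤ ∑ i, |rowS n C γ u' v' i - p i| :=
    Finset.sum_nonneg fun i _ => abs_nonneg _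
  have h2 : (0:ℝ) ≤ ∑ j, |colS n C γ u' v' j - q j| :=
    Finset.sum_nonneg fun j _ => abs_nonneg _
  linarith

private lemma R_ge_half (hn : 2 ≤ n) (hγ : 0 < γ) (hC : ∀ i j, 0 ≤ C i j)
    (hppos : ∀ i, 0 < p i) (hqpos : ∀ i, 0 < q i) (hp1 : ∑ i, p i = 1)
    (R : ℝ)
    (hR : R = sSup (Set.range fun ij : Fin n × Fin n => C ij.1 ij.2) / γ
        - Real.log (min (sInf (Set.range p)) (sInf (Set.range q)))) :
    1/2 ≤ R := by
  haveI : Nonempty (Fin n) := Fin.pos_iff_nonempty.mp (by omega)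
  set K := sSup (Set.range fun ij : Fin n × Fin n => C ij.1 ij.2) with hKdef
  have i0 : Fin n := ⟨0, by omega⟩
  have hK0 : 0 ≤ K :=
    le_trans (hC i0 i0) (le_csSup (Set.Finite.bddAbove (Set.finite_range _)) ⟨(i0, i0), rfl⟩)
  have hKγ : 0 ≤ K / γ := div_nonneg hK0 hγ.le
  -- some p i ≤ 1/2
  have hex : ∃ i, p i ≤ 1/2 := by
    by_contra hcon
    push_neg at hcon
    set a : Fin n := ⟨0, by omega⟩
    set b : Fin n := ⟨1, by omega⟩
    have hab : a ≠ b := by simp [a, b, Fin.ext_iff]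
    have hsum : p a + p b ≤ ∑ i, p i := by
      have := Finset.add_sum_erase Finset.univ p (Finset.mem_univ a)
      rw [← this]
      have hb : b ∈ Finset.univ.erase a := Finset.mem_erase.mpr ⟨hab.symm, Finset.mem_univ b⟩
      have := Finset.add_sum_erase (Finset.univ.erase a) p hb
      rw [← this]
      have : (0:ℝ) ≤ ∑ i ∈ (Finset.univ.erase a).erase b, p i :=
        Finset.sum_nonneg fun i _ => (hppos i).le
      linarith
    rw [hp1] at hsum
    have ha := hcon a
    have hb := hcon b
    linarith
  obtain ⟨m, hm⟩ := hex
  set μ := min (sInf (Set.range p)) (sInf (Set.range q)) with hμdef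
  have hμ_le : μ ≤ p m :=
    le_trans (min_le_left _ _)
      (csInf_le (Set.Finite.bddBelow (Set.finite_range p)) ⟨m, rfl⟩)
  have hμpos : 0 < μ := by
    obtain ⟨a0, ha0⟩ := Set.Nonempty.csInf_mem (Set.range_nonempty p) (Set.finite_range p)
    obtain ⟨b0, hb0⟩ := Set.Nonempty.csInf_mem (Set.range_nonempty q) (Set.finite_range q)
    apply lt_min
    · rw [← ha0]; exact hppos a0
    · rw [← hb0]; exact hqpos b0
  have hlog : Real.log μ ≤ Real.log (1/2) := Real.log_le_log hμpos (le_trans hμ_le hm)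
  have hhalf : Real.log (1/2) = - Real.log 2 := by
    rw [one_div, Real.log_inv]
  have h2 := Real.log_two_gt_d9
  rw [hhalf] at hlog
  rw [hR]
  linarith

private lemma Phi_anti (hn : 0 < n) (hppos : ∀ i, 0 < p i) (hqpos : ∀ i, 0 < q i)
    (hp1 : ∑ i, p i = 1) (hq1 : ∑ i, q i = 1)
    (heven : ∀ t : ℕ, t % 2 = 0 →
      u (t + 1) = (fun i => u t i + Real.log (p i)
          - Real.log (∑ j, Bmat n C γ (u t) (v t) i j)) ∧
      v (t + 1) = v t)
    (hodd : ∀ t : ℕ, t % 2 = 1 →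
      u (t + 1) = u t ∧
      v (t + 1) = (fun j => v t j + Real.log (q j)
          - Real.log (∑ i, Bmat n C γ (u t) (v t) i j)))
    (a : ℕ) (ha : 1 ≤ a) : ∀ b, a ≤ b →
    Phi n C γ p q (u b) (v b) ≤ Phi n C γ p q (u a) (v a) := by
  intro b hb
  induction b, hb using Nat.le_induction with
  | base => exact le_refl _
  | succ b hab ih =>
    have hstep := Phi_step hn hppos hqpos hp1 hq1 heven hodd b (by omega)
    have hE := sq_nonneg (Err n C γ p q (u b) (v b))
    linarith

private lemma Err_anti (hn : 0 < n) (hppos : ∀ i, 0 < p i) (hqpos : ∀ i, 0 < q i)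
    (heven : ∀ t : ℕ, t % 2 = 0 →
      u (t + 1) = (fun i => u t i + Real.log (p i)
          - Real.log (∑ j, Bmat n C γ (u t) (v t) i j)) ∧
      v (t + 1) = v t)
    (hodd : ∀ t : ℕ, t % 2 = 1 →
      u (t + 1) = u t ∧
      v (t + 1) = (fun j => v t j + Real.log (q j)
          - Real.log (∑ i, Bmat n C γ (u t) (v t) i j)))
    (a : ℕ) (ha : 1 ≤ a) : ∀ b, a ≤ b →
    Err n C γ p q (u b) (v b) ≤ Err n C γ p q (u a) (v a) := by
  intro b hb
  induction b, hb using Nat.le_induction with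
  | base => exact le_refl _
  | succ b hab ih =>
    have hstep := Err_mono hn hppos hqpos heven hodd b (by omega)
    linarith

private lemma delta_rec (hn : 0 < n) (hγ : 0 < γ) (hC : ∀ i j, 0 ≤ C i j)
    (hppos : ∀ i, 0 < p i) (hqpos : ∀ i, 0 < q i)
    (hp1 : ∑ i, p i = 1) (hq1 : ∑ i, q i = 1)
    (heven : ∀ t : ℕ, t % 2 = 0 →
      u (t + 1) = (fun i => u t i + Real.log (p i)
          - Real.log (∑ j, Bmat n C γ (u t) (v t) i j)) ∧
      v (t + 1) = v t)
    (hodd : ∀ t : ℕ, t % 2 = 1 →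
      u (t + 1) = u t ∧
      v (t + 1) = (fun j => v t j + Real.log (q j)
          - Real.log (∑ i, Bmat n C γ (u t) (v t) i j)))
    (R : ℝ)
    (hR : R = sSup (Set.range fun ij : Fin n × Fin n => C ij.1 ij.2) / γ
        - Real.log (min (sInf (Set.range p)) (sInf (Set.range q))))
    (hRpos : 0 < R)
    (t : ℕ) (ht : 2 ≤ t) : ∀ s, 2 ≤ s → s ≤ t →
    (Phi n C γ p q (u s) (v s) - Phi n C γ p q (u t) (v t)) * ((s:ℝ) - 2 + R)
      ≤ 2 * R^2 := by
  intro s hs2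
  induction s, hs2 using Nat.le_induction with
  | base =>
    intro _
    have hgap := Phi_gap_le hn hγ hC hppos hqpos hp1 hq1 heven hodd R hR 2 t (le_refl 2) ht
    have hE2 := Err_le_two hn hppos hqpos hp1 hq1 heven hodd 2 (by omega)
    have h1 : Phi n C γ p q (u 2) (v 2) - Phi n C γ p q (u t) (v t) ≤ 2 * R := by
      nlinarith
    have h2 : ((2:ℕ):ℝ) - 2 + R = R := by push_cast; ring
    rw [h2]
    nlinarith
  | succ s hs2 ih =>
    intro hst
    have hst' : s ≤ t := by omega
    have h1 := ih hst'
    set d := Phi n C γ p q (u s) (v s) - Phi n C γ p q (u t) (v t) with hd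
    set d' := Phi n C γ p q (u (s+1)) (v (s+1)) - Phi n C γ p q (u t) (v t) with hd'
    set E := Err n C γ p q (u s) (v s) with hE
    have h2 : E^2/2 ≤ d - d' := by
      have := Phi_step hn hppos hqpos hp1 hq1 heven hodd s (by omega)
      simp only [hd, hd', hE]
      linarith
    have h3 : d ≤ R * E := Phi_gap_le hn hγ hC hppos hqpos hp1 hq1 heven hodd R hR s t hs2 ht
    have h4 : 0 ≤ d' := by
      have := Phi_anti hn hppos hqpos hp1 hq1 heven hodd (s+1) (by omega) t hst
      simp only [hd']
      linarith
    have h5 : 0 ≤ E := Err_nonneg _ _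
    have hcast : ((s+1:ℕ):ℝ) - 2 + R = ((s:ℕ):ℝ) - 2 + R + 1 := by push_cast; ring
    rw [hcast]
    set A := ((s:ℕ):ℝ) - 2 + R with hA
    have hApos : 0 < A := by
      have : (2:ℝ) ≤ (s:ℝ) := by exact_mod_cast hs2
      simp only [hA]
      linarith
    have hdd' : d' ≤ d := by nlinarith
    rcases le_or_gt d 0 with hd0 | hd0
    · have : d' ≤ 0 := le_trans hdd' hd0
      have hd'0 : d' = 0 := le_antisymm this h4
      rw [hd'0]
      nlinarith [sq_nonneg R]
    · have hd2 : d^2 ≤ R^2 * E^2 := by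
        have hm := mul_le_mul h3 h3 hd0.le (mul_nonneg hRpos.le h5)
        nlinarith [hm]
      have h2' : d * d' ≤ 2 * R^2 * (d - d') := by
        have ha' := mul_le_mul_of_nonneg_left hdd' hd0.le
        have hmul := mul_le_mul_of_nonneg_left h2 (by positivity : (0:ℝ) ≤ 2*R^2)
        nlinarith [ha', hmul, hd2]
      have key : d * (d' * (A + 1)) ≤ d * (2 * R^2) := by
        have t1 := mul_le_mul_of_nonneg_right h1 h4
        linarith [t1, h2']
      exact le_of_mul_le_mul_left key hd0

private lemma sum_steps (hn : 0 < n) (hppos : ∀ i, 0 < p i) (hqpos : ∀ i, 0 < q i)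
    (hp1 : ∑ i, p i = 1) (hq1 : ∑ i, q i = 1)
    (heven : ∀ t : ℕ, t % 2 = 0 →
      u (t + 1) = (fun i => u t i + Real.log (p i)
          - Real.log (∑ j, Bmat n C γ (u t) (v t) i j)) ∧
      v (t + 1) = v t)
    (hodd : ∀ t : ℕ, t % 2 = 1 →
      u (t + 1) = u t ∧
      v (t + 1) = (fun j => v t j + Real.log (q j)
          - Real.log (∑ i, Bmat n C γ (u t) (v t) i j)))
    (t s : ℕ) (hs2 : 2 ≤ s) : ∀ b, s ≤ b → b ≤ t →
    ((b:ℝ) - (s:ℝ)) * (Err n C γ p q (u t) (v t))^2 / 2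
      ≤ Phi n C γ p q (u s) (v s) - Phi n C γ p q (u b) (v b) := by
  intro b hb
  induction b, hb using Nat.le_induction with
  | base =>
    intro _
    simp
  | succ b hsb ih =>
    intro hbt
    have h1 := ih (by omega)
    have h2 := Phi_step hn hppos hqpos hp1 hq1 heven hodd b (by omega)
    have h3 : Err n C γ p q (u t) (v t) ≤ Err n C γ p q (u b) (v b) :=
      Err_anti hn hppos hqpos heven hodd b (by omega) t (by omega)
    have h4 : 0 ≤ Err n C γ p q (u t) (v t) := Err_nonneg _ _
    have h5 : (Err n C γ p q (u t) (v t))^2 ≤ (Err n C γ p q (u b) (v b))^2 := by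
      nlinarith
    have hcast : ((b+1:ℕ):ℝ) - (s:ℝ) = ((b:ℕ):ℝ) - (s:ℝ) + 1 := by push_cast; ring
    rw [hcast]
    linarith

set_option maxHeartbeats 1000000 in
/-- convergence rate of Sinkhorn's algorithm: after `t > 2` iterations the
sum of `ℓ₁` errors of the marginals of `B(uᵗ,vᵗ)` is at most `4R/(t−2)`, with
`R = ‖C‖_∞/γ − ln(min{minᵢ pᵢ, minⱼ qⱼ})`. -/
theorem sinkhorn_convergence_rate
    (n : ℕ) (hn : 2 ≤ n) (C : Matrix (Fin n) (Fin n) ℝ)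
    (hC : ∀ i j, 0 ≤ C i j) (γ : ℝ) (hγ : 0 < γ)
    (p q : Fin n → ℝ)
    (hp : (∀ i, 0 ≤ p i) ∧ ∑ i, p i = 1) (hppos : ∀ i, 0 < p i)
    (hq : (∀ i, 0 ≤ q i) ∧ ∑ i, q i = 1) (hqpos : ∀ i, 0 < q i)
    (u v : ℕ → Fin n → ℝ) (hu0 : u 0 = 0) (hv0 : v 0 = 0)
    (heven : ∀ t : ℕ, t % 2 = 0 →
      u (t + 1) = (fun i => u t i + Real.log (p i)
          - Real.log (∑ j, Bmat n C γ (u t) (v t) i j)) ∧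
      v (t + 1) = v t)
    (hodd : ∀ t : ℕ, t % 2 = 1 →
      u (t + 1) = u t ∧
      v (t + 1) = (fun j => v t j + Real.log (q j)
          - Real.log (∑ i, Bmat n C γ (u t) (v t) i j)))
    (R : ℝ)
    (hR : R = sSup (Set.range fun ij : Fin n × Fin n => C ij.1 ij.2) / γ
        - Real.log (min (sInf (Set.range p)) (sInf (Set.range q)))) :
    ∀ t : ℕ, 2 < t →
      (∑ i, |(∑ j, Bmat n C γ (u t) (v t) i j) - p i|)
        + (∑ j, |(∑ i, Bmat n C γ (u t) (v t) i j) - q j|)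
        ≤ 4 * R / ((t : ℝ) - 2) := by
  intro t htgt
  obtain ⟨hp0, hp1⟩ := hp
  obtain ⟨hq0, hq1⟩ := hq
  have hn0 : 0 < n := by omega
  have hR12 : 1/2 ≤ R := R_ge_half hn hγ hC hppos hqpos hp1 R hR
  have hRpos : 0 < R := by linarith
  show Err n C γ p q (u t) (v t) ≤ 4 * R / ((t : ℝ) - 2)
  rcases eq_or_lt_of_le (show 3 ≤ t by omega) with h3 | h4
  · -- t = 3
    have hE := Err_le_two hn0 hppos hqpos hp1 hq1 heven hodd t (by omega)
    have hden : ((t:ℕ):ℝ) - 2 = 1 := by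
      rw [← h3]; norm_num
    rw [hden, div_one]
    linarith
  · -- t ≥ 4
    set m : ℕ := t - 2 with hmdef
    set k : ℕ := (m+1)/2 with hkdef
    set s : ℕ := 2 + k with hsdef
    have hm2 : 2 ≤ m := by omega
    have hk1 : m ≤ 2*k := by omega
    have hk2 : 2*k ≤ m+1 := by omega
    have hs2 : 2 ≤ s := by omega
    have hst : s ≤ t := by omega
    have hst1 : s + 1 ≤ t := by omega
    have hrec := delta_rec hn0 hγ hC hppos hqpos hp1 hq1 heven hodd R hR hRpos
      t (by omega) s hs2 hst
    have hsum := sum_steps hn0 hppos hqpos hp1 hq1 heven hodd t s hs2 t hst (le_refl t)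
    set E := Err n C γ p q (u t) (v t) with hEdef
    set G := Phi n C γ p q (u s) (v s) - Phi n C γ p q (u t) (v t) with hGdef
    set a : ℝ := (t:ℝ) - (s:ℝ) with hadef
    set A : ℝ := (s:ℝ) - 2 + R with hAdef
    clear_value E G a A
    have hA0 : 0 < A := by
      have : (2:ℝ) ≤ (s:ℝ) := by exact_mod_cast hs2
      simp only [hAdef]; linarith
    have ha0 : (1:ℝ) ≤ a := by
      have : ((s:ℕ):ℝ) + 1 ≤ ((t:ℕ):ℝ) := by exact_mod_cast hst1
      simp only [hadef]; linarith
    have hEaA : E^2 * (a * A) ≤ 4 * R^2 := by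
      have h6 := mul_le_mul_of_nonneg_right hsum hA0.le
      nlinarith [hrec, h6]
    -- geometric bound: m²/4 ≤ a * A
    have hcast_t : ((t:ℕ):ℝ) = (m:ℝ) + 2 := by
      have : t = m + 2 := by omega
      rw [this]; push_cast; ring
    have hcast_s : ((s:ℕ):ℝ) = 2 + (k:ℝ) := by
      rw [hsdef]; push_cast; ring
    have hx0 : (m:ℝ) ≤ 2*(k:ℝ) := by exact_mod_cast hk1
    have hx1 : 2*(k:ℝ) ≤ (m:ℝ)+1 := by exact_mod_cast hk2
    have hm2' : (2:ℝ) ≤ (m:ℝ) := by exact_mod_cast hm2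
    have hgeom : (m:ℝ)^2/4 ≤ a * A := by
      have haa : a = (m:ℝ) - (k:ℝ) := by
        simp only [hadef]; rw [hcast_t, hcast_s]; ring
      have hAA : A = (k:ℝ) + R := by
        simp only [hAdef]; rw [hcast_s]; ring
      rw [haa, hAA]
      nlinarith [mul_nonneg (by linarith : (0:ℝ) ≤ 2*(k:ℝ) - m)
          (by linarith : (0:ℝ) ≤ 1 - (2*(k:ℝ) - m)),
        mul_nonneg (by linarith : (0:ℝ) ≤ 2*R - 1)
          (by linarith : (0:ℝ) ≤ (m:ℝ) - (2*(k:ℝ) - m) - 1)]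
    have hE0 : 0 ≤ E := by rw [hEdef]; exact Err_nonneg _ _
    have hEm : E^2 * (m:ℝ)^2 ≤ 16 * R^2 := by
      have h7 := mul_le_mul_of_nonneg_left hgeom (sq_nonneg E)
      nlinarith [hEaA, h7]
    have hmt : ((t:ℕ):ℝ) - 2 = (m:ℝ) := by rw [hcast_t]; ring
    have hm0 : (0:ℝ) < (m:ℝ) := by linarith
    have final : E * (m:ℝ) ≤ 4*R := by
      nlinarith [hEm, mul_nonneg hE0 hm0.le, hRpos]
    rw [hmt, le_div_iff₀ hm0]
    exact final
end traj
end

section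
/- Rounding onto the transportation polytope: let p, q ∈ S_n(1) and let π̌ ∈ ℝ^{n×n} have strictly positive entries with Σ_{i,j} π̌_{ij} = 1. Define P := diag(min(p_i/(π̌·1)_i, 1)), Q := diag(min(q_j/(π̌^T·1)_j, 1)), F := P π̌ Q, e_p := p − F·1, e_q := q − F^T·1, and π̂ := F + e_p e_q^T/‖e_p‖₁ if e_p ≠ 0, and π̂ := F otherwise. Then π̂ ∈ U(p,q) and ‖π̌ − π̂‖₁ ≤ ‖π̌·1 − p‖₁ + ‖π̌^T·1 − q‖₁. -/
open Finset

/-- correctness of the rounding procedure onto the transportation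
polytope `U(p,q)`: the output `π̂` is a feasible plan and its `ℓ₁` distance to the
input `π̌` is bounded by the total `ℓ₁` violation of the marginal constraints. -/
theorem rounding_onto_transport_polytope
    (n : ℕ) (hn : 2 ≤ n)
    (p q : Fin n → ℝ)
    (hp : (∀ i, 0 ≤ p i) ∧ ∑ i, p i = 1)
    (hq : (∀ i, 0 ≤ q i) ∧ ∑ i, q i = 1)
    (πch : Matrix (Fin n) (Fin n) ℝ)
    (hπch_pos : ∀ i j, 0 < πch i j)
    (hπch_sum : ∑ i, ∑ j, πch i j = 1)
    (F : Matrix (Fin n) (Fin n) ℝ)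
    (hF : F = Matrix.of fun i j =>
      min (p i / ∑ k, πch i k) 1 * πch i j * min (q j / ∑ k, πch k j) 1)
    (ep eq' : Fin n → ℝ)
    (hep : ep = fun i => p i - ∑ j, F i j)
    (heq : eq' = fun j => q j - ∑ i, F i j)
    (πhat : Matrix (Fin n) (Fin n) ℝ)
    (hπhat : πhat = if ep = 0 then F
      else Matrix.of fun i j => F i j + ep i * eq' j / ∑ k, |ep k|) :
    ((∀ i j, 0 ≤ πhat i j) ∧ (∀ i, ∑ j, πhat i j = p i) ∧ (∀ j, ∑ i, πhat i j = q j)) ∧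
    (∑ i, ∑ j, |πch i j - πhat i j|)
      ≤ (∑ i, |(∑ j, πch i j) - p i|) + (∑ j, |(∑ i, πch i j) - q j|) := by
  obtain ⟨hp0, hp1⟩ := hp
  obtain ⟨hq0, hq1⟩ := hq
  have hne : (univ : Finset (Fin n)).Nonempty := ⟨⟨0, by omega⟩, mem_univ _⟩
  have hrpos : ∀ i, 0 < ∑ k, πch i k := fun i =>
    Finset.sum_pos (fun k _ => hπch_pos i k) hne
  have hcpos : ∀ j, 0 < ∑ k, πch k j := fun j =>
    Finset.sum_pos (fun k _ => hπch_pos k j) hne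
  set a : Fin n → ℝ := fun i => min (p i / ∑ k, πch i k) 1 with ha
  set b : Fin n → ℝ := fun j => min (q j / ∑ k, πch k j) 1 with hb
  have ha0 : ∀ i, 0 ≤ a i := fun i => le_min (div_nonneg (hp0 i) (hrpos i).le) zero_le_one
  have hb0 : ∀ j, 0 ≤ b j := fun j => le_min (div_nonneg (hq0 j) (hcpos j).le) zero_le_one
  have ha1 : ∀ i, a i ≤ 1 := fun i => min_le_right _ _
  have hb1 : ∀ j, b j ≤ 1 := fun j => min_le_right _ _
  have hFab : ∀ i j, F i j = a i * πch i j * b j := fun i j => by rw [hF]; rfl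
  have hF0 : ∀ i j, 0 ≤ F i j := fun i j => by
    rw [hFab]
    exact mul_nonneg (mul_nonneg (ha0 i) (hπch_pos i j).le) (hb0 j)
  have hFle : ∀ i j, F i j ≤ πch i j := fun i j => by
    rw [hFab]
    have h1 : a i * πch i j * b j ≤ 1 * πch i j * 1 :=
      mul_le_mul (mul_le_mul_of_nonneg_right (ha1 i) (hπch_pos i j).le) (hb1 j) (hb0 j)
        (mul_nonneg zero_le_one (hπch_pos i j).le)
    linarith
  have har : ∀ i, a i * (∑ k, πch i k) = min (p i) (∑ k, πch i k) := by
    intro i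
    rcases le_total (p i / ∑ k, πch i k) 1 with h | h
    · rw [ha]; dsimp only
      rw [min_eq_left h, div_mul_cancel₀ _ (hrpos i).ne',
        min_eq_left ((div_le_one (hrpos i)).mp h)]
    · rw [ha]; dsimp only
      rw [min_eq_right h, one_mul, min_eq_right ((one_le_div (hrpos i)).mp h)]
  have hbc : ∀ j, b j * (∑ k, πch k j) = min (q j) (∑ k, πch k j) := by
    intro j
    rcases le_total (q j / ∑ k, πch k j) 1 with h | h
    · rw [hb]; dsimp only
      rw [min_eq_left h, div_mul_cancel₀ _ (hcpos j).ne',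
        min_eq_left ((div_le_one (hcpos j)).mp h)]
    · rw [hb]; dsimp only
      rw [min_eq_right h, one_mul, min_eq_right ((one_le_div (hcpos j)).mp h)]
  have hrowF : ∀ i, ∑ j, F i j ≤ p i := by
    intro i
    calc ∑ j, F i j ≤ ∑ j, a i * πch i j := by
          refine sum_le_sum fun j _ => ?_
          rw [hFab]
          nlinarith [mul_nonneg (ha0 i) (hπch_pos i j).le, hb1 j]
      _ = a i * ∑ k, πch i k := by rw [mul_sum]
      _ = min (p i) (∑ k, πch i k) := har i
      _ ≤ p i := min_le_left _ _
  have hcolF : ∀ j, ∑ i, F i j ≤ q j := by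
    intro j
    calc ∑ i, F i j ≤ ∑ i, πch i j * b j := by
          refine sum_le_sum fun i _ => ?_
          rw [hFab]
          nlinarith [mul_nonneg (hπch_pos i j).le (hb0 j), ha1 i]
      _ = b j * ∑ k, πch k j := by
          rw [Finset.mul_sum]; exact Finset.sum_congr rfl fun k _ => mul_comm _ _
      _ = min (q j) (∑ k, πch k j) := hbc j
      _ ≤ q j := min_le_left _ _
  have hep0 : ∀ i, 0 ≤ ep i := fun i => by rw [hep]; dsimp only; linarith [hrowF i]
  have heq0 : ∀ j, 0 ≤ eq' j := fun j => by rw [heq]; dsimp only; linarith [hcolF j]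
  have hepdef : ∀ i, ep i = p i - ∑ j, F i j := fun i => by rw [hep]
  have heqdef : ∀ j, eq' j = q j - ∑ i, F i j := fun j => by rw [heq]
  set S : ℝ := ∑ i, ∑ j, F i j with hS
  have hepsum : ∑ i, ep i = 1 - S := by
    rw [hep]; dsimp only
    rw [Finset.sum_sub_distrib, hp1, hS]
  have heqsum : ∑ j, eq' j = 1 - S := by
    rw [heq]; dsimp only
    rw [Finset.sum_sub_distrib, hq1, hS, Finset.sum_comm]
  have hdiff : ∑ i, ∑ j, (πch i j - F i j) = 1 - S := by
    have : ∀ i, ∑ j, (πch i j - F i j) = (∑ j, πch i j) - ∑ j, F i j := fun i =>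
      Finset.sum_sub_distrib _ _
    rw [Finset.sum_congr rfl fun i _ => this i, Finset.sum_sub_distrib, hπch_sum, hS]
  -- key bound
  have hmax : ∀ x : ℝ, 2 * max x 0 = |x| + x := by
    intro x
    rcases le_or_gt 0 x with h | h
    · rw [max_eq_left h, abs_of_nonneg h]; ring
    · rw [max_eq_right h.le, abs_of_neg h]; ring
  have hrtot : ∑ i, ((∑ k, πch i k) - p i) = 0 := by
    rw [Finset.sum_sub_distrib, hπch_sum, hp1]; ring
  have hctot : ∑ j, ((∑ k, πch k j) - q j) = 0 := by
    rw [Finset.sum_sub_distrib, Finset.sum_comm, hπch_sum, hq1]; ring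
  have hkey : 2 * (1 - S) ≤ (∑ i, |(∑ j, πch i j) - p i|) + (∑ j, |(∑ i, πch i j) - q j|) := by
    have step1 : 1 - S ≤ (∑ i, max ((∑ k, πch i k) - p i) 0)
        + (∑ j, max ((∑ k, πch k j) - q j) 0) := by
      have hpt : ∀ i j, πch i j - F i j ≤ πch i j * (1 - a i) + πch i j * (1 - b j) := by
        intro i j
        rw [hFab]
        nlinarith [mul_nonneg (mul_nonneg (hπch_pos i j).le (sub_nonneg.mpr (ha1 i)))
          (sub_nonneg.mpr (hb1 j))]
      have h1 : 1 - S ≤ (∑ i, ∑ j, πch i j * (1 - a i)) + ∑ i, ∑ j, πch i j * (1 - b j) := by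
        rw [← hdiff, ← Finset.sum_add_distrib]
        refine Finset.sum_le_sum fun i _ => ?_
        rw [← Finset.sum_add_distrib]
        exact Finset.sum_le_sum fun j _ => hpt i j
      have h2 : ∑ i, ∑ j, πch i j * (1 - a i) = ∑ i, max ((∑ k, πch i k) - p i) 0 := by
        refine Finset.sum_congr rfl fun i _ => ?_
        have : ∑ j, πch i j * (1 - a i) = (∑ k, πch i k) - a i * (∑ k, πch i k) := by
          rw [← Finset.sum_mul]; ring
        rw [this, har i]
        rcases le_total (p i) (∑ k, πch i k) with h | h
        · rw [min_eq_left h, max_eq_left (by linarith)]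
        · rw [min_eq_right h, max_eq_right (by linarith)]; ring
      have h3 : ∑ i, ∑ j, πch i j * (1 - b j) = ∑ j, max ((∑ k, πch k j) - q j) 0 := by
        rw [Finset.sum_comm]
        refine Finset.sum_congr rfl fun j _ => ?_
        have : ∑ i, πch i j * (1 - b j) = (∑ k, πch k j) - b j * (∑ k, πch k j) := by
          rw [← Finset.sum_mul]; ring
        rw [this, hbc j]
        rcases le_total (q j) (∑ k, πch k j) with h | h
        · rw [min_eq_left h, max_eq_left (by linarith)]
        · rw [min_eq_right h, max_eq_right (by linarith)]; ring
      rw [← h2, ← h3]; exact h1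
    have e1 : 2 * ∑ i, max ((∑ k, πch i k) - p i) 0 = ∑ i, |(∑ j, πch i j) - p i| := by
      rw [Finset.mul_sum]
      rw [Finset.sum_congr rfl fun i _ => hmax ((∑ k, πch i k) - p i),
        Finset.sum_add_distrib, hrtot, add_zero]
    have e2 : 2 * ∑ j, max ((∑ k, πch k j) - q j) 0 = ∑ j, |(∑ i, πch i j) - q j| := by
      rw [Finset.mul_sum]
      rw [Finset.sum_congr rfl fun j _ => hmax ((∑ k, πch k j) - q j),
        Finset.sum_add_distrib, hctot, add_zero]
    linarith
  have hRHS0 : 0 ≤ (∑ i, |(∑ j, πch i j) - p i|) + (∑ j, |(∑ i, πch i j) - q j|) := by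
    positivity
  rcases eq_or_ne ep 0 with h0 | h0
  · -- ep = 0 case
    rw [if_pos h0] at hπhat
    rw [hπhat]
    have hrow : ∀ i, ∑ j, F i j = p i := by
      intro i
      rw [hep] at h0
      have hz : p i - ∑ j, F i j = 0 := congrFun h0 i
      linarith
    have hS1 : S = 1 := by
      rw [hS, Finset.sum_congr rfl fun i _ => hrow i, hp1]
    have heqz : ∀ j, eq' j = 0 := by
      have hsum0 : ∑ j, eq' j = 0 := by rw [heqsum, hS1]; ring
      intro j
      exact (Finset.sum_eq_zero_iff_of_nonneg (fun j _ => heq0 j)).mp hsum0 j (mem_univ j)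
    have hcol : ∀ j, ∑ i, F i j = q j := by
      intro j
      have hz := heqz j
      rw [heqdef j] at hz
      linarith
    refine ⟨⟨hF0, hrow, hcol⟩, ?_⟩
    have : ∑ i, ∑ j, |πch i j - F i j| = 1 - S := by
      rw [← hdiff]
      exact Finset.sum_congr rfl fun i _ =>
        Finset.sum_congr rfl fun j _ => abs_of_nonneg (by linarith [hFle i j])
    rw [this, hS1]
    simpa using hRHS0
  · -- ep ≠ 0 case
    rw [if_neg h0] at hπhat
    rw [hπhat]
    have hE : (∑ k, |ep k|) = 1 - S := by
      rw [← hepsum]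
      exact Finset.sum_congr rfl fun k _ => abs_of_nonneg (hep0 k)
    have hEpos : 0 < 1 - S := by
      rw [← hepsum]
      obtain ⟨i, hi⟩ := Function.ne_iff.mp h0
      exact Finset.sum_pos' (fun k _ => hep0 k) ⟨i, mem_univ i, lt_of_le_of_ne (hep0 i) (Ne.symm hi)⟩
    have hhat : ∀ i j, (Matrix.of fun i j => F i j + ep i * eq' j / ∑ k, |ep k|) i j
        = F i j + ep i * eq' j / (1 - S) := fun i j => by
      rw [Matrix.of_apply, hE]
    have hhat0 : ∀ i j, 0 ≤ (Matrix.of fun i j => F i j + ep i * eq' j / ∑ k, |ep k|) i j := by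
      intro i j
      rw [hhat]
      exact add_nonneg (hF0 i j)
        (div_nonneg (mul_nonneg (hep0 i) (heq0 j)) hEpos.le)
    have hrow : ∀ i, ∑ j, (Matrix.of fun i j => F i j + ep i * eq' j / ∑ k, |ep k|) i j = p i := by
      intro i
      rw [Finset.sum_congr rfl fun j _ => hhat i j, Finset.sum_add_distrib]
      have : ∑ j, ep i * eq' j / (1 - S) = ep i * (∑ j, eq' j) / (1 - S) := by
        rw [← Finset.sum_div, ← Finset.mul_sum]
      rw [this, heqsum, mul_div_assoc, div_self hEpos.ne', mul_one]
      rw [hepdef i]; ring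
    have hcol : ∀ j, ∑ i, (Matrix.of fun i j => F i j + ep i * eq' j / ∑ k, |ep k|) i j = q j := by
      intro j
      rw [Finset.sum_congr rfl fun i _ => hhat i j, Finset.sum_add_distrib]
      have : ∑ i, ep i * eq' j / (1 - S) = (∑ i, ep i) * eq' j / (1 - S) := by
        rw [← Finset.sum_div, ← Finset.sum_mul]
      rw [this, hepsum, mul_comm, mul_div_assoc, div_self hEpos.ne', mul_one]
      rw [heqdef j]; ring
    refine ⟨⟨hhat0, hrow, hcol⟩, ?_⟩
    have hbound : ∑ i, ∑ j, |πch i j - (Matrix.of fun i j => F i j + ep i * eq' j / ∑ k, |ep k|) i j|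
        ≤ 2 * (1 - S) := by
      have hpt : ∀ i j, |πch i j - (Matrix.of fun i j => F i j + ep i * eq' j / ∑ k, |ep k|) i j|
          ≤ (πch i j - F i j) + ep i * eq' j / (1 - S) := by
        intro i j
        rw [hhat]
        have h1 : 0 ≤ πch i j - F i j := by linarith [hFle i j]
        have h2 : 0 ≤ ep i * eq' j / (1 - S) :=
          div_nonneg (mul_nonneg (hep0 i) (heq0 j)) hEpos.le
        rw [abs_le]
        constructor <;> [skip; skip] <;> nlinarith
      calc ∑ i, ∑ j, |πch i j - (Matrix.of fun i j => F i j + ep i * eq' j / ∑ k, |ep k|) i j|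
          ≤ ∑ i, ∑ j, ((πch i j - F i j) + ep i * eq' j / (1 - S)) :=
            Finset.sum_le_sum fun i _ => Finset.sum_le_sum fun j _ => hpt i j
        _ = (∑ i, ∑ j, (πch i j - F i j)) + ∑ i, ∑ j, ep i * eq' j / (1 - S) := by
            rw [← Finset.sum_add_distrib]
            exact Finset.sum_congr rfl fun i _ => Finset.sum_add_distrib
        _ = (1 - S) + (∑ i, ep i) * (∑ j, eq' j) / (1 - S) := by
            rw [hdiff]
            congr 1
            rw [Finset.sum_mul, Finset.sum_div]
            refine Finset.sum_congr rfl fun i _ => ?_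
            rw [Finset.mul_sum, Finset.sum_div]
        _ = 2 * (1 - S) := by
            rw [hepsum, heqsum, mul_div_assoc, div_self hEpos.ne']; ring
    linarith
end

section
/- Approximation guarantee of the Sinkhorn-based OT scheme: let p, q ∈ S_n(1), assume ‖C‖_∞ > 0, fix ε > 0, and set ε' := ε/(8‖C‖_∞), γ := ε/(4 ln n), p̌ := (1 − ε'/8)(p + (ε'/(8n))·1) and q̌ := (1 − ε'/8)(q + (ε'/(8n))·1). Suppose u, v ∈ ℝ^n satisfy ‖B(u,v)·1 − p̌‖₁ + ‖B(u,v)^T·1 − q̌‖₁ ≤ ε'/2, and let π̂ be the output of the rounding procedure (P := diag(min(p_i/(π̌·1)_i, 1)), Q := diag(min(q_j/(π̌^T·1)_j, 1)), F := P π̌ Q, π̂ := F + (p − F·1)(q − F^T·1)^T/‖p − F·1‖₁) applied to π̌ := B(u,v) with marginals p, q. Then π̂ ∈ U(p,q) and ⟨C, π̂⟩ − min_{π ∈ U(p,q)} ⟨C, π⟩ ≤ ε. -/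
open Finset

lemma xlogx_le (x m : ℝ) (hx : 0 ≤ x) (hm : x ≤ m) :
    x * Real.log x ≤ x * Real.log m := by
  rcases eq_or_lt_of_le hx with h | h
  · simp [← h]
  · exact mul_le_mul_of_nonneg_left (Real.log_le_log h hm) hx

lemma neg_xlogx_le (x t : ℝ) (hx : 0 < x) (ht : 0 < t) :
    -(x * Real.log x) ≤ t / Real.exp 1 - x * Real.log t := by
  have hy : 0 < t / x := div_pos ht hx
  have h1 : Real.log (t / x) ≤ (t / x) / Real.exp 1 := by
    have h2 : 0 < t / x / Real.exp 1 := div_pos hy (Real.exp_pos 1)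
    have := Real.log_le_sub_one_of_pos h2
    rw [Real.log_div (ne_of_gt hy) (ne_of_gt (Real.exp_pos 1)), Real.log_exp] at this
    linarith
  have h3 : x * Real.log (t / x) ≤ t / Real.exp 1 := by
    have := mul_le_mul_of_nonneg_left h1 hx.le
    calc x * Real.log (t / x) ≤ x * ((t / x) / Real.exp 1) := this
      _ = t / Real.exp 1 := by field_simp
  rw [Real.log_div (ne_of_gt ht) (ne_of_gt hx)] at h3
  nlinarith

lemma round_lemma {n : ℕ} (C X : Matrix (Fin n) (Fin n) ℝ) (Cmax : ℝ)
    (hCb : ∀ i j, C i j ≤ Cmax) (hCmax0 : 0 ≤ Cmax)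
    (hC : ∀ i j, 0 ≤ C i j)
    (hX : ∀ i j, 0 ≤ X i j)
    (p q : Fin n → ℝ) (hp : ∀ i, 0 ≤ p i) (hq : ∀ j, 0 ≤ q j)
    (hpq : ∑ i, p i = ∑ j, q j)
    (F : Matrix (Fin n) (Fin n) ℝ)
    (hF : F = Matrix.of fun i j =>
      min (p i / ∑ k, X i k) 1 * X i j * min (q j / ∑ k, X k j) 1)
    (Y : Matrix (Fin n) (Fin n) ℝ)
    (hY : Y = Matrix.of fun i j =>
      F i j + (p i - ∑ j', F i j') * (q j - ∑ i', F i' j) / ∑ k, |p k - ∑ j', F k j'|) :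
    (∀ i j, 0 ≤ Y i j) ∧ (∀ i, ∑ j, Y i j = p i) ∧ (∀ j, ∑ i, Y i j = q j) ∧
      ∑ i, ∑ j, C i j * Y i j ≤ (∑ i, ∑ j, C i j * X i j)
        + Cmax * ((∑ i, |p i - ∑ j, X i j|) + (∑ j, |q j - ∑ i, X i j|)) := by
  set r : Fin n → ℝ := fun i => ∑ k, X i k with hr
  set c : Fin n → ℝ := fun j => ∑ k, X k j with hc
  set α : Fin n → ℝ := fun i => min (p i / r i) 1 with hα
  set β : Fin n → ℝ := fun j => min (q j / c j) 1 with hβ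
  have hr0 : ∀ i, 0 ≤ r i := fun i => Finset.sum_nonneg fun k _ => hX i k
  have hc0 : ∀ j, 0 ≤ c j := fun j => Finset.sum_nonneg fun k _ => hX k j
  have hα0 : ∀ i, 0 ≤ α i := fun i => le_min (div_nonneg (hp i) (hr0 i)) zero_le_one
  have hβ0 : ∀ j, 0 ≤ β j := fun j => le_min (div_nonneg (hq j) (hc0 j)) zero_le_one
  have hα1 : ∀ i, α i ≤ 1 := fun i => min_le_right _ _
  have hβ1 : ∀ j, β j ≤ 1 := fun j => min_le_right _ _
  have hFij : ∀ i j, F i j = α i * X i j * β j := fun i j => by rw [hF]; rfl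
  have hF0 : ∀ i j, 0 ≤ F i j := fun i j => by
    rw [hFij]; exact mul_nonneg (mul_nonneg (hα0 i) (hX i j)) (hβ0 j)
  have hFleX : ∀ i j, F i j ≤ X i j := fun i j => by
    rw [hFij]
    nlinarith [mul_nonneg (sub_nonneg.2 (hα1 i)) (hX i j),
      mul_nonneg (mul_nonneg (hα0 i) (hX i j)) (sub_nonneg.2 (hβ1 j))]
  have hαr : ∀ i, α i * r i ≤ p i := by
    intro i
    rcases eq_or_lt_of_le (hr0 i) with h | h
    · rw [← h, mul_zero]; exact hp i
    · exact (le_div_iff₀ h).1 (min_le_left _ _)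
  have hβc : ∀ j, β j * c j ≤ q j := by
    intro j
    rcases eq_or_lt_of_le (hc0 j) with h | h
    · rw [← h, mul_zero]; exact hq j
    · exact (le_div_iff₀ h).1 (min_le_left _ _)
  have hminαr : ∀ i, min (p i) (r i) ≤ α i * r i := by
    intro i
    rcases eq_or_lt_of_le (hr0 i) with h | h
    · rw [← h, mul_zero, min_eq_right (hp i)]
    · have : α i * r i = min (p i / r i * r i) (1 * r i) := by
        rw [hα]; exact min_mul_of_nonneg _ _ (hr0 i)
      rw [this, div_mul_cancel₀ _ (ne_of_gt h), one_mul]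
  have hminβc : ∀ j, min (q j) (c j) ≤ β j * c j := by
    intro j
    rcases eq_or_lt_of_le (hc0 j) with h | h
    · rw [← h, mul_zero, min_eq_right (hq j)]
    · have : β j * c j = min (q j / c j * c j) (1 * c j) := by
        rw [hβ]; exact min_mul_of_nonneg _ _ (hc0 j)
      rw [this, div_mul_cancel₀ _ (ne_of_gt h), one_mul]
  have hFrow : ∀ i, ∑ j, F i j ≤ p i := by
    intro i
    have h1 : ∑ j, F i j ≤ ∑ j, α i * X i j := by
      apply Finset.sum_le_sum; intro j _
      rw [hFij]
      exact mul_le_of_le_one_right (mul_nonneg (hα0 i) (hX i j)) (hβ1 j)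
    rw [← Finset.mul_sum] at h1
    exact h1.trans (hαr i)
  have hFcol : ∀ j, ∑ i, F i j ≤ q j := by
    intro j
    have h1 : ∑ i, F i j ≤ ∑ i, X i j * β j := by
      apply Finset.sum_le_sum; intro i _
      rw [hFij]
      exact mul_le_mul_of_nonneg_right (mul_le_of_le_one_left (hX i j) (hα1 i)) (hβ0 j)
    rw [← Finset.sum_mul] at h1
    calc ∑ i, F i j ≤ c j * β j := h1
      _ = β j * c j := mul_comm _ _
      _ ≤ q j := hβc j
  set uu : Fin n → ℝ := fun i => p i - ∑ j, F i j with huu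
  set ww : Fin n → ℝ := fun j => q j - ∑ i, F i j with hww
  have huu0 : ∀ i, 0 ≤ uu i := fun i => sub_nonneg.2 (hFrow i)
  have hww0 : ∀ j, 0 ≤ ww j := fun j => sub_nonneg.2 (hFcol j)
  set s : ℝ := ∑ k, |p k - ∑ j', F k j'| with hs
  have hs_eq : s = ∑ k, uu k := by
    rw [hs]; exact Finset.sum_congr rfl fun k _ => abs_of_nonneg (huu0 k)
  have hsum_uw : ∑ k, uu k = ∑ k, ww k := by
    rw [huu, hww]
    rw [Finset.sum_sub_distrib, Finset.sum_sub_distrib, hpq, Finset.sum_comm]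
  have hs0 : 0 ≤ s := hs ▸ Finset.sum_nonneg fun k _ => abs_nonneg _
  have hYij : ∀ i j, Y i j = F i j + uu i * ww j / s := fun i j => by rw [hY]; rfl
  have hY0 : ∀ i j, 0 ≤ Y i j := by
    intro i j
    rw [hYij]
    exact add_nonneg (hF0 i j) (div_nonneg (mul_nonneg (huu0 i) (hww0 j)) hs0)
  have hYrow : ∀ i, ∑ j, Y i j = p i := by
    intro i
    have h1 : ∑ j, Y i j = (∑ j, F i j) + (∑ j, uu i * ww j / s) := by
      rw [Finset.sum_congr rfl fun j _ => hYij i j, Finset.sum_add_distrib]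
    by_cases hsz : s = 0
    · have huz : uu i = 0 := by
        have hzz : ∑ k, uu k = 0 := by rw [← hs_eq]; exact hsz
        have := (Finset.sum_eq_zero_iff_of_nonneg (fun k _ => huu0 k)).1 hzz
        exact this i (Finset.mem_univ i)
      rw [h1]
      simp [huz]
      have : p i - ∑ j, F i j = 0 := huz
      linarith
    · have h2 : ∑ j, uu i * ww j / s = uu i := by
        rw [← Finset.sum_div, ← Finset.mul_sum, ← hsum_uw, ← hs_eq, mul_div_assoc,
          div_self hsz, mul_one]
      rw [h1, h2, huu]; ring
  have hYcol : ∀ j, ∑ i, Y i j = q j := by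
    intro j
    have h1 : ∑ i, Y i j = (∑ i, F i j) + (∑ i, uu i * ww j / s) := by
      rw [Finset.sum_congr rfl fun i _ => hYij i j, Finset.sum_add_distrib]
    by_cases hsz : s = 0
    · have hwz : ww j = 0 := by
        have hzz : ∑ k, ww k = 0 := by rw [← hsum_uw, ← hs_eq, hsz]
        have := (Finset.sum_eq_zero_iff_of_nonneg (fun k _ => hww0 k)).1 hzz
        exact this j (Finset.mem_univ j)
      rw [h1]
      simp [hwz]
      have : q j - ∑ i, F i j = 0 := hwz
      linarith
    · have h2 : ∑ i, uu i * ww j / s = ww j := by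
        rw [← Finset.sum_div, ← Finset.sum_mul, ← hs_eq, mul_comm, mul_div_assoc,
          div_self hsz, mul_one]
      rw [h1, h2, hww]; ring
  refine ⟨hY0, hYrow, hYcol, ?_⟩
  -- cost bound
  have hsF : s ≤ (∑ i, |p i - r i|) + (∑ j, |q j - c j|) := by
    have hFsum : (∑ i, min (p i) (r i)) + (∑ j, min (q j) (c j)) - (∑ i, ∑ j, X i j)
        ≤ ∑ i, ∑ j, F i j := by
      have h1 : ∀ i j, α i * X i j + X i j * β j - X i j ≤ F i j := by
        intro i j
        rw [hFij]
        nlinarith [mul_nonneg (mul_nonneg (sub_nonneg.2 (hα1 i)) (sub_nonneg.2 (hβ1 j))) (hX i j)]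
      have h2 : ∑ i, ∑ j, (α i * X i j + X i j * β j - X i j) ≤ ∑ i, ∑ j, F i j :=
        Finset.sum_le_sum fun i _ => Finset.sum_le_sum fun j _ => h1 i j
      have hi : ∑ i, ∑ j, α i * X i j = ∑ i, α i * r i :=
        Finset.sum_congr rfl fun i _ => by rw [← Finset.mul_sum]
      have hj : ∑ i, ∑ j, X i j * β j = ∑ j, β j * c j := by
        rw [Finset.sum_comm]
        exact Finset.sum_congr rfl fun j _ => by rw [← Finset.sum_mul, mul_comm]
      have h3 : (∑ i, α i * r i) + (∑ j, β j * c j) - (∑ i, ∑ j, X i j)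
          = ∑ i, ∑ j, (α i * X i j + X i j * β j - X i j) := by
        rw [← hi, ← hj, ← Finset.sum_add_distrib, ← Finset.sum_sub_distrib]
        exact Finset.sum_congr rfl fun i _ => by
          rw [← Finset.sum_add_distrib, ← Finset.sum_sub_distrib]
      have h4 : (∑ i, min (p i) (r i)) ≤ ∑ i, α i * r i :=
        Finset.sum_le_sum fun i _ => hminαr i
      have h5 : (∑ j, min (q j) (c j)) ≤ ∑ j, β j * c j :=
        Finset.sum_le_sum fun j _ => hminβc j
      linarith [h2, h3, h4, h5]
    have hXsum : ∑ i, ∑ j, X i j = ∑ j, c j := by rw [Finset.sum_comm]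
    have h6 : s = (∑ i, p i) - ∑ i, ∑ j, F i j := by
      rw [hs_eq, huu, Finset.sum_sub_distrib]
    have h7 : ∀ i, p i - min (p i) (r i) ≤ |p i - r i| := by
      intro i
      rcases le_total (p i) (r i) with h | h
      · rw [min_eq_left h]; simp [abs_nonneg]
      · rw [min_eq_right h]; exact le_abs_self _
    have h8 : ∀ j, c j - min (q j) (c j) ≤ |q j - c j| := by
      intro j
      rcases le_total (q j) (c j) with h | h
      · rw [min_eq_left h]
        have : c j - q j ≤ |q j - c j| := by rw [abs_sub_comm]; exact le_abs_self _
        linarith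
      · rw [min_eq_right h]; simp [abs_nonneg]
    have h7' : (∑ i, (p i - min (p i) (r i))) ≤ ∑ i, |p i - r i| :=
      Finset.sum_le_sum fun i _ => h7 i
    have h8' : (∑ j, (c j - min (q j) (c j))) ≤ ∑ j, |q j - c j| :=
      Finset.sum_le_sum fun j _ => h8 j
    rw [Finset.sum_sub_distrib] at h7' h8'
    linarith [hFsum, h6, h7', h8', hXsum]
  have hT : ∑ i, ∑ j, uu i * ww j / s ≤ s := by
    have : ∑ i, ∑ j, uu i * ww j / s = (∑ i, uu i) * (∑ j, ww j) / s := by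
      rw [Finset.sum_mul, Finset.sum_div]
      exact Finset.sum_congr rfl fun i _ => by
        rw [Finset.mul_sum, Finset.sum_div]
    rw [this, ← hsum_uw, ← hs_eq]
    by_cases hsz : s = 0
    · simp [hsz]
    · rw [mul_div_assoc, div_self hsz, mul_one]
  have hcost1 : ∑ i, ∑ j, C i j * Y i j
      = (∑ i, ∑ j, C i j * F i j) + ∑ i, ∑ j, C i j * (uu i * ww j / s) := by
    rw [← Finset.sum_add_distrib]
    refine Finset.sum_congr rfl fun i _ => ?_
    rw [← Finset.sum_add_distrib]
    refine Finset.sum_congr rfl fun j _ => ?_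
    rw [hYij]; ring
  have hcost2 : ∑ i, ∑ j, C i j * F i j ≤ ∑ i, ∑ j, C i j * X i j :=
    Finset.sum_le_sum fun i _ => Finset.sum_le_sum fun j _ =>
      mul_le_mul_of_nonneg_left (hFleX i j) (hC i j)
  have hcost3 : ∑ i, ∑ j, C i j * (uu i * ww j / s) ≤ Cmax * s := by
    have h1 : ∑ i, ∑ j, C i j * (uu i * ww j / s) ≤ ∑ i, ∑ j, Cmax * (uu i * ww j / s) :=
      Finset.sum_le_sum fun i _ => Finset.sum_le_sum fun j _ =>
        mul_le_mul_of_nonneg_right (hCb i j)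
          (div_nonneg (mul_nonneg (huu0 i) (hww0 j)) hs0)
    have h2 : ∑ i, ∑ j, Cmax * (uu i * ww j / s) = Cmax * ∑ i, ∑ j, uu i * ww j / s := by
      rw [Finset.mul_sum]
      exact Finset.sum_congr rfl fun i _ => by rw [Finset.mul_sum]
    rw [h2] at h1
    exact h1.trans (mul_le_mul_of_nonneg_left hT hCmax0)
  calc ∑ i, ∑ j, C i j * Y i j
      ≤ (∑ i, ∑ j, C i j * X i j) + Cmax * s := by
        rw [hcost1]; linarith
    _ ≤ (∑ i, ∑ j, C i j * X i j)
        + Cmax * ((∑ i, |p i - ∑ j, X i j|) + (∑ j, |q j - ∑ i, X i j|)) := by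
        have := mul_le_mul_of_nonneg_left hsF hCmax0
        linarith

lemma entropic_opt {n : ℕ} (C : Matrix (Fin n) (Fin n) ℝ) (γ : ℝ) (hγ : 0 < γ)
    (u v : Fin n → ℝ) (Y : Matrix (Fin n) (Fin n) ℝ) (hY : ∀ i j, 0 ≤ Y i j)
    (hrow : ∀ i, ∑ j, Y i j = ∑ j, Bmat n C γ u v i j)
    (hcol : ∀ j, ∑ i, Y i j = ∑ i, Bmat n C γ u v i j) :
    ∑ i, ∑ j, C i j * Bmat n C γ u v i j ≤ (∑ i, ∑ j, C i j * Y i j)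
      + γ * ((∑ i, ∑ j, Y i j * Real.log (Y i j))
        - ∑ i, ∑ j, Bmat n C γ u v i j * Real.log (Bmat n C γ u v i j)) := by
  set X : Matrix (Fin n) (Fin n) ℝ := Bmat n C γ u v with hXdef
  have hXpos : ∀ i j, 0 < X i j := fun i j => Real.exp_pos _
  have hlogX : ∀ i j, Real.log (X i j) = u i + v j - C i j / γ := fun i j => Real.log_exp _
  have hCij : ∀ i j, C i j = γ * (u i + v j - Real.log (X i j)) := by
    intro i j
    rw [hlogX i j]
    field_simp
    ring
  have hkey : ∑ i, ∑ j, C i j * X i j - ∑ i, ∑ j, C i j * Y i j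
      = γ * ((∑ i, ∑ j, Y i j * Real.log (X i j))
          - ∑ i, ∑ j, X i j * Real.log (X i j)) := by
    have hexp : ∀ i j, C i j * X i j - C i j * Y i j
        = γ * ((u i) * (X i j - Y i j)) + γ * ((v j) * (X i j - Y i j))
          + γ * (Y i j * Real.log (X i j) - X i j * Real.log (X i j)) := by
      intro i j
      rw [hCij i j]
      ring
    have hsum : ∑ i, ∑ j, (C i j * X i j - C i j * Y i j)
        = (∑ i, ∑ j, γ * ((u i) * (X i j - Y i j)))
          + (∑ i, ∑ j, γ * ((v j) * (X i j - Y i j)))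
          + ∑ i, ∑ j, γ * (Y i j * Real.log (X i j) - X i j * Real.log (X i j)) := by
      rw [← Finset.sum_add_distrib, ← Finset.sum_add_distrib]
      refine Finset.sum_congr rfl fun i _ => ?_
      rw [← Finset.sum_add_distrib, ← Finset.sum_add_distrib]
      exact Finset.sum_congr rfl fun j _ => hexp i j
    have hu0 : ∑ i, ∑ j, γ * ((u i) * (X i j - Y i j)) = 0 := by
      refine Finset.sum_eq_zero fun i _ => ?_
      have : ∑ j, γ * ((u i) * (X i j - Y i j)) = γ * (u i * ((∑ j, X i j) - ∑ j, Y i j)) := by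
        rw [← Finset.mul_sum, ← Finset.mul_sum, ← Finset.sum_sub_distrib]
      rw [this, hrow i]
      ring
    have hv0 : ∑ i, ∑ j, γ * ((v j) * (X i j - Y i j)) = 0 := by
      rw [Finset.sum_comm]
      refine Finset.sum_eq_zero fun j _ => ?_
      have : ∑ i, γ * ((v j) * (X i j - Y i j)) = γ * (v j * ((∑ i, X i j) - ∑ i, Y i j)) := by
        rw [← Finset.mul_sum, ← Finset.mul_sum, ← Finset.sum_sub_distrib]
      rw [this, hcol j]
      ring
    have hfact : ∑ i, ∑ j, γ * (Y i j * Real.log (X i j) - X i j * Real.log (X i j))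
        = γ * ((∑ i, ∑ j, Y i j * Real.log (X i j)) - ∑ i, ∑ j, X i j * Real.log (X i j)) := by
      have e2 : (∑ i, ∑ j, Y i j * Real.log (X i j)) - ∑ i, ∑ j, X i j * Real.log (X i j)
          = ∑ i, ∑ j, (Y i j * Real.log (X i j) - X i j * Real.log (X i j)) := by
        rw [← Finset.sum_sub_distrib]
        exact Finset.sum_congr rfl fun i _ => by rw [← Finset.sum_sub_distrib]
      rw [e2, Finset.mul_sum]
      exact Finset.sum_congr rfl fun i _ => by rw [Finset.mul_sum]
    have hLHS : ∑ i, ∑ j, (C i j * X i j - C i j * Y i j)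
        = ∑ i, ∑ j, C i j * X i j - ∑ i, ∑ j, C i j * Y i j := by
      rw [← Finset.sum_sub_distrib]
      exact Finset.sum_congr rfl fun i _ => by rw [← Finset.sum_sub_distrib]
    rw [← hLHS, hsum, hu0, hv0, hfact]
    ring
  have hgibbs : ∑ i, ∑ j, Y i j * Real.log (X i j)
      ≤ (∑ i, ∑ j, Y i j * Real.log (Y i j)) + ∑ i, ∑ j, (X i j - Y i j) := by
    have h1 : ∀ i j, Y i j * Real.log (X i j)
        ≤ Y i j * Real.log (Y i j) + (X i j - Y i j) := by
      intro i j
      rcases eq_or_lt_of_le (hY i j) with h | h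
      · rw [← h]
        simp [(hXpos i j).le]
      · have hd : 0 < X i j / Y i j := div_pos (hXpos i j) h
        have := Real.log_le_sub_one_of_pos hd
        rw [Real.log_div (ne_of_gt (hXpos i j)) (ne_of_gt h)] at this
        have h2 := mul_le_mul_of_nonneg_left this h.le
        have h3 : Y i j * (X i j / Y i j - 1) = X i j - Y i j := by
          field_simp
        nlinarith
    calc ∑ i, ∑ j, Y i j * Real.log (X i j)
        ≤ ∑ i, ∑ j, (Y i j * Real.log (Y i j) + (X i j - Y i j)) :=
          Finset.sum_le_sum fun i _ => Finset.sum_le_sum fun j _ => h1 i j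
      _ = (∑ i, ∑ j, Y i j * Real.log (Y i j)) + ∑ i, ∑ j, (X i j - Y i j) := by
          rw [← Finset.sum_add_distrib]
          exact Finset.sum_congr rfl fun i _ => by rw [← Finset.sum_add_distrib]
  have hmass : ∑ i, ∑ j, (X i j - Y i j) = 0 := by
    refine Finset.sum_eq_zero fun i _ => ?_
    rw [Finset.sum_sub_distrib, hrow i, sub_self]
  rw [hmass, add_zero] at hgibbs
  have := mul_le_mul_of_nonneg_left hgibbs hγ.le
  linarith [hkey, this]

set_option maxHeartbeats 4000000 in
/-- approximation guarantee of the Sinkhorn-based OT scheme: if the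
regularized dual iterate is accurate enough for the smoothed marginals, then the
rounded plan is feasible and `ε`-optimal for the original OT problem. -/
theorem sinkhorn_scheme_approximation_guarantee
    (n : ℕ) (hn : 2 ≤ n) (C : Matrix (Fin n) (Fin n) ℝ)
    (hC : ∀ i j, 0 ≤ C i j)
    (Cmax : ℝ) (hCmax : Cmax = sSup (Set.range fun ij : Fin n × Fin n => C ij.1 ij.2))
    (hCmaxpos : 0 < Cmax)
    (p q : Fin n → ℝ)
    (hp : (∀ i, 0 ≤ p i) ∧ ∑ i, p i = 1)
    (hq : (∀ i, 0 ≤ q i) ∧ ∑ i, q i = 1)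
    (ε ε' γ : ℝ) (hε : 0 < ε)
    (hε' : ε' = ε / (8 * Cmax))
    (hγ : γ = ε / (4 * Real.log n))
    (pch qch : Fin n → ℝ)
    (hpch : pch = fun i => (1 - ε' / 8) * (p i + ε' / (8 * n)))
    (hqch : qch = fun i => (1 - ε' / 8) * (q i + ε' / (8 * n)))
    (u v : Fin n → ℝ)
    (hclose : (∑ i, |(∑ j, Bmat n C γ u v i j) - pch i|)
        + (∑ j, |(∑ i, Bmat n C γ u v i j) - qch j|) ≤ ε' / 2)
    (πch : Matrix (Fin n) (Fin n) ℝ) (hπch : πch = Bmat n C γ u v)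
    (F : Matrix (Fin n) (Fin n) ℝ)
    (hF : F = Matrix.of fun i j =>
      min (p i / ∑ k, πch i k) 1 * πch i j * min (q j / ∑ k, πch k j) 1)
    (πhat : Matrix (Fin n) (Fin n) ℝ)
    (hπhat : πhat = Matrix.of fun i j =>
      F i j + (p i - ∑ j', F i j') * (q j - ∑ i', F i' j) / ∑ k, |p k - ∑ j', F k j'|) :
    ((∀ i j, 0 ≤ πhat i j) ∧ (∀ i, ∑ j, πhat i j = p i) ∧ (∀ j, ∑ i, πhat i j = q j)) ∧
    (∑ i, ∑ j, C i j * πhat i j)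
      - sInf ((fun π : Matrix (Fin n) (Fin n) ℝ => ∑ i, ∑ j, C i j * π i j) ''
          {π | (∀ i j, 0 ≤ π i j) ∧ (∀ i, ∑ j, π i j = p i) ∧ (∀ j, ∑ i, π i j = q j)})
      ≤ ε := by
  subst hπch
  obtain ⟨X, hXdef⟩ : ∃ X', X' = Bmat n C γ u v := ⟨_, rfl⟩
  rw [← hXdef] at hclose hF
  -- basic facts
  have hnR : (2:ℝ) ≤ (n:ℝ) := by exact_mod_cast hn
  have hn0 : (0:ℝ) < (n:ℝ) := by linarith
  have hL2 : Real.log 2 ≤ Real.log (n:ℝ) := Real.log_le_log (by norm_num) hnR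
  have hL2' : (0.6931471803 : ℝ) < Real.log 2 := Real.log_two_gt_d9
  have hL0 : 0 < Real.log (n:ℝ) := by linarith
  have hγpos : 0 < γ := by rw [hγ]; positivity
  have hCle : ∀ i j, C i j ≤ Cmax := by
    intro i j
    rw [hCmax]
    exact le_csSup (Set.Finite.bddAbove (Set.finite_range _)) ⟨(i, j), rfl⟩
  have hCmax0 : (0:ℝ) ≤ Cmax := hCmaxpos.le
  have hXpos : ∀ i j, 0 < X i j := by
    intro i j; rw [hXdef]; exact Real.exp_pos _
  have hX0 : ∀ i j, 0 ≤ X i j := fun i j => (hXpos i j).le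
  have hpq1 : ∑ i, p i = ∑ j, q j := by rw [hp.2, hq.2]
  -- feasibility of πhat via the rounding lemma
  obtain ⟨hY0, hYrow, hYcol, hcostA⟩ :=
    round_lemma C X Cmax hCle hCmax0 hC hX0 p q hp.1 hq.1 hpq1 F hF πhat hπhat
  set S : Set ℝ := ((fun π : Matrix (Fin n) (Fin n) ℝ => ∑ i, ∑ j, C i j * π i j) ''
      {π | (∀ i j, 0 ≤ π i j) ∧ (∀ i, ∑ j, π i j = p i) ∧ (∀ j, ∑ i, π i j = q j)}) with hSdef
  have hSne : S.Nonempty := ⟨_, ⟨πhat, ⟨hY0, hYrow, hYcol⟩, rfl⟩⟩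
  have hSlb : ∀ b ∈ S, (0:ℝ) ≤ b := by
    rintro b ⟨P, ⟨hP0, _, _⟩, rfl⟩
    exact Finset.sum_nonneg fun i _ => Finset.sum_nonneg fun j _ =>
      mul_nonneg (hC i j) (hP0 i j)
  have hsInf0 : (0:ℝ) ≤ sInf S := le_csInf hSne hSlb
  refine ⟨⟨hY0, hYrow, hYcol⟩, ?_⟩
  by_cases hce : ε ≤ Cmax
  swap
  · -- trivial case : Cmax < ε
    push_neg at hce
    have htriv : ∑ i, ∑ j, C i j * πhat i j ≤ Cmax := by
      have h1 : ∑ i, ∑ j, C i j * πhat i j ≤ ∑ i, ∑ j, Cmax * πhat i j :=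
        Finset.sum_le_sum fun i _ => Finset.sum_le_sum fun j _ =>
          mul_le_mul_of_nonneg_right (hCle i j) (hY0 i j)
      have h2 : ∑ i, ∑ j, Cmax * πhat i j = Cmax * ∑ i, ∑ j, πhat i j := by
        rw [Finset.mul_sum]
        exact Finset.sum_congr rfl fun i _ => (Finset.mul_sum _ _ _).symm
      have h3 : ∑ i, ∑ j, πhat i j = 1 := by
        rw [Finset.sum_congr rfl fun i _ => hYrow i, hp.2]
      rw [h2, h3, mul_one] at h1
      exact h1
    linarith
  -- main case : ε ≤ Cmax
  have hε'pos : 0 < ε' := by rw [hε']; positivity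
  have hε'Cmax : ε' * (8 * Cmax) = ε := by rw [hε']; field_simp
  have hε'le : ε' ≤ 1/8 := by
    rw [hε', div_le_iff₀ (by linarith : (0:ℝ) < 8 * Cmax)]
    linarith
  have hCε' : Cmax * ε' = ε / 8 := by linarith only [hε'Cmax]
  -- marginal errors
  set A1 : ℝ := ∑ i, |(∑ j, X i j) - pch i| with hA1def
  set A2 : ℝ := ∑ j, |(∑ i, X i j) - qch j| with hA2def
  have hA1 : 0 ≤ A1 := Finset.sum_nonneg fun i _ => abs_nonneg _
  have hA2 : 0 ≤ A2 := Finset.sum_nonneg fun j _ => abs_nonneg _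
  have hδp : ∑ i, |p i - pch i| ≤ ε' / 4 := by
    have hterm : ∀ i, |p i - pch i| ≤ ε'/8 * p i + (1 - ε'/8) * (ε'/(8*(n:ℝ))) := by
      intro i
      have he : p i - pch i = ε'/8 * p i - (1 - ε'/8) * (ε'/(8*(n:ℝ))) := by
        rw [hpch]; ring
      rw [he]
      have h1 : 0 ≤ ε'/8 * p i := mul_nonneg (by linarith) (hp.1 i)
      have h2 : (0:ℝ) ≤ (1 - ε'/8) * (ε'/(8*(n:ℝ))) :=
        mul_nonneg (by linarith) (by positivity)
      calc |ε'/8 * p i - (1 - ε'/8) * (ε'/(8*(n:ℝ)))|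
          ≤ |ε'/8 * p i| + |(1 - ε'/8) * (ε'/(8*(n:ℝ)))| := abs_sub _ _
        _ = ε'/8 * p i + (1 - ε'/8) * (ε'/(8*(n:ℝ))) := by
            rw [abs_of_nonneg h1, abs_of_nonneg h2]
    calc ∑ i, |p i - pch i| ≤ ∑ i, (ε'/8 * p i + (1 - ε'/8) * (ε'/(8*(n:ℝ)))) :=
          Finset.sum_le_sum fun i _ => hterm i
      _ = ε'/8 * (∑ i, p i) + (n:ℝ) * ((1 - ε'/8) * (ε'/(8*(n:ℝ)))) := by
          rw [Finset.sum_add_distrib, ← Finset.mul_sum, Finset.sum_const, Finset.card_univ,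
            Fintype.card_fin, nsmul_eq_mul]
      _ = ε'/8 + (1 - ε'/8) * (ε'/8) := by
          rw [hp.2, mul_one]
          congr 1
          field_simp
      _ ≤ ε' / 4 := by linarith only [sq_nonneg ε', hε'pos]
  have hδq : ∑ j, |q j - qch j| ≤ ε' / 4 := by
    have hterm : ∀ j, |q j - qch j| ≤ ε'/8 * q j + (1 - ε'/8) * (ε'/(8*(n:ℝ))) := by
      intro j
      have he : q j - qch j = ε'/8 * q j - (1 - ε'/8) * (ε'/(8*(n:ℝ))) := by
        rw [hqch]; ring
      rw [he]
      have h1 : 0 ≤ ε'/8 * q j := mul_nonneg (by linarith) (hq.1 j)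
      have h2 : (0:ℝ) ≤ (1 - ε'/8) * (ε'/(8*(n:ℝ))) :=
        mul_nonneg (by linarith) (by positivity)
      calc |ε'/8 * q j - (1 - ε'/8) * (ε'/(8*(n:ℝ)))|
          ≤ |ε'/8 * q j| + |(1 - ε'/8) * (ε'/(8*(n:ℝ)))| := abs_sub _ _
        _ = ε'/8 * q j + (1 - ε'/8) * (ε'/(8*(n:ℝ))) := by
            rw [abs_of_nonneg h1, abs_of_nonneg h2]
    calc ∑ j, |q j - qch j| ≤ ∑ j, (ε'/8 * q j + (1 - ε'/8) * (ε'/(8*(n:ℝ)))) :=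
          Finset.sum_le_sum fun j _ => hterm j
      _ = ε'/8 * (∑ j, q j) + (n:ℝ) * ((1 - ε'/8) * (ε'/(8*(n:ℝ)))) := by
          rw [Finset.sum_add_distrib, ← Finset.mul_sum, Finset.sum_const, Finset.card_univ,
            Fintype.card_fin, nsmul_eq_mul]
      _ = ε'/8 + (1 - ε'/8) * (ε'/8) := by
          rw [hq.2, mul_one]
          congr 1
          field_simp
      _ ≤ ε' / 4 := by linarith only [sq_nonneg ε', hε'pos]
  have hDp : ∑ i, |p i - ∑ j, X i j| ≤ A1 + ε' / 4 := by
    have hterm : ∀ i, |p i - ∑ j, X i j| ≤ |(∑ j, X i j) - pch i| + |p i - pch i| := by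
      intro i
      have he : p i - ∑ j, X i j = (p i - pch i) - ((∑ j, X i j) - pch i) := by ring
      rw [he]
      calc |(p i - pch i) - ((∑ j, X i j) - pch i)|
          ≤ |p i - pch i| + |(∑ j, X i j) - pch i| := abs_sub _ _
        _ = |(∑ j, X i j) - pch i| + |p i - pch i| := add_comm _ _
    calc ∑ i, |p i - ∑ j, X i j|
        ≤ ∑ i, (|(∑ j, X i j) - pch i| + |p i - pch i|) :=
          Finset.sum_le_sum fun i _ => hterm i
      _ = A1 + ∑ i, |p i - pch i| := by rw [Finset.sum_add_distrib]
      _ ≤ A1 + ε' / 4 := by linarith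
  have hDq : ∑ j, |q j - ∑ i, X i j| ≤ A2 + ε' / 4 := by
    have hterm : ∀ j, |q j - ∑ i, X i j| ≤ |(∑ i, X i j) - qch j| + |q j - qch j| := by
      intro j
      have he : q j - ∑ i, X i j = (q j - qch j) - ((∑ i, X i j) - qch j) := by ring
      rw [he]
      calc |(q j - qch j) - ((∑ i, X i j) - qch j)|
          ≤ |q j - qch j| + |(∑ i, X i j) - qch j| := abs_sub _ _
        _ = |(∑ i, X i j) - qch j| + |q j - qch j| := add_comm _ _
    calc ∑ j, |q j - ∑ i, X i j|
        ≤ ∑ j, (|(∑ i, X i j) - qch j| + |q j - qch j|) :=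
          Finset.sum_le_sum fun j _ => hterm j
      _ = A2 + ∑ j, |q j - qch j| := by rw [Finset.sum_add_distrib]
      _ ≤ A2 + ε' / 4 := by linarith
  have hΔ : (∑ i, |p i - ∑ j, X i j|) + (∑ j, |q j - ∑ i, X i j|) ≤ ε' := by
    linarith [hclose]
  -- total mass of X
  set m : ℝ := ∑ i, ∑ j, X i j with hmdef
  haveI : Nonempty (Fin n) := ⟨⟨0, by omega⟩⟩
  have hm_pos : 0 < m := by
    rw [hmdef]
    exact Finset.sum_pos (fun i _ => Finset.sum_pos (fun j _ => hXpos i j)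
      Finset.univ_nonempty) Finset.univ_nonempty
  have hpchsum : ∑ i, pch i = (1 - ε'/8) * (1 + ε'/8) := by
    rw [hpch, ← Finset.mul_sum, Finset.sum_add_distrib, hp.2, Finset.sum_const, Finset.card_univ,
      Fintype.card_fin, nsmul_eq_mul]
    congr 1
    congr 1
    field_simp
  have hm_le : m ≤ 17/16 := by
    have h1 : |m - ∑ i, pch i| ≤ A1 := by
      have he : m - ∑ i, pch i = ∑ i, ((∑ j, X i j) - pch i) := by
        rw [Finset.sum_sub_distrib, hmdef]
      rw [he]
      exact Finset.abs_sum_le_sum_abs _ _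
    have h2 := abs_le.1 h1
    rw [hpchsum] at h2
    linarith only [h2.2, hclose, hA2, hε'le, sq_nonneg ε']
  -- compare with every feasible plan
  have hinf : (∑ i, ∑ j, C i j * πhat i j) - ε ≤ sInf S := by
    apply le_csInf hSne
    rintro b ⟨P, ⟨hP0, hProw, hPcol⟩, rfl⟩
    set FP : Matrix (Fin n) (Fin n) ℝ := Matrix.of fun i j =>
      min ((∑ j', X i j') / ∑ k, P i k) 1 * P i j * min ((∑ i', X i' j) / ∑ k, P k j) 1
      with hFPdef
    set QQ : Matrix (Fin n) (Fin n) ℝ := Matrix.of fun i j =>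
      FP i j + ((∑ j', X i j') - ∑ j', FP i j') * ((∑ i', X i' j) - ∑ i', FP i' j)
        / ∑ k, |(∑ j', X k j') - ∑ j', FP k j'| with hQQdef
    obtain ⟨hQ0, hQrow, hQcol, hQcost⟩ :=
      round_lemma C P Cmax hCle hCmax0 hC hP0
        (fun i => ∑ j, X i j) (fun j => ∑ i, X i j)
        (fun i => Finset.sum_nonneg fun j _ => hX0 i j)
        (fun j => Finset.sum_nonneg fun i _ => hX0 i j)
        (by rw [Finset.sum_comm])
        FP rfl QQ rfl
    have hQrow' : ∀ i, ∑ j, QQ i j = ∑ j, X i j := hQrow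
    have hQcol' : ∀ j, ∑ i, QQ i j = ∑ i, X i j := hQcol
    simp only [hProw, hPcol] at hQcost
    have e1 : ∑ i, |(∑ j, X i j) - p i| = ∑ i, |p i - ∑ j, X i j| :=
      Finset.sum_congr rfl fun i _ => abs_sub_comm _ _
    have e2 : ∑ j, |(∑ i, X i j) - q j| = ∑ j, |q j - ∑ i, X i j| :=
      Finset.sum_congr rfl fun j _ => abs_sub_comm _ _
    rw [e1, e2] at hQcost
    -- entropic optimality of X among plans with its own marginals
    have hrowB : ∀ i, ∑ j, QQ i j = ∑ j, Bmat n C γ u v i j := by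
      rw [← hXdef]; exact hQrow'
    have hcolB : ∀ j, ∑ i, QQ i j = ∑ i, Bmat n C γ u v i j := by
      rw [← hXdef]; exact hQcol'
    have hD := entropic_opt C γ hγpos u v QQ hQ0 hrowB hcolB
    rw [← hXdef] at hD
    -- entropy bounds
    have hQsum : ∑ i, ∑ j, QQ i j = m := by
      rw [Finset.sum_congr rfl fun i _ => hQrow' i, hmdef]
    have hQle : ∀ i j, QQ i j ≤ m := by
      intro i j
      have h1 : QQ i j ≤ ∑ j', QQ i j' :=
        Finset.single_le_sum (fun j' _ => hQ0 i j') (Finset.mem_univ j)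
      have h2 : ∑ j', QQ i j' = ∑ j', X i j' := hQrow' i
      have h3 : (∑ j', X i j') ≤ m := by
        rw [hmdef]
        exact Finset.single_le_sum (f := fun i => ∑ j', X i j')
          (fun i _ => Finset.sum_nonneg fun j' _ => hX0 i j') (Finset.mem_univ i)
      linarith
    have hΦQ : ∑ i, ∑ j, QQ i j * Real.log (QQ i j) ≤ m * (m - 1) := by
      have h1 : ∑ i, ∑ j, QQ i j * Real.log (QQ i j)
          ≤ ∑ i, ∑ j, QQ i j * Real.log m :=
        Finset.sum_le_sum fun i _ => Finset.sum_le_sum fun j _ =>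
          xlogx_le _ _ (hQ0 i j) (hQle i j)
      have h2 : ∑ i, ∑ j, QQ i j * Real.log m = (∑ i, ∑ j, QQ i j) * Real.log m := by
        rw [Finset.sum_mul]
        exact Finset.sum_congr rfl fun i _ => by rw [Finset.sum_mul]
      rw [h2, hQsum] at h1
      have h3 : Real.log m ≤ m - 1 := Real.log_le_sub_one_of_pos hm_pos
      linarith only [h1, mul_le_mul_of_nonneg_left h3 hm_pos.le]
    have hΦX : -(∑ i, ∑ j, X i j * Real.log (X i j))
        ≤ 1/Real.exp 1 + m * (2 * Real.log (n:ℝ)) := by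
      have ht : (0:ℝ) < ((n:ℝ)^2)⁻¹ := by positivity
      have hterm : ∀ i j, -(X i j * Real.log (X i j))
          ≤ ((n:ℝ)^2)⁻¹ / Real.exp 1 + X i j * (2 * Real.log (n:ℝ)) := by
        intro i j
        have h := neg_xlogx_le (X i j) ((n:ℝ)^2)⁻¹ (hXpos i j) ht
        rw [Real.log_inv, Real.log_pow] at h
        push_cast at h
        linarith only [h]
      have hb : ∑ i, ∑ j, (-(X i j * Real.log (X i j)))
          ≤ ∑ i, ∑ j, (((n:ℝ)^2)⁻¹ / Real.exp 1 + X i j * (2 * Real.log (n:ℝ))) :=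
        Finset.sum_le_sum fun i _ => Finset.sum_le_sum fun j _ => hterm i j
      have hneg : ∑ i, ∑ j, (-(X i j * Real.log (X i j)))
          = -(∑ i, ∑ j, X i j * Real.log (X i j)) := by
        simp
      have hinner : ∀ i, ∑ j, (((n:ℝ)^2)⁻¹ / Real.exp 1 + X i j * (2 * Real.log (n:ℝ)))
          = (n:ℝ) * (((n:ℝ)^2)⁻¹ / Real.exp 1) + (∑ j, X i j) * (2 * Real.log (n:ℝ)) := by
        intro i
        rw [Finset.sum_add_distrib, Finset.sum_const, Finset.card_univ, Fintype.card_fin, nsmul_eq_mul,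
          ← Finset.sum_mul]
      have houter : ∑ i, ∑ j, (((n:ℝ)^2)⁻¹ / Real.exp 1 + X i j * (2 * Real.log (n:ℝ)))
          = (n:ℝ) * ((n:ℝ) * (((n:ℝ)^2)⁻¹ / Real.exp 1)) + m * (2 * Real.log (n:ℝ)) := by
        rw [Finset.sum_congr rfl fun i _ => hinner i, Finset.sum_add_distrib,
          Finset.sum_const, Finset.card_univ, Fintype.card_fin, nsmul_eq_mul, ← Finset.sum_mul, hmdef]
      have hcoef : (n:ℝ) * ((n:ℝ) * (((n:ℝ)^2)⁻¹ / Real.exp 1)) = 1/Real.exp 1 := by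
        field_simp
      rw [hneg, houter, hcoef] at hb
      exact hb
    -- numeric assembly
    have hγ4L : γ * (4 * Real.log (n:ℝ)) = ε := by
      rw [hγ]; field_simp
    have hγle : γ ≤ 3/8 * ε := by
      linarith only [hγ4L, hε.le,
        mul_nonneg hγpos.le (by linarith : (0:ℝ) ≤ Real.log (n:ℝ) - 0.6931471803)]
    have hγ2Lm : γ * (m * (2 * Real.log (n:ℝ))) = ε * m / 2 := by
      rw [← hγ4L]; ring
    have hexp1 : (1:ℝ)/Real.exp 1 ≤ 3/8 := by
      rw [div_le_iff₀ (Real.exp_pos 1)]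
      linarith only [Real.exp_one_gt_d9]
    have hEnt : (∑ i, ∑ j, QQ i j * Real.log (QQ i j))
        - (∑ i, ∑ j, X i j * Real.log (X i j))
        ≤ 17/256 + (1/Real.exp 1 + m * (2 * Real.log (n:ℝ))) := by
      have hmm : m * (m - 1) ≤ 17/256 := by
        linarith only [mul_nonneg (by linarith : (0:ℝ) ≤ 17/16 - m)
          (by linarith : (0:ℝ) ≤ m + 1/16)]
      linarith only [hΦQ, hΦX, hmm]
    have hG : γ * ((∑ i, ∑ j, QQ i j * Real.log (QQ i j))
        - (∑ i, ∑ j, X i j * Real.log (X i j)))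
        ≤ γ * (17/256) + γ * (1/Real.exp 1) + ε * m / 2 := by
      have h1 := mul_le_mul_of_nonneg_left hEnt hγpos.le
      linarith only [h1, hγ2Lm]
    have hGe : γ * (1/Real.exp 1) ≤ (3/8 * ε) * (3/8) := by
      have h0 : (0:ℝ) ≤ 1/Real.exp 1 := by positivity
      exact mul_le_mul hγle hexp1 h0 (by linarith)
    have hCd : Cmax * ((∑ i, |p i - ∑ j, X i j|) + (∑ j, |q j - ∑ i, X i j|)) ≤ ε / 8 := by
      have := mul_le_mul_of_nonneg_left hΔ hCmax0
      linarith [hCε']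
    have hmε : ε * m / 2 ≤ 17/32 * ε := by
      linarith only [mul_le_mul_of_nonneg_left hm_le hε.le]
    linarith only [hcostA, hD, hQcost, hG, hGe, hCd, hmε, hγle, hε.le]
  linarith
end
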